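/- arXiv:1606.07273 — 10 statements merged into one kernel-verified Lean document; each statement's English description precedes it below -/
import Mathlib

section
/- Let l > 0 and let φ : ℝ → ℂ be continuously differentiable on the closed interval [-l, l]. Then for every x ∈ (-l, l) one has |φ(x)|² ≤ 2·(∫_{-l}^{l} |φ(y)|² dy)^{1/2} · (∫_{-l}^{l} |φ'(y)|² dy)^{1/2} + (2l)^{-1} · ∫_{-l}^{l} |φ(y)|² dy. -/
open MeasureTheory Set

/-- One-dimensional Sobolev-type embedding estimate: for `φ` continuously differentiable
on `[-l, l]` and any `x ∈ (-l, l)`,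
`|φ(x)|² ≤ 2 ‖φ‖_{L²} ‖φ'‖_{L²} + (2l)⁻¹ ‖φ‖_{L²}²`. -/
theorem stmt_0 (l : ℝ) (hl : 0 < l) (φ φ' : ℝ → ℂ)
    (hdiff : ∀ x ∈ Icc (-l) l, HasDerivWithinAt φ (φ' x) (Icc (-l) l) x)
    (hcont : ContinuousOn φ' (Icc (-l) l)) :
    ∀ x ∈ Ioo (-l) l,
      ‖φ x‖ ^ 2 ≤
        2 * Real.sqrt (∫ y in Ioo (-l) l, ‖φ y‖ ^ 2) *
            Real.sqrt (∫ y in Ioo (-l) l, ‖φ' y‖ ^ 2) +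
          (2 * l)⁻¹ * ∫ y in Ioo (-l) l, ‖φ y‖ ^ 2 := by
  intro x hx
  have hsub : Ioo (-l) l ⊆ Icc (-l) l := Ioo_subset_Icc_self
  set g : ℝ → ℝ := fun t => ‖φ t‖ ^ 2 with hgdef
  set h : ℝ → ℝ := fun t => 2 * ((starRingEnd ℂ) (φ t) * φ' t).re with hhdef
  have hφc : ContinuousOn φ (Icc (-l) l) := fun t ht => (hdiff t ht).continuousWithinAt
  have hgc : ContinuousOn g (Icc (-l) l) := (hφc.norm).pow 2
  have hhc : ContinuousOn h (Icc (-l) l) := by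
    apply ContinuousOn.mul continuousOn_const
    exact Complex.continuous_re.comp_continuousOn
      ((Complex.continuous_conj.comp_continuousOn hφc).mul hcont)
  have hbc : ContinuousOn (fun t => 2 * ‖φ t‖ * ‖φ' t‖) (Icc (-l) l) :=
    (continuousOn_const.mul hφc.norm).mul hcont.norm
  -- derivative at interior points
  have hderiv : ∀ t ∈ Ioo (-l) l, HasDerivAt g (h t) t := by
    intro t ht
    have hmem : Icc (-l) l ∈ nhds t := Icc_mem_nhds ht.1 ht.2
    have hd : HasDerivAt φ (φ' t) t := (hdiff t (hsub ht)).hasDerivAt hmem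
    have hre : HasDerivAt (fun s => (φ s).re) ((φ' t).re) t :=
      Complex.reCLM.hasFDerivAt.comp_hasDerivAt t hd
    have him : HasDerivAt (fun s => (φ s).im) ((φ' t).im) t :=
      Complex.imCLM.hasFDerivAt.comp_hasDerivAt t hd
    have h2 := (hre.fun_pow 2).fun_add (him.fun_pow 2)
    have hfun : g = fun s => (φ s).re ^ 2 + (φ s).im ^ 2 := by
      funext s
      show ‖φ s‖ ^ 2 = _
      rw [ Complex.sq_norm, Complex.normSq_apply]; ring
    rw [hfun]
    refine h2.congr_deriv ?_
    show _ = 2 * ((starRingEnd ℂ) (φ t) * φ' t).re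
    simp [Complex.mul_re]
    ring
  -- pointwise bound on h
  have hbound : ∀ t, |h t| ≤ 2 * ‖φ t‖ * ‖φ' t‖ := by
    intro t
    have h1 : |((starRingEnd ℂ) (φ t) * φ' t).re| ≤ ‖φ t‖ * ‖φ' t‖ := by
      calc |((starRingEnd ℂ) (φ t) * φ' t).re| ≤ ‖(starRingEnd ℂ) (φ t) * φ' t‖ :=
            Complex.abs_re_le_norm _
        _ = ‖φ t‖ * ‖φ' t‖ := by rw [norm_mul, RCLike.norm_conj]
    calc |h t| = 2 * |((starRingEnd ℂ) (φ t) * φ' t).re| := by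
          rw [hhdef, abs_mul]; norm_num
      _ ≤ 2 * (‖φ t‖ * ‖φ' t‖) := by linarith
      _ = 2 * ‖φ t‖ * ‖φ' t‖ := by ring
  -- integrability on Ioo
  have hgint : IntegrableOn g (Ioo (-l) l) := (hgc.integrableOn_Icc).mono_set hsub
  have hbint : IntegrableOn (fun t => 2 * ‖φ t‖ * ‖φ' t‖) (Ioo (-l) l) :=
    (hbc.integrableOn_Icc).mono_set hsub
  have habsint : IntegrableOn (fun t => |h t|) (Ioo (-l) l) :=
    ((hhc.integrableOn_Icc).mono_set hsub).abs
  set I : ℝ := ∫ t in Ioo (-l) l, 2 * ‖φ t‖ * ‖φ' t‖ with hIdef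
  set A : ℝ := ∫ y in Ioo (-l) l, ‖φ y‖ ^ 2 with hAdef
  -- key inequality: g x ≤ g y + I for all y ∈ Ioo
  have key : ∀ y ∈ Ioo (-l) l, g x ≤ g y + I := by
    intro y hy
    have huIcc : uIcc y x ⊆ Ioo (-l) l :=
      (ordConnected_Ioo).uIcc_subset hy hx
    have hint : IntervalIntegrable h volume y x :=
      ((hhc.mono (huIcc.trans hsub)).intervalIntegrable)
    have hftc : ∫ t in y..x, h t = g x - g y :=
      intervalIntegral.integral_eq_sub_of_hasDerivAt (fun t ht => hderiv t (huIcc ht)) hint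
    have hIoc : Set.uIoc y x ⊆ Ioo (-l) l := Set.uIoc_subset_uIcc.trans huIcc
    have h1 : ∫ t in y..x, h t ≤ I := by
      calc ∫ t in y..x, h t ≤ ‖∫ t in y..x, h t‖ := le_abs_self _
        _ ≤ ∫ t in Set.uIoc y x, ‖h t‖ := intervalIntegral.norm_integral_le_integral_norm_uIoc
        _ ≤ ∫ t in Ioo (-l) l, |h t| := by
            apply setIntegral_mono_set habsint
            · filter_upwards with t using abs_nonneg _
            · exact HasSubset.Subset.eventuallyLE hIoc
        _ ≤ I := by
            apply setIntegral_mono_on habsint hbint measurableSet_Ioo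
            intro t _; exact hbound t
    linarith [hftc, h1]
  -- integrate over y
  have h2l : (volume (Ioo (-l) l)).toReal = 2 * l := by
    rw [Real.volume_Ioo, ENNReal.toReal_ofReal (by linarith)]; ring
  have havg : 2 * l * g x ≤ A + 2 * l * I := by
    have hle : ∫ y in Ioo (-l) l, g x ≤ ∫ y in Ioo (-l) l, (g y + I) := by
      apply setIntegral_mono_on (integrableOn_const ?_)
        (hgint.add (integrableOn_const ?_)) measurableSet_Ioo key
      · rw [Real.volume_Ioo]; exact ENNReal.ofReal_ne_top
      · rw [Real.volume_Ioo]; exact ENNReal.ofReal_ne_top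
    rw [setIntegral_const, integral_add hgint (integrableOn_const ?_),
      setIntegral_const, measureReal_def, h2l, smul_eq_mul, smul_eq_mul] at hle
    · linarith
    · rw [Real.volume_Ioo]; exact ENNReal.ofReal_ne_top
  -- Cauchy–Schwarz
  have hCS : I ≤ 2 * Real.sqrt A * Real.sqrt (∫ y in Ioo (-l) l, ‖φ' y‖ ^ 2) := by
    have hmf : MemLp (fun t => ‖φ t‖) (ENNReal.ofReal 2) (volume.restrict (Ioo (-l) l)) := by
      obtain ⟨C, hC⟩ := isCompact_Icc.exists_bound_of_continuousOn hφc
      apply MemLp.of_bound (((hφc.mono hsub).aestronglyMeasurable measurableSet_Ioo).norm) C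
      filter_upwards [ae_restrict_mem measurableSet_Ioo] with t ht
      simpa using hC t (hsub ht)
    have hmg : MemLp (fun t => ‖φ' t‖) (ENNReal.ofReal 2) (volume.restrict (Ioo (-l) l)) := by
      obtain ⟨C, hC⟩ := isCompact_Icc.exists_bound_of_continuousOn hcont
      apply MemLp.of_bound (((hcont.mono hsub).aestronglyMeasurable measurableSet_Ioo).norm) C
      filter_upwards [ae_restrict_mem measurableSet_Ioo] with t ht
      simpa using hC t (hsub ht)
    have := integral_mul_le_Lp_mul_Lq_of_nonneg Real.HolderConjugate.two_two
      (f := fun t => ‖φ t‖) (g := fun t => ‖φ' t‖)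
      (Filter.Eventually.of_forall fun t => norm_nonneg _)
      (Filter.Eventually.of_forall fun t => norm_nonneg _) hmf hmg
    have heq : ∀ f : ℝ → ℂ, (∫ t in Ioo (-l) l, ‖f t‖ ^ (2:ℝ)) = ∫ t in Ioo (-l) l, ‖f t‖ ^ 2 := by
      intro f; congr 1; funext t
      rw [show (2:ℝ) = ((2:ℕ):ℝ) by norm_num, Real.rpow_natCast]
    rw [heq, heq] at this
    calc I = 2 * ∫ t in Ioo (-l) l, ‖φ t‖ * ‖φ' t‖ := by
          rw [hIdef, ← integral_const_mul]; congr 1; funext t; ring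
      _ ≤ 2 * ((∫ t in Ioo (-l) l, ‖φ t‖ ^ 2) ^ (1/(2:ℝ)) *
            (∫ t in Ioo (-l) l, ‖φ' t‖ ^ 2) ^ (1/(2:ℝ))) := by linarith
      _ = 2 * Real.sqrt A * Real.sqrt (∫ y in Ioo (-l) l, ‖φ' y‖ ^ 2) := by
          rw [Real.sqrt_eq_rpow, Real.sqrt_eq_rpow, hAdef]; ring
  -- conclude
  have hgx : g x ≤ (2*l)⁻¹ * A + I := by
    have h2lpos : (0:ℝ) < 2 * l := by linarith
    rw [← mul_le_mul_iff_right₀ h2lpos]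
    calc 2 * l * g x ≤ A + 2 * l * I := havg
      _ = 2 * l * ((2*l)⁻¹ * A + I) := by field_simp
  calc ‖φ x‖ ^ 2 = g x := rfl
    _ ≤ (2*l)⁻¹ * A + I := hgx
    _ ≤ _ := by linarith [hCS]
end

section
/- Let ψ : ℝ → ℂ be continuously differentiable with both ψ and its derivative ψ' square-integrable over ℝ. Then for every δ > 0 and every t ∈ ℝ one has |ψ(t)|² ≤ δ · ∫_ℝ |ψ'(y)|² dy + δ^{-1} · ∫_ℝ |ψ(y)|² dy. -/
open MeasureTheory Set
open scoped Interval

local notation "⟪" x ", " y "⟫" => @inner ℝ ℂ _ x y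

/-- Trace-type estimate on the line: if `ψ` is continuously differentiable with `ψ` and `ψ'`
square-integrable, then for every `δ > 0` and every `t ∈ ℝ`,
`|ψ(t)|² ≤ δ ∫ |ψ'|² + δ⁻¹ ∫ |ψ|²`. -/
theorem stmt_1 (ψ ψ' : ℝ → ℂ)
    (hdiff : ∀ x : ℝ, HasDerivAt ψ (ψ' x) x)
    (hcont : Continuous ψ')
    (hψ : Integrable (fun y : ℝ => ‖ψ y‖ ^ 2))
    (hψ' : Integrable (fun y : ℝ => ‖ψ' y‖ ^ 2)) :
    ∀ δ > (0 : ℝ), ∀ t : ℝ,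
      ‖ψ t‖ ^ 2 ≤ δ * (∫ y : ℝ, ‖ψ' y‖ ^ 2) + δ⁻¹ * ∫ y : ℝ, ‖ψ y‖ ^ 2 := by
  intro δ hδ t
  have hψc : Continuous ψ := continuous_iff_continuousAt.2 fun x => (hdiff x).continuousAt
  set g : ℝ → ℝ := fun y => ‖ψ y‖ ^ 2 with hg
  set d : ℝ → ℝ := fun y => ⟪ψ y, ψ' y⟫ + ⟪ψ' y, ψ y⟫ with hd
  set h : ℝ → ℝ := fun y => δ * ‖ψ' y‖ ^ 2 + δ⁻¹ * ‖ψ y‖ ^ 2 with hh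
  have hgd : ∀ x : ℝ, HasDerivAt g (d x) x := by
    intro x
    have : (fun y => ‖ψ y‖ ^ 2) = fun y => ⟪ψ y, ψ y⟫ :=
      funext fun y => (real_inner_self_eq_norm_sq _).symm
    rw [hg, this]
    exact (hdiff x).inner ℝ (hdiff x)
  have hdc : Continuous d := ((hψc.inner hcont).add (hcont.inner hψc))
  have hdh : ∀ y : ℝ, |d y| ≤ h y := by
    intro y
    have h1 : |d y| ≤ 2 * ‖ψ y‖ * ‖ψ' y‖ := by
      calc |d y| ≤ |⟪ψ y, ψ' y⟫| + |⟪ψ' y, ψ y⟫| := abs_add_le _ _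
        _ ≤ ‖ψ y‖ * ‖ψ' y‖ + ‖ψ' y‖ * ‖ψ y‖ :=
          add_le_add (abs_real_inner_le_norm _ _) (abs_real_inner_le_norm _ _)
        _ = 2 * ‖ψ y‖ * ‖ψ' y‖ := by ring
    refine h1.trans ?_
    show 2 * ‖ψ y‖ * ‖ψ' y‖ ≤ δ * ‖ψ' y‖ ^ 2 + δ⁻¹ * ‖ψ y‖ ^ 2
    have e1 : δ⁻¹ * (δ * ‖ψ' y‖ - ‖ψ y‖) ^ 2
        = δ * ‖ψ' y‖ ^ 2 - 2 * ‖ψ y‖ * ‖ψ' y‖ + δ⁻¹ * ‖ψ y‖ ^ 2 := by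
      field_simp
      ring
    have e2 : 0 ≤ δ⁻¹ * (δ * ‖ψ' y‖ - ‖ψ y‖) ^ 2 := by positivity
    linarith
  have hhint : Integrable h := (hψ'.const_mul δ).add (hψ.const_mul δ⁻¹)
  have hhnn : ∀ y : ℝ, 0 ≤ h y := fun y => by positivity
  have hC : ∫ y : ℝ, h y = δ * (∫ y : ℝ, ‖ψ' y‖ ^ 2) + δ⁻¹ * ∫ y : ℝ, ‖ψ y‖ ^ 2 := by
    rw [hh, integral_add (hψ'.const_mul δ) (hψ.const_mul δ⁻¹), integral_const_mul,
      integral_const_mul]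
  rw [← hC]
  -- main estimate: for any s, g t ≤ g s + ∫ h
  have key : ∀ s : ℝ, g t ≤ g s + ∫ y : ℝ, h y := by
    intro s
    have hftc : ∫ y in s..t, d y = g t - g s :=
      intervalIntegral.integral_eq_sub_of_hasDerivAt (fun x _ => hgd x)
        (hdc.intervalIntegrable s t)
    have h2 : |g t - g s| ≤ ∫ y in Ι s t, |d y| := by
      rw [← hftc]
      simpa [Real.norm_eq_abs] using
        intervalIntegral.norm_integral_le_integral_norm_uIoc (f := d) (a := s) (b := t)
          (μ := volume)
    have h3 : ∫ y in Ι s t, |d y| ≤ ∫ y in Ι s t, h y := by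
      refine setIntegral_mono_on (hdc.abs.integrableOn_uIoc) (hhint.integrableOn)
        measurableSet_uIoc fun y _ => hdh y
    have h4 : ∫ y in Ι s t, h y ≤ ∫ y : ℝ, h y :=
      setIntegral_le_integral hhint (ae_of_all _ hhnn)
    have : g t - g s ≤ ∫ y : ℝ, h y := (le_abs_self _).trans (h2.trans (h3.trans h4))
    linarith
  -- there exist points where g is arbitrarily small
  refine le_of_forall_pos_le_add fun ε hε => ?_
  have hex : ∃ s : ℝ, g s < ε := by
    by_contra hcon
    push_neg at hcon
    have : Integrable (fun _ : ℝ => ε) :=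
      hψ.mono' aestronglyMeasurable_const
        (ae_of_all _ fun s => by
          rw [Real.norm_eq_abs, abs_of_pos hε]; exact hcon s)
    rw [integrable_const_iff] at this
    rcases this with h | h
    · exact hε.ne' h
    · exact absurd (measure_lt_top volume (univ : Set ℝ)) (by simp [Real.volume_univ])
  obtain ⟨s, hs⟩ := hex
  have := key s
  show g t ≤ (∫ y : ℝ, h y) + ε
  linarith
end

section
/- The function f₀ is continuous on ℝ, square-integrable with ∫_ℝ f₀(x)² dx = -2/(α₊+α₋), twice differentiable on ℝ∖{0} with -f₀''(x) = λ₀·f₀(x) for every x ≠ 0, its one-sided derivatives f₀'(0⁺) and f₀'(0⁻) at the origin exist, and they satisfy the jump condition f₀'(0⁺) - f₀'(0⁻) = (α₊+α₋)·f₀(0). -/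
open MeasureTheory Set Filter

lemma hda (c : ℂ) (x : ℝ) :
    HasDerivAt (fun x : ℝ => Complex.exp (c * x)) (c * Complex.exp (c * x)) x := by
  have h : HasDerivAt (fun x : ℝ => (x : ℂ)) 1 x := Complex.ofRealCLM.hasDerivAt
  simpa [mul_comm] using ((h.const_mul c).cexp)

lemma intg (c : ℂ) (hc : c.re < 0) :
    IntegrableOn (fun x : ℝ => Complex.exp (c * x)) (Ioi 0) := by
  refine ((exp_neg_integrableOn_Ioi 0 (by linarith : (0:ℝ) < -c.re)).mono' ?_ ?_)
  · exact (Complex.continuous_exp.comp (by continuity)).aestronglyMeasurable.restrict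
  · filter_upwards with x
    simp [Complex.norm_exp]

lemma intgOn_abs (c : ℂ) (hc : c.re < 0) :
    IntegrableOn (fun x : ℝ => Complex.exp (c * |x|)) (Ioi 0) := by
  refine (intg c hc).congr_fun (fun x hx => ?_) measurableSet_Ioi
  rw [abs_of_pos hx]

lemma intgOn_abs' (c : ℂ) (hc : c.re < 0) :
    IntegrableOn (fun x : ℝ => Complex.exp (c * |x|)) (Iic 0) := by
  rw [← Measure.map_neg_eq_self (volume : Measure ℝ)]
  have m : MeasurableEmbedding fun x : ℝ => -x := (Homeomorph.neg ℝ).measurableEmbedding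
  rw [m.integrableOn_map_iff]
  simp_rw [Function.comp_def, abs_neg, neg_preimage, neg_Iic, neg_zero]
  exact Iff.mpr integrableOn_Ici_iff_integrableOn_Ioi (intgOn_abs c hc)

lemma intg_abs (c : ℂ) (hc : c.re < 0) :
    Integrable (fun x : ℝ => Complex.exp (c * |x|)) := by
  have := (intgOn_abs' c hc).union (intgOn_abs c hc)
  rwa [Iic_union_Ioi, integrableOn_univ] at this

lemma tends (c : ℂ) (hc : c.re < 0) :
    Tendsto (fun x : ℝ => c⁻¹ * Complex.exp (c * x)) atTop (nhds 0) := by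
  rw [tendsto_zero_iff_norm_tendsto_zero]
  have h1 : Tendsto (fun x : ℝ => Real.exp (-(-c.re * x))) atTop (nhds 0) := by
    refine Real.tendsto_exp_neg_atTop_nhds_zero.comp ?_
    exact Tendsto.const_mul_atTop (by linarith) tendsto_id
  have : (fun x : ℝ => ‖c⁻¹ * Complex.exp (c * x)‖) =
      fun x : ℝ => ‖c⁻¹‖ * Real.exp (-(-c.re * x)) := by
    funext x
    simp only [norm_mul, Complex.norm_exp, Complex.mul_re,
      Complex.ofReal_re, Complex.ofReal_im, mul_zero, sub_zero]
    ring_nf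
  rw [this]
  simpa using h1.const_mul ‖c⁻¹‖

lemma intval (c : ℂ) (hc : c.re < 0) :
    ∫ x in Ioi (0:ℝ), Complex.exp (c * x) = -1 / c := by
  have hc0 : c ≠ 0 := fun h => by simp [h] at hc
  have h := integral_Ioi_of_hasDerivAt_of_tendsto
    (f := fun x : ℝ => c⁻¹ * Complex.exp (c * x))
    (f' := fun x : ℝ => Complex.exp (c * x)) (a := 0) (m := 0)
    ?_ ?_ (intg c hc) (tends c hc)
  · rw [h]; simp [div_eq_mul_inv, mul_comm]
  · have hcont : Continuous (fun x : ℝ => c⁻¹ * Complex.exp (c * x)) :=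
      continuous_const.mul (Complex.continuous_exp.comp (continuous_const.mul Complex.continuous_ofReal))
    exact hcont.continuousWithinAt
  · intro x hx
    have := (hda c x).const_mul c⁻¹
    rwa [inv_mul_cancel_left₀ hc0] at this

lemma intval_abs (c : ℂ) (hc : c.re < 0) :
    ∫ x : ℝ, Complex.exp (c * |x|) = -2 / c := by
  have hIic : ∫ x in Iic (0:ℝ), Complex.exp (c * |x|)
      = ∫ x in Ioi (0:ℝ), Complex.exp (c * |x|) := by
    have := integral_comp_neg_Iic (0:ℝ) (fun x : ℝ => Complex.exp (c * |x|))
    simp only [abs_neg, neg_zero] at this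
    exact this
  have hIoi : ∫ x in Ioi (0:ℝ), Complex.exp (c * |x|) = -1 / c := by
    rw [← intval c hc]
    refine setIntegral_congr_fun measurableSet_Ioi (fun x hx => ?_)
    rw [abs_of_pos hx]
  have hsplit : ∫ x : ℝ, Complex.exp (c * |x|)
      = (∫ x in Iic (0:ℝ), Complex.exp (c * |x|)) + ∫ x in Ioi (0:ℝ), Complex.exp (c * |x|) := by
    rw [← setIntegral_union (Iic_disjoint_Ioi le_rfl) measurableSet_Ioi
      (intgOn_abs' c hc) (intgOn_abs c hc), Iic_union_Ioi, Measure.restrict_univ]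
  rw [hsplit, hIic, hIoi]
  ring

lemma aux_deriv (f : ℝ → ℂ) (c : ℂ) (x : ℝ)
    (heq : f =ᶠ[nhds x] fun y : ℝ => Complex.exp (c * y)) :
    DifferentiableAt ℝ f x ∧ DifferentiableAt ℝ (deriv f) x ∧
      deriv (deriv f) x = c ^ 2 * Complex.exp (c * x) := by
  have hd1 : DifferentiableAt ℝ f x := ((hda c x).differentiableAt).congr_of_eventuallyEq heq
  have hderiv : deriv f =ᶠ[nhds x] fun y : ℝ => c * Complex.exp (c * y) :=
    heq.deriv.trans (Eventually.of_forall fun y => (hda c y).deriv)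
  have hd2 : DifferentiableAt ℝ (deriv f) x :=
    (((hda c x).const_mul c).differentiableAt).congr_of_eventuallyEq hderiv
  refine ⟨hd1, hd2, ?_⟩
  rw [hderiv.deriv_eq, ((hda c x).const_mul c).deriv]
  ring

/-- The eigenfunction `f₀(x) = exp((α₊+α₋)|x|/2)` of the one-delta-interaction operator:
it is continuous, square-integrable with `∫ f₀² = -2/(α₊+α₋)`, satisfies
`-f₀'' = λ₀ f₀` away from the origin with `λ₀ = -(α₊+α₋)²/4`, and its one-sided
derivatives at `0` satisfy the jump condition `f₀'(0⁺) - f₀'(0⁻) = (α₊+α₋) f₀(0)`. -/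
theorem stmt_3 (αp αm : ℂ) (hα : (αp + αm).re < 0) :
    let f₀ : ℝ → ℂ := fun x => Complex.exp ((αp + αm) * (|x| : ℝ) / 2)
    Continuous f₀ ∧
    MemLp f₀ 2 (volume : Measure ℝ) ∧
    (∫ x : ℝ, (f₀ x) ^ 2) = -2 / (αp + αm) ∧
    (∀ x : ℝ, x ≠ 0 →
      DifferentiableAt ℝ f₀ x ∧ DifferentiableAt ℝ (deriv f₀) x ∧
        -(deriv (deriv f₀) x) = (-(αp + αm) ^ 2 / 4) * f₀ x) ∧
    ∃ Dp Dm : ℂ,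
      HasDerivWithinAt f₀ Dp (Ioi (0 : ℝ)) 0 ∧ HasDerivWithinAt f₀ Dm (Iio (0 : ℝ)) 0 ∧
        Dp - Dm = (αp + αm) * f₀ 0 := by
  intro f₀
  set β := αp + αm with hβdef
  have hcont : Continuous f₀ := by
    exact Complex.continuous_exp.comp
      ((continuous_const.mul (Complex.continuous_ofReal.comp continuous_abs)).div_const 2)
  have hsq : ∀ x : ℝ, (f₀ x) ^ 2 = Complex.exp (β * |x|) := by
    intro x
    rw [sq, ← Complex.exp_add]
    congr 1
    ring
  refine ⟨hcont, ?_, ?_, ?_, ?_⟩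
  · -- Memℒp
    rw [memLp_two_iff_integrable_sq_norm hcont.aestronglyMeasurable]
    refine ((intg_abs β hα).norm).congr (Eventually.of_forall fun x => ?_)
    simp only [f₀, Complex.norm_exp, sq, ← Real.exp_add, ← Complex.add_re]
    congr 2
    ring
  · -- integral
    simp_rw [hsq]
    exact intval_abs β hα
  · -- second derivative away from 0
    intro x hx
    rcases hx.lt_or_gt with hneg | hpos
    · have heq : f₀ =ᶠ[nhds x] fun y : ℝ => Complex.exp (-(β / 2) * y) := by
        filter_upwards [Iio_mem_nhds hneg] with y hy
        simp only [f₀]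
        rw [abs_of_neg hy]
        congr 1
        push_cast
        ring
      obtain ⟨h1, h2, h3⟩ := aux_deriv f₀ (-(β / 2)) x heq
      refine ⟨h1, h2, ?_⟩
      rw [h3]
      have : f₀ x = Complex.exp (-(β / 2) * x) := by
        simp only [f₀]; rw [abs_of_neg hneg]; congr 1; push_cast; ring
      rw [this]
      ring
    · have heq : f₀ =ᶠ[nhds x] fun y : ℝ => Complex.exp ((β / 2) * y) := by
        filter_upwards [Ioi_mem_nhds hpos] with y hy
        simp only [f₀]
        rw [abs_of_pos hy]
        congr 1
        ring
      obtain ⟨h1, h2, h3⟩ := aux_deriv f₀ (β / 2) x heq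
      refine ⟨h1, h2, ?_⟩
      rw [h3]
      have : f₀ x = Complex.exp ((β / 2) * x) := by
        simp only [f₀]; rw [abs_of_pos hpos]; congr 1; ring
      rw [this]
      ring
  · -- one-sided derivatives
    refine ⟨β / 2, -(β / 2), ?_, ?_, ?_⟩
    · have h := ((hda (β / 2) 0).hasDerivWithinAt (s := Ioi 0))
      simp only [Complex.ofReal_zero, mul_zero, Complex.exp_zero, mul_one] at h
      refine h.congr (fun y hy => ?_) ?_
      · simp only [f₀]; rw [abs_of_pos (mem_Ioi.mp hy)]; congr 1; ring
      · simp [f₀]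
    · have h := ((hda (-(β / 2)) 0).hasDerivWithinAt (s := Iio 0))
      simp only [Complex.ofReal_zero, mul_zero, Complex.exp_zero, mul_one] at h
      refine h.congr (fun y hy => ?_) ?_
      · simp only [f₀]; rw [abs_of_neg (mem_Iio.mp hy)]; congr 1; push_cast; ring
      · simp [f₀]
    · simp [f₀]
end

section
/- Let ε > 0 and κ ∈ ℂ with Re κ > 0. The function f_{ε,κ} is continuous on ℝ, square-integrable, twice differentiable on ℝ∖{-ε, ε} with f_{ε,κ}''(x) = κ²·f_{ε,κ}(x) for every x ∉ {-ε, ε}, its one-sided derivatives at ±ε exist, the jump condition f_{ε,κ}'(-ε⁺) - f_{ε,κ}'(-ε⁻) = α₋·f_{ε,κ}(-ε) holds, and the jump condition f_{ε,κ}'(ε⁺) - f_{ε,κ}'(ε⁻) = α₊·f_{ε,κ}(ε) holds if and only if κ satisfies the transcendental equation (α₊+2κ)(α₋+2κ) = α₊α₋·e^{-4κε}. -/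
open MeasureTheory Set

lemma aux_exp_Iic {b : ℝ} (hb : 0 < b) (c : ℝ) :
    IntegrableOn (fun x : ℝ => Real.exp (b * x)) (Iic c) := by
  have h1 : IntegrableOn (fun x : ℝ => Real.exp (-b * x)) (Ici (-c)) :=
    (exp_neg_integrableOn_Ioi (-c - 1) hb).mono_set (Ici_subset_Ioi.2 (by linarith))
  have h2 : Integrable ((Ici (-c)).indicator fun x : ℝ => Real.exp (-b * x)) volume :=
    (integrable_indicator_iff measurableSet_Ici).2 h1
  have h3 := h2.comp_neg
  have h4 : (((Ici (-c)).indicator fun x : ℝ => Real.exp (-b * x)) ∘ fun x : ℝ => -x)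
      = (Iic c).indicator fun x : ℝ => Real.exp (b * x) := by
    funext x
    by_cases hx : x ≤ c
    · simp only [Function.comp_apply, indicator_of_mem (show -x ∈ Ici (-c) by simpa using hx),
        indicator_of_mem (show x ∈ Iic c from hx)]
      ring_nf
    · simp only [Function.comp_apply,
        indicator_of_notMem (show -x ∉ Ici (-c) by simpa using hx),
        indicator_of_notMem (show x ∉ Iic c from hx)]
  rw [show (fun t : ℝ => (Ici (-c)).indicator (fun x : ℝ => Real.exp (-b * x)) (-t))
      = (((Ici (-c)).indicator fun x : ℝ => Real.exp (-b * x)) ∘ fun x : ℝ => -x) from rfl, h4] at h3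
  exact (integrable_indicator_iff measurableSet_Iic).1 h3

noncomputable def expc (κ a b : ℂ) : ℝ → ℂ := fun x => a * Complex.exp (κ * x) + b * Complex.exp (-κ * x)

lemma hasDerivAt_cexp_mul (κ : ℂ) (x : ℝ) :
    HasDerivAt (fun y : ℝ => Complex.exp (κ * y)) (κ * Complex.exp (κ * x)) x := by
  have h : HasDerivAt (fun z : ℂ => Complex.exp (κ * z)) (κ * Complex.exp (κ * x)) (x : ℂ) := by
    have := (Complex.hasDerivAt_exp (κ * x)).comp (x : ℂ) ((hasDerivAt_id (x : ℂ)).const_mul κ)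
    simpa [mul_comm, Function.comp_def] using this
  exact h.comp_ofReal

lemma hasDerivAt_expc (κ a b : ℂ) (x : ℝ) :
    HasDerivAt (expc κ a b) (expc κ (κ * a) (-(κ * b)) x) x := by
  have h1 := (hasDerivAt_cexp_mul κ x).const_mul a
  have h2 := (hasDerivAt_cexp_mul (-κ) x).const_mul b
  convert h1.add h2 using 1
  · rfl
  · rfl
  · simp [expc]; ring

lemma loc_smooth (f : ℝ → ℂ) (κ a b : ℂ) (U : Set ℝ) (hU : IsOpen U) (x : ℝ) (hx : x ∈ U)
    (heq : EqOn f (expc κ a b) U) :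
    DifferentiableAt ℝ f x ∧ DifferentiableAt ℝ (deriv f) x ∧
      deriv (deriv f) x = κ ^ 2 * f x := by
  have hnb : U ∈ nhds x := hU.mem_nhds hx
  have hev : f =ᶠ[nhds x] expc κ a b := Filter.eventuallyEq_of_mem hnb heq
  have hd1 : DifferentiableAt ℝ f x :=
    hev.differentiableAt_iff.2 (hasDerivAt_expc κ a b x).differentiableAt
  have hdg : deriv (expc κ a b) = expc κ (κ * a) (-(κ * b)) :=
    funext fun y => (hasDerivAt_expc κ a b y).deriv
  have hev' : deriv f =ᶠ[nhds x] expc κ (κ * a) (-(κ * b)) := by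
    simpa [hdg] using hev.deriv
  have hd2 : DifferentiableAt ℝ (deriv f) x :=
    hev'.differentiableAt_iff.2 (hasDerivAt_expc κ (κ * a) (-(κ * b)) x).differentiableAt
  refine ⟨hd1, hd2, ?_⟩
  have h3 : deriv (deriv f) x = expc κ (κ * (κ * a)) (-(κ * -(κ * b))) x := by
    rw [hev'.deriv_eq, (hasDerivAt_expc κ (κ * a) (-(κ * b)) x).deriv]
  rw [h3, heq hx]
  simp only [expc]
  ring


set_option maxHeartbeats 2000000 in
/-- The explicit solution `f_{ε,κ}` of the two-delta eigenvalue problem: it is continuous,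
square-integrable, satisfies `f'' = κ² f` away from `±ε`, the jump condition at `-ε` holds,
and the jump condition at `+ε` holds if and only if `κ` solves the transcendental equation
`(α₊+2κ)(α₋+2κ) = α₊α₋ e^{-4κε}`. -/
theorem stmt_4 (αp αm : ℂ) (ε : ℝ) (hε : 0 < ε) (κ : ℂ) (hκ : 0 < κ.re) :
    let c₁ : ℂ := -(αm / (2 * κ)) * Complex.exp (-2 * κ * ε)
    let c₂ : ℂ := (αm + 2 * κ) / (2 * κ)
    let c₃ : ℂ := Complex.exp (2 * κ * ε) +
      (αm / (2 * κ)) * (Complex.exp (2 * κ * ε) - Complex.exp (-2 * κ * ε))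
    let f : ℝ → ℂ := fun x =>
      if x < -ε then Complex.exp (κ * x)
      else if x ≤ ε then c₁ * Complex.exp (-κ * x) + c₂ * Complex.exp (κ * x)
      else c₃ * Complex.exp (-κ * x)
    Continuous f ∧
    MemLp f 2 (volume : Measure ℝ) ∧
    (∀ x : ℝ, x ≠ -ε → x ≠ ε →
      DifferentiableAt ℝ f x ∧ DifferentiableAt ℝ (deriv f) x ∧
        deriv (deriv f) x = κ ^ 2 * f x) ∧
    ∃ Dmp Dmm Dpp Dpm : ℂ,
      HasDerivWithinAt f Dmp (Ioi (-ε)) (-ε) ∧ HasDerivWithinAt f Dmm (Iio (-ε)) (-ε) ∧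
      HasDerivWithinAt f Dpp (Ioi ε) ε ∧ HasDerivWithinAt f Dpm (Iio ε) ε ∧
      Dmp - Dmm = αm * f (-ε) ∧
      ((Dpp - Dpm = αp * f ε) ↔
        (αp + 2 * κ) * (αm + 2 * κ) = αp * αm * Complex.exp (-4 * κ * ε)) := by
  intro c₁ c₂ c₃ f
  have hκ0 : κ ≠ 0 := by
    intro h; rw [h] at hκ; simp at hκ
  have h2κ : (2 : ℂ) * κ ≠ 0 := by
    simp [hκ0]
  set E : ℂ := Complex.exp (κ * (ε : ℂ)) with hE
  have hE0 : E ≠ 0 := Complex.exp_ne_zero _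
  have hc : ((-ε : ℝ) : ℂ) = -(ε : ℂ) := by push_cast; ring
  have eA : Complex.exp (κ * ((-ε : ℝ) : ℂ)) = E⁻¹ := by
    rw [hc, show κ * -(ε : ℂ) = -(κ * ε) by ring, Complex.exp_neg]
  have eB : Complex.exp (-κ * ((-ε : ℝ) : ℂ)) = E := by
    rw [hc, show -κ * -(ε : ℂ) = κ * ε by ring]
  have eC : Complex.exp (-κ * ((ε : ℝ) : ℂ)) = E⁻¹ := by
    rw [show -κ * (ε : ℂ) = -(κ * ε) by ring, Complex.exp_neg]
  have e2 : Complex.exp (2 * κ * (ε : ℂ)) = E ^ 2 := by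
    rw [show (2 : ℂ) * κ * ε = κ * ε + κ * ε by ring, Complex.exp_add, hE, sq]
  have em2 : Complex.exp (-2 * κ * (ε : ℂ)) = (E ^ 2)⁻¹ := by
    rw [show (-2 : ℂ) * κ * ε = -(2 * κ * ε) by ring, Complex.exp_neg, e2]
  have em4 : Complex.exp (-4 * κ * (ε : ℂ)) = (E ^ 4)⁻¹ := by
    rw [show (-4 : ℂ) * κ * ε = ((4 : ℕ) : ℂ) * -(κ * ε) by push_cast; ring,
      Complex.exp_nat_mul, Complex.exp_neg, inv_pow]
  clear_value E
  -- boundary matching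
  have hm1 : Complex.exp (κ * ((-ε : ℝ) : ℂ))
      = c₁ * Complex.exp (-κ * ((-ε : ℝ) : ℂ)) + c₂ * Complex.exp (κ * ((-ε : ℝ) : ℂ)) := by
    simp only [c₁, c₂, eA, eB, em2]
    field_simp
    ring
  have hm2 : c₁ * Complex.exp (-κ * ((ε : ℝ) : ℂ)) + c₂ * Complex.exp (κ * ((ε : ℝ) : ℂ))
      = c₃ * Complex.exp (-κ * ((ε : ℝ) : ℂ)) := by
    simp only [c₁, c₂, c₃, eC, em2, e2, ← hE]
    field_simp [hκ0, hE0]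
    ring
  -- continuity helpers
  have hcexp : ∀ c : ℂ, Continuous fun x : ℝ => Complex.exp (c * x) :=
    fun c => Complex.continuous_exp.comp (continuous_const.mul Complex.continuous_ofReal)
  have hg2 : Continuous fun x : ℝ => c₁ * Complex.exp (-κ * x) + c₂ * Complex.exp (κ * x) :=
    (continuous_const.mul (hcexp (-κ))).add (continuous_const.mul (hcexp κ))
  have hg3 : Continuous fun x : ℝ => c₃ * Complex.exp (-κ * x) :=
    continuous_const.mul (hcexp (-κ))
  have hfF : f = fun x : ℝ => if x ≤ -ε then Complex.exp (κ * x)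
      else if x ≤ ε then c₁ * Complex.exp (-κ * x) + c₂ * Complex.exp (κ * x)
      else c₃ * Complex.exp (-κ * x) := by
    funext x
    by_cases h1 : x < -ε
    · simp only [f, if_pos h1, if_pos h1.le]
    · by_cases h2 : x ≤ -ε
      · have hx : x = -ε := le_antisymm h2 (not_lt.1 h1)
        subst hx
        simp only [f, if_neg h1, if_pos h2, if_pos (by linarith : -ε ≤ ε)]
        exact hm1.symm
      · simp only [f, if_neg h1, if_neg h2]
  have hcont : Continuous f := by
    rw [hfF]
    refine Continuous.if_le (hcexp κ) ?_ continuous_id continuous_const ?_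
    · refine Continuous.if_le hg2 hg3 continuous_id continuous_const ?_
      intro x hx
      have hx' : x = ε := hx
      subst hx'
      exact hm2
    · intro x hx
      have hx' : x = -ε := hx
      subst hx'
      rw [if_pos (by linarith : -ε ≤ ε)]
      exact hm1
  have hmem : MemLp f 2 (volume : Measure ℝ) := by
    rw [memLp_two_iff_integrable_sq_norm hcont.aestronglyMeasurable]
    rw [← integrableOn_univ, ← Iic_union_Ioi (a := -ε),
      ← Ioc_union_Ioi_eq_Ioi (show -ε ≤ ε by linarith)]
    refine IntegrableOn.union ?_ (IntegrableOn.union ?_ ?_)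
    · refine (aux_exp_Iic (show (0:ℝ) < 2 * κ.re by linarith) (-ε)).congr_fun ?_ measurableSet_Iic
      intro x hx
      have hx' : x ≤ -ε := hx
      have hfx : f x = Complex.exp (κ * x) := by
        rcases lt_or_eq_of_le hx' with h | h
        · simp only [f, if_pos h]
        · subst h
          simp only [f, if_neg (lt_irrefl _), if_pos (by linarith : -ε ≤ ε)]
          exact hm1.symm
      show Real.exp (2 * κ.re * x) = ‖f x‖ ^ 2
      rw [hfx, Complex.norm_exp,
        show (κ * (x:ℂ)).re = κ.re * x by simp [Complex.mul_re], sq, ← Real.exp_add]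
      ring_nf
    · exact (hcont.norm.pow 2).integrableOn_Ioc
    · have hint : IntegrableOn (fun x : ℝ => ‖c₃‖ ^ 2 * Real.exp (-(2 * κ.re) * x)) (Ioi ε) :=
        (exp_neg_integrableOn_Ioi ε (show (0:ℝ) < 2 * κ.re by linarith)).const_mul (‖c₃‖ ^ 2)
      refine hint.congr_fun ?_ measurableSet_Ioi
      intro x hx
      have hx' : ε < x := hx
      show ‖c₃‖ ^ 2 * Real.exp (-(2 * κ.re) * x) = ‖f x‖ ^ 2
      have hfx : f x = c₃ * Complex.exp (-κ * x) := by
        simp only [f, if_neg (by linarith : ¬ x < -ε), if_neg (not_le.2 hx')]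
      rw [hfx, norm_mul, mul_pow, Complex.norm_exp]
      congr 1
      rw [show ((-κ) * (x:ℂ)).re = -(κ.re * x) by simp [Complex.mul_re], sq, ← Real.exp_add]
      ring_nf
  have hODE : ∀ x : ℝ, x ≠ -ε → x ≠ ε →
      DifferentiableAt ℝ f x ∧ DifferentiableAt ℝ (deriv f) x ∧
        deriv (deriv f) x = κ ^ 2 * f x := by
    intro x hx1 hx2
    rcases lt_trichotomy x (-ε) with h | h | h
    · refine loc_smooth f κ 1 0 (Iio (-ε)) isOpen_Iio x h ?_
      intro y hy
      have hy' : y < -ε := hy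
      simp only [f, expc]
      rw [if_pos hy']
      ring
    · exact absurd h hx1
    · rcases lt_trichotomy x ε with h' | h' | h'
      · refine loc_smooth f κ c₂ c₁ (Ioo (-ε) ε) isOpen_Ioo x ⟨h, h'⟩ ?_
        intro y hy
        simp only [f, expc]
        rw [if_neg (not_lt.2 hy.1.le), if_pos hy.2.le]
        ring
      · exact absurd h' hx2
      · refine loc_smooth f κ 0 c₃ (Ioi ε) isOpen_Ioi x h' ?_
        intro y hy
        have hy' : ε < y := hy
        simp only [f, expc]
        rw [if_neg (by linarith : ¬ y < -ε), if_neg (not_le.2 hy')]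
        ring
  refine ⟨hcont, hmem, hODE, expc κ (κ * c₂) (-(κ * c₁)) (-ε), expc κ (κ * 1) (-(κ * 0)) (-ε),
    expc κ (κ * 0) (-(κ * c₃)) ε, expc κ (κ * c₂) (-(κ * c₁)) ε, ?_, ?_, ?_, ?_, ?_, ?_⟩
  · refine ((hasDerivAt_expc κ c₂ c₁ (-ε)).hasDerivWithinAt).congr_of_eventuallyEq ?_ ?_
    · have hmem' : Ioi (-ε) ∩ Iio ε ∈ nhdsWithin (-ε) (Ioi (-ε)) :=
        inter_mem_nhdsWithin _ (Iio_mem_nhds (by linarith))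
      filter_upwards [hmem'] with y hy
      simp only [f, expc]
      rw [if_neg (not_lt.2 hy.1.le), if_pos hy.2.le]
      ring
    · simp only [f, expc]
      rw [if_neg (lt_irrefl _), if_pos (by linarith : -ε ≤ ε)]
      ring
  · refine ((hasDerivAt_expc κ 1 0 (-ε)).hasDerivWithinAt).congr ?_ ?_
    · intro y hy
      have hy' : y < -ε := hy
      simp only [f, expc]
      rw [if_pos hy']
      ring
    · simp only [f, expc]
      rw [if_neg (lt_irrefl _), if_pos (by linarith : -ε ≤ ε)]
      rw [one_mul, zero_mul, add_zero]
      exact hm1.symm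
  · refine ((hasDerivAt_expc κ 0 c₃ ε).hasDerivWithinAt).congr ?_ ?_
    · intro y hy
      have hy' : ε < y := hy
      simp only [f, expc]
      rw [if_neg (by linarith : ¬ y < -ε), if_neg (not_le.2 hy')]
      ring
    · simp only [f, expc]
      rw [if_neg (by linarith : ¬ ε < -ε), if_pos le_rfl]
      rw [zero_mul, zero_add]
      exact hm2
  · refine ((hasDerivAt_expc κ c₂ c₁ ε).hasDerivWithinAt).congr_of_eventuallyEq ?_ ?_
    · have hmem' : Iio ε ∩ Ioi (-ε) ∈ nhdsWithin ε (Iio ε) :=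
        inter_mem_nhdsWithin _ (Ioi_mem_nhds (by linarith))
      filter_upwards [hmem'] with y hy
      simp only [f, expc]
      rw [if_neg (not_lt.2 hy.2.le), if_pos hy.1.le]
      ring
    · simp only [f, expc]
      rw [if_neg (by linarith : ¬ ε < -ε), if_pos le_rfl]
      ring
  · have hf : f (-ε) = c₁ * Complex.exp (-κ * ((-ε : ℝ) : ℂ)) + c₂ * Complex.exp (κ * ((-ε : ℝ) : ℂ)) := by
      simp only [f]
      rw [if_neg (lt_irrefl _), if_pos (by linarith : -ε ≤ ε)]
    rw [hf]
    simp only [expc, c₁, c₂, eA, eB, em2]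
    field_simp [hκ0, hE0]
    ring
  · have hf : f ε = c₁ * Complex.exp (-κ * ((ε : ℝ) : ℂ)) + c₂ * Complex.exp (κ * ((ε : ℝ) : ℂ)) := by
      simp only [f]
      rw [if_neg (by linarith : ¬ ε < -ε), if_pos le_rfl]
    have key : expc κ (κ * 0) (-(κ * c₃)) ε - expc κ (κ * c₂) (-(κ * c₁)) ε - αp * f ε
        = -(E / (2 * κ)) * ((αp + 2 * κ) * (αm + 2 * κ)
            - αp * αm * Complex.exp (-4 * κ * (ε : ℂ))) := by
      rw [hf]
      simp only [expc, c₁, c₂, c₃, eC, em2, e2, em4, ← hE]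
      field_simp [hκ0, hE0]
      ring
    have hfac : -(E / (2 * κ)) ≠ 0 := neg_ne_zero.2 (div_ne_zero hE0 h2κ)
    constructor
    · intro h
      have h0 : -(E / (2 * κ)) * ((αp + 2 * κ) * (αm + 2 * κ)
          - αp * αm * Complex.exp (-4 * κ * (ε : ℂ))) = 0 := by
        rw [← key, h, sub_self]
      exact sub_eq_zero.1 ((mul_eq_zero.1 h0).resolve_left hfac)
    · intro h
      have h0 : expc κ (κ * 0) (-(κ * c₃)) ε - expc κ (κ * c₂) (-(κ * c₁)) ε - αp * f ε = 0 := by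
        rw [key, sub_eq_zero.2 h, mul_zero]
      exact sub_eq_zero.1 h0
end

section
/- There exist ε₀ > 0, δ > 0, C > 0, and a function κ : (0, ε₀) → ℂ such that for every ε ∈ (0, ε₀): (i) (α₊+2κ(ε))(α₋+2κ(ε)) = α₊α₋·e^{-4κ(ε)ε}; (ii) κ(ε) is the unique complex number z with |z - κ₀| ≤ δ satisfying (α₊+2z)(α₋+2z) = α₊α₋·e^{-4zε}; and (iii) |κ(ε) - κ₀ + α₊α₋·ε| ≤ C·ε², i.e. κ(ε) = κ₀ - α₊α₋·ε + O(ε²) as ε → 0⁺. -/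
open MeasureTheory Set

/-- Algebraic equivalence between the fixed-point form and the original equation. -/
lemma stmt5_alg (αp αm z E : ℂ) (hz : z ≠ 0) :
    -(αp + αm) / 2 + αp * αm * (E - 1) / (4 * z) = z ↔
      (αp + 2 * z) * (αm + 2 * z) = αp * αm * E := by
  rw [div_add_div _ _ (two_ne_zero) (by simpa using hz), div_eq_iff (by simpa using hz)]
  constructor
  · intro h; linear_combination -h / 2
  · intro h; linear_combination -2 * h

set_option maxHeartbeats 1600000 in
/-- Core existence/uniqueness/asymptotics lemma. -/
lemma stmt5_core (αp αm : ℂ) (hα : (αp + αm).re < 0) :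
    ∃ ε₀ > (0 : ℝ), ∃ δ > (0 : ℝ), ∃ C > (0 : ℝ), ∀ ε ∈ Ioo (0 : ℝ) ε₀, ∃ x : ℂ,
      (αp + 2 * x) * (αm + 2 * x) = αp * αm * Complex.exp (-4 * x * ε) ∧
      ‖x - (-(αp + αm) / 2)‖ ≤ δ ∧
      (∀ z : ℂ, ‖z - (-(αp + αm) / 2)‖ ≤ δ →
        (αp + 2 * z) * (αm + 2 * z) = αp * αm * Complex.exp (-4 * z * ε) → z = x) ∧
      ‖x - (-(αp + αm) / 2) + αp * αm * ε‖ ≤ C * ε ^ 2 := by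
  set κ₀ : ℂ := -(αp + αm) / 2 with hκ₀def
  have hκ₀re : 0 < κ₀.re := by
    have : κ₀.re = -((αp + αm).re) / 2 := by
      rw [hκ₀def, show ((2:ℂ)) = ((2:ℝ):ℂ) by norm_num, Complex.div_ofReal_re,
        Complex.neg_re]
    rw [this]; linarith
  have hκ₀ : κ₀ ≠ 0 := fun h => by simp [h] at hκ₀re
  set K : ℝ := ‖κ₀‖ with hKdef
  have hK : 0 < K := by simpa [hKdef] using hκ₀
  set A : ℝ := ‖αp * αm‖ with hAdef
  have hA : 0 ≤ A := norm_nonneg _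
  set δ : ℝ := K / 2 with hδdef
  have hδ : 0 < δ := by positivity
  set ε₀ : ℝ := min 1 (min (1 / (6 * K)) (min (δ / (2 * A + 1)) (1 / (24 * A + 1)))) with hε₀def
  have hε₀ : 0 < ε₀ := by
    refine lt_min one_pos (lt_min (by positivity) (lt_min (by positivity) (by positivity)))
  refine ⟨ε₀, hε₀, δ, hδ, 6 * A * K + 1, by positivity, ?_⟩
  rintro ε ⟨hε0, hεlt⟩
  have hε1 : ε ≤ 1 := le_of_lt (lt_of_lt_of_le hεlt (min_le_left _ _))
  have hε2 : ε ≤ 1 / (6 * K) :=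
    le_of_lt (lt_of_lt_of_le hεlt ((min_le_right _ _).trans (min_le_left _ _)))
  have hε3 : ε ≤ δ / (2 * A + 1) :=
    le_of_lt (lt_of_lt_of_le hεlt ((min_le_right _ _).trans
      ((min_le_right _ _).trans (min_le_left _ _))))
  have hε4 : ε ≤ 1 / (24 * A + 1) :=
    le_of_lt (lt_of_lt_of_le hεlt ((min_le_right _ _).trans
      ((min_le_right _ _).trans (min_le_right _ _))))
  -- derived numeric bounds
  have h6K : 6 * K * ε ≤ 1 := by
    rw [le_div_iff₀ (by positivity)] at hε2; linarith
  have h2A : 2 * A * ε ≤ δ := by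
    rw [le_div_iff₀ (by positivity)] at hε3; nlinarith
  have h12A : 12 * A * ε ^ 2 ≤ 1 / 2 := by
    rw [le_div_iff₀ (by positivity)] at hε4; nlinarith
  set s : Set ℂ := Metric.closedBall κ₀ δ with hsdef
  set Φ : ℂ → ℂ := fun z => κ₀ + αp * αm * (Complex.exp (-4 * z * ε) - 1) / (4 * z) with hΦdef
  -- basic bounds on the ball
  have hzlb : ∀ z ∈ s, K / 2 ≤ ‖z‖ := by
    intro z hz
    have h1 : ‖z - κ₀‖ ≤ δ := by
      simpa [hsdef, Complex.dist_eq] using hz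
    have h2 : K - ‖z - κ₀‖ ≤ ‖z‖ := by
      have h4 := norm_sub_norm_le κ₀ z
      simp only [norm_sub_rev κ₀ z, ← hKdef] at h4
      linarith
    simp only [hδdef] at h1; linarith
  have hzne : ∀ z ∈ s, z ≠ 0 := by
    intro z hz h0
    have := hzlb z hz; rw [h0] at this; simp at this; linarith
  have hzub : ∀ z ∈ s, ‖z‖ ≤ 3 * K / 2 := by
    intro z hz
    have h1 : ‖z - κ₀‖ ≤ δ := by
      simpa [hsdef, Complex.dist_eq] using hz
    have h4 := norm_sub_norm_le z κ₀
    simp only [← hKdef] at h4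
    simp only [hδdef] at h1
    linarith
  have hwabs : ∀ z ∈ s, ‖-4 * z * ε‖ = 4 * ‖z‖ * ε := by
    intro z hz
    simp [norm_mul, Complex.norm_real, abs_of_pos hε0]
  have hwle : ∀ z ∈ s, ‖-4 * z * ε‖ ≤ 1 := by
    intro z hz
    rw [hwabs z hz]
    have := hzub z hz
    nlinarith
  -- Φ maps s to s
  have hmaps : MapsTo Φ s s := by
    intro z hz
    have hz0 := hzne z hz
    have hlb := hzlb z hz
    have hzpos : 0 < ‖z‖ := lt_of_lt_of_le (by positivity) hlb
    have hE : ‖Complex.exp (-4 * z * ε) - 1‖ ≤ 2 * (4 * ‖z‖ * ε) := by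
      have := Complex.norm_exp_sub_one_le (hwle z hz)
      rwa [hwabs z hz] at this
    have : ‖Φ z - κ₀‖ ≤ 2 * A * ε := by
      simp only [hΦdef, add_sub_cancel_left]
      rw [norm_div, norm_mul]
      rw [div_le_iff₀ (by simpa using hzpos)]
      calc A * ‖Complex.exp (-4 * z * ε) - 1‖
          ≤ A * (2 * (4 * ‖z‖ * ε)) := by
            exact mul_le_mul_of_nonneg_left hE hA
        _ ≤ 2 * A * ε * ‖4 * z‖ := by
            simp [norm_mul]; ring_nf; nlinarith [hzpos, hA, hε0]
    simp only [hsdef, Metric.mem_closedBall, Complex.dist_eq]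
    exact this.trans h2A
  -- derivative bound and Lipschitz estimate
  have hlip : ∀ x ∈ s, ∀ y ∈ s, dist (Φ x) (Φ y) ≤ (1/2 : ℝ) * dist x y := by
    set Φ' : ℂ → ℂ := fun z =>
      αp * αm * (((-4 * (ε:ℂ)) * Complex.exp (-4 * z * (ε:ℂ)) * (4 * z) -
        (Complex.exp (-4 * z * (ε:ℂ)) - 1) * 4) / (4 * z) ^ 2) with hΦ'def
    have hderiv : ∀ z ∈ s, HasDerivWithinAt Φ (Φ' z) s z := by
      intro z hz
      have hz4 : (4 : ℂ) * z ≠ 0 := by simpa using hzne z hz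
      have h1 : HasDerivAt (fun w : ℂ => -4 * w * (ε:ℂ)) (-4 * (ε:ℂ)) z := by
        simpa using ((hasDerivAt_id z).const_mul (-4 : ℂ)).mul_const (ε:ℂ)
      have h2 : HasDerivAt (fun w : ℂ => Complex.exp (-4 * w * (ε:ℂ)))
          ((-4 * (ε:ℂ)) * Complex.exp (-4 * z * (ε:ℂ))) z := by
        simpa [mul_comm] using h1.cexp
      have h3 : HasDerivAt (fun w : ℂ => Complex.exp (-4 * w * (ε:ℂ)) - 1)
          ((-4 * (ε:ℂ)) * Complex.exp (-4 * z * (ε:ℂ))) z := h2.sub_const 1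
      have h4 : HasDerivAt (fun w : ℂ => (4:ℂ) * w) 4 z := by
        simpa using (hasDerivAt_id z).const_mul (4:ℂ)
      have h5 := h3.div h4 hz4
      have h6 := (h5.const_mul (αp * αm)).const_add κ₀
      have h7 : HasDerivAt Φ (Φ' z) z := by
        simpa [hΦdef, hΦ'def, mul_div_assoc] using h6
      exact h7.hasDerivWithinAt
    have tri : ∀ a b : ℂ, ‖a - b‖ ≤ ‖a‖ + ‖b‖ := fun a b => by
      simpa using norm_sub_le a b
    have hbound : ∀ z ∈ s, ‖Φ' z‖ ≤ 12 * A * ε ^ 2 := by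
      intro z hz
      have hz0 := hzne z hz
      have hzpos : (0:ℝ) < ‖z‖ := lt_of_lt_of_le (by positivity) (hzlb z hz)
      set E := Complex.exp (-4 * z * (ε:ℂ)) with hE
      set w : ℂ := -4 * z * (ε:ℂ) with hw
      have hwle1 : ‖w‖ ≤ 1 := hwle z hz
      have habsw : ‖w‖ = 4 * ‖z‖ * ε := hwabs z hz
      have hEone : ‖E - 1‖ ≤ 2 * ‖w‖ := Complex.norm_exp_sub_one_le hwle1
      have hEtwo : ‖E - 1 - w‖ ≤ ‖w‖ ^ 2 :=
        Complex.norm_exp_sub_one_sub_id_le hwle1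
      have hN : (-4 * (ε:ℂ)) * E * (4 * z) - (E - 1) * 4 = 4 * (w * (E - 1) - (E - 1 - w)) := by
        rw [hw]; ring
      have habsN : ‖(-4 * (ε:ℂ)) * E * (4 * z) - (E - 1) * 4‖
          ≤ 12 * ‖w‖ ^ 2 := by
        rw [hN, norm_mul]
        have t1 : ‖w * (E - 1) - (E - 1 - w)‖ ≤
            ‖w‖ * ‖E - 1‖ + ‖E - 1 - w‖ := by
          have := tri (w * (E - 1)) (E - 1 - w)
          rwa [norm_mul] at this
        have t2 : ‖w‖ * ‖E - 1‖ + ‖E - 1 - w‖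
            ≤ 3 * ‖w‖ ^ 2 := by
          have h0 : (0:ℝ) ≤ ‖w‖ := norm_nonneg w
          nlinarith [hEone, hEtwo]
        have h4abs : ‖(4 : ℂ)‖ = 4 := by norm_num
        rw [h4abs]
        nlinarith [t1, t2]
      have h16 : ‖(4 * z) ^ 2‖ = 16 * ‖z‖ ^ 2 := by
        rw [norm_pow, norm_mul]
        have h4abs : ‖(4 : ℂ)‖ = 4 := by norm_num
        rw [h4abs]; ring
      simp only [hΦ'def, ← hE, ← hw]
      rw [norm_mul, norm_div, h16, ← hAdef, ← mul_div_assoc]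
      rw [div_le_iff₀ (show (0:ℝ) < 16 * ‖z‖ ^ 2 by positivity)]
      calc A * ‖(-4 * (ε:ℂ)) * E * (4 * z) - (E - 1) * 4‖
          ≤ A * (12 * ‖w‖ ^ 2) := mul_le_mul_of_nonneg_left habsN hA
        _ = 12 * A * ε ^ 2 * (16 * ‖z‖ ^ 2) := by rw [habsw]; ring
    intro x hx y hy
    have hconv : Convex ℝ s := by rw [hsdef]; exact convex_closedBall κ₀ δ
    have hmv := hconv.norm_image_sub_le_of_norm_hasDerivWithin_le hderiv hbound hy hx
    have hd : dist (Φ x) (Φ y) ≤ 12 * A * ε ^ 2 * dist x y := by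
      rw [dist_eq_norm, dist_eq_norm]
      exact hmv
    have hnn : (0:ℝ) ≤ dist x y := dist_nonneg
    nlinarith [hd, h12A, hnn]
  -- fixed point existence
  have hsc : IsComplete s := Metric.isClosed_closedBall.isComplete
  have hκ₀s : κ₀ ∈ s := by simp [hsdef, le_of_lt hδ]
  have hcontr : ContractingWith (2⁻¹ : NNReal) (hmaps.restrict Φ s s) := by
    constructor
    · rw [← NNReal.coe_lt_coe]; norm_num
    · refine LipschitzOnWith.mapsToRestrict hmaps ?_
      refine LipschitzOnWith.of_dist_le_mul ?_
      intro x hx y hy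
      simpa using hlip x hx y hy
  obtain ⟨x, hxs, hfix, -⟩ := hcontr.exists_fixedPoint' hsc hmaps hκ₀s (edist_ne_top _ _)
  have hxne : x ≠ 0 := hzne x hxs
  have hΦx : Φ x = x := hfix
  have hxeq : (αp + 2 * x) * (αm + 2 * x) = αp * αm * Complex.exp (-4 * x * ε) :=
    (stmt5_alg αp αm x _ hxne).1 hΦx
  refine ⟨x, hxeq, by simpa [hsdef, Complex.dist_eq] using hxs, ?_, ?_⟩
  · -- uniqueness
    intro z hzball hzeq
    have hzs : z ∈ s := by simpa [hsdef, Metric.mem_closedBall, Complex.dist_eq] using hzball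
    have hΦz : Φ z = z := (stmt5_alg αp αm z _ (hzne z hzs)).2 hzeq
    have := hlip z hzs x hxs
    rw [hΦz, hΦx] at this
    have h0 : dist z x ≤ 0 := by linarith
    exact dist_eq_zero.mp (le_antisymm h0 dist_nonneg)
  · -- asymptotics
    have hxlb := hzlb x hxs
    have hxub := hzub x hxs
    have hxpos : (0:ℝ) < ‖x‖ := lt_of_lt_of_le (by positivity) hxlb
    set E := Complex.exp (-4 * x * (ε:ℂ)) with hE
    set w : ℂ := -4 * x * (ε:ℂ) with hw
    have hwle1 : ‖w‖ ≤ 1 := hwle x hxs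
    have habsw : ‖w‖ = 4 * ‖x‖ * ε := hwabs x hxs
    have hEtwo : ‖E - 1 - w‖ ≤ ‖w‖ ^ 2 :=
      Complex.norm_exp_sub_one_sub_id_le hwle1
    have h4x : (4 : ℂ) * x ≠ 0 := by simpa using hxne
    have hident : x - κ₀ + αp * αm * (ε:ℂ) = αp * αm * (E - 1 - w) / (4 * x) := by
      rw [hw, hκ₀def, eq_div_iff h4x]
      linear_combination hxeq
    rw [hident, norm_div, norm_mul, ← hAdef]
    rw [div_le_iff₀ (by simpa using (by positivity : (0:ℝ) < 4 * ‖x‖))]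
    have hb1 : A * ‖E - 1 - w‖ ≤ A * (16 * ‖x‖ ^ 2 * ε ^ 2) := by
      apply mul_le_mul_of_nonneg_left _ hA
      calc ‖E - 1 - w‖ ≤ ‖w‖ ^ 2 := hEtwo
        _ = 16 * ‖x‖ ^ 2 * ε ^ 2 := by rw [habsw]; ring
    have hb2 : ‖4 * x‖ = 4 * ‖x‖ := by
      rw [norm_mul]
      have h4abs : ‖(4 : ℂ)‖ = 4 := by norm_num
      rw [h4abs]
    rw [hb2]
    have hKx : ‖x‖ ≤ 3 * K / 2 := hxub
    nlinarith [hb1, hε0, hA, hxpos, hK, sq_nonneg ε,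
      mul_le_mul_of_nonneg_left hKx (by positivity : (0:ℝ) ≤ A * ‖x‖),
      mul_le_mul_of_nonneg_right
        (mul_le_mul_of_nonneg_left hKx (by positivity : (0:ℝ) ≤ A * ‖x‖))
        (sq_nonneg ε)]

/-- Existence, local uniqueness and first-order asymptotics of the solution `κ(ε)` of the
transcendental equation `(α₊+2κ)(α₋+2κ) = α₊α₋ e^{-4κε}` near `κ₀ = -(α₊+α₋)/2`:
`κ(ε) = κ₀ - α₊α₋ ε + O(ε²)` as `ε → 0⁺`. -/
theorem stmt_5 (αp αm : ℂ) (hα : (αp + αm).re < 0) :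
    ∃ ε₀ > (0 : ℝ), ∃ δ > (0 : ℝ), ∃ C > (0 : ℝ), ∃ κ : ℝ → ℂ,
      ∀ ε ∈ Ioo (0 : ℝ) ε₀,
        (αp + 2 * κ ε) * (αm + 2 * κ ε) = αp * αm * Complex.exp (-4 * κ ε * ε) ∧
        ‖κ ε - (-(αp + αm) / 2)‖ ≤ δ ∧
        (∀ z : ℂ, ‖z - (-(αp + αm) / 2)‖ ≤ δ →
          (αp + 2 * z) * (αm + 2 * z) = αp * αm * Complex.exp (-4 * z * ε) → z = κ ε) ∧
        ‖κ ε - (-(αp + αm) / 2) + αp * αm * ε‖ ≤ C * ε ^ 2 := by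
  obtain ⟨ε₀, hε₀, δ, hδ, C, hC, h⟩ := stmt5_core αp αm hα
  refine ⟨ε₀, hε₀, δ, hδ, C, hC, fun ε => if hε : ε ∈ Ioo (0 : ℝ) ε₀ then (h ε hε).choose else 0,
    fun ε hε => ?_⟩
  simp only [dif_pos hε]
  exact (h ε hε).choose_spec
end

section
/- Let ε₀ > 0 and let κ : (0, ε₀) → ℂ be any function such that for every ε ∈ (0, ε₀) one has (α₊+2κ(ε))(α₋+2κ(ε)) = α₊α₋·e^{-4κ(ε)ε} and κ(ε) → κ₀ as ε → 0⁺. Then there exist ε₁ ∈ (0, ε₀] and C > 0 such that for all ε ∈ (0, ε₁), |(-κ(ε)²) - λ₀ + (α₊+α₋)α₊α₋·ε| ≤ C·ε²; that is, the eigenvalue λ_ε := -κ(ε)² satisfies λ_ε = λ₀ - (α₊+α₋)α₊α₋·ε + O(ε²) as ε → 0⁺. -/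
open MeasureTheory Set

set_option maxHeartbeats 1000000 in
/-- Eigenvalue asymptotics in dimension one: if `κ(ε)` solves the transcendental equation
`(α₊+2κ)(α₋+2κ) = α₊α₋ e^{-4κε}` and `κ(ε) → κ₀ = -(α₊+α₋)/2` as `ε → 0⁺`, then the
eigenvalue `λ_ε = -κ(ε)²` satisfies `λ_ε = λ₀ - (α₊+α₋)α₊α₋ ε + O(ε²)`, where
`λ₀ = -(α₊+α₋)²/4`. -/
theorem stmt_6 (αp αm : ℂ) (hα : (αp + αm).re < 0) (ε₀ : ℝ) (hε₀ : 0 < ε₀)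
    (κ : ℝ → ℂ)
    (heq : ∀ ε ∈ Ioo (0 : ℝ) ε₀,
      (αp + 2 * κ ε) * (αm + 2 * κ ε) = αp * αm * Complex.exp (-4 * κ ε * ε))
    (hlim : Filter.Tendsto κ (nhdsWithin 0 (Ioi (0 : ℝ))) (nhds (-(αp + αm) / 2))) :
    ∃ ε₁ : ℝ, 0 < ε₁ ∧ ε₁ ≤ ε₀ ∧ ∃ C > (0 : ℝ), ∀ ε ∈ Ioo (0 : ℝ) ε₁,
      ‖-(κ ε) ^ 2 - (-(αp + αm) ^ 2 / 4) + (αp + αm) * αp * αm * ε‖ ≤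
        C * ε ^ 2 := by
  have hs0 : αp + αm ≠ 0 := by
    intro h; rw [h] at hα; simp at hα
  set S : ℝ := ‖αp + αm‖ with hS
  have hSpos : 0 < S := norm_pos_iff.mpr hs0
  -- neighborhood from hlim where κ is within S/4 of κ₀
  have hmem : κ ⁻¹' Metric.closedBall (-(αp + αm) / 2) (S / 4) ∈
      nhdsWithin 0 (Ioi (0 : ℝ)) :=
    hlim (Metric.closedBall_mem_nhds _ (by positivity))
  rw [mem_nhdsWithin] at hmem
  obtain ⟨U, hUopen, hU0, hUsub⟩ := hmem
  obtain ⟨η, hηpos, hball⟩ := Metric.isOpen_iff.mp hUopen 0 hU0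
  set M : ℝ := 3 * S / 4 with hM
  have hMpos : 0 < M := by positivity
  set A : ℝ := ‖αp * αm‖ with hA
  have hA0 : 0 ≤ A := norm_nonneg _
  set K : ℝ := A * (4 * M + 16 * M ^ 2) / S with hK
  have hK0 : 0 ≤ K := by positivity
  refine ⟨min (min ε₀ η) (min 1 (1 / (4 * M + 1))), by positivity,
    (min_le_left _ _).trans (min_le_left _ _),
    K ^ 2 + 2 * A * K + 8 * A * M ^ 2 + 1, by positivity, ?_⟩
  rintro ε ⟨hε0, hεlt⟩
  have hεε₀ : ε < ε₀ := hεlt.trans_le ((min_le_left _ _).trans (min_le_left _ _))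
  have hεη : ε < η := hεlt.trans_le ((min_le_left _ _).trans (min_le_right _ _))
  have hε1 : ε ≤ 1 := le_of_lt (hεlt.trans_le ((min_le_right _ _).trans (min_le_left _ _)))
  have hεM : ε ≤ 1 / (4 * M + 1) :=
    le_of_lt (hεlt.trans_le ((min_le_right _ _).trans (min_le_right _ _)))
  -- κ ε is close to κ₀
  have hδball : κ ε ∈ Metric.closedBall (-(αp + αm) / 2) (S / 4) := by
    refine hUsub ⟨hball ?_, hε0⟩
    simp [Real.dist_eq, abs_of_pos hε0, hεη]
  have hδ : ‖κ ε + (αp + αm) / 2‖ ≤ S / 4 := by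
    have h1 := hδball
    rw [Metric.mem_closedBall, Complex.dist_eq] at h1
    have h2 : κ ε - -(αp + αm) / 2 = κ ε + (αp + αm) / 2 := by ring
    rwa [h2] at h1
  have habs2 : ‖(αp + αm) / 2‖ = S / 2 := by
    rw [norm_div]
    simp [hS]
  -- bounds on |κ ε|
  have hκup : ‖κ ε‖ ≤ M := by
    have tri := norm_add_le (κ ε + (αp + αm) / 2) (-((αp + αm) / 2))
    have e1 : κ ε + (αp + αm) / 2 + -((αp + αm) / 2) = κ ε := by ring
    rw [e1, norm_neg, habs2] at tri
    rw [hM]; linarith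
  have hκlow : S / 4 ≤ ‖κ ε‖ := by
    have tri := norm_add_le (κ ε + (αp + αm) / 2) (-(κ ε))
    have e1 : κ ε + (αp + αm) / 2 + -(κ ε) = (αp + αm) / 2 := by ring
    rw [e1, norm_neg, habs2] at tri
    linarith
  -- the exponent
  have hzabs : ‖-4 * κ ε * ε‖ ≤ 4 * M * ε := by
    rw [norm_mul, norm_mul, Complex.norm_real, Real.norm_eq_abs, abs_of_pos hε0]
    have h4 : ‖(-4 : ℂ)‖ = 4 := by norm_num
    rw [h4]
    nlinarith
  have hz1 : ‖-4 * κ ε * ε‖ ≤ 1 := by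
    refine hzabs.trans ?_
    have h1 : ε * (4 * M + 1) ≤ 1 := (le_div_iff₀ (by positivity)).mp hεM
    nlinarith
  have hr : ‖Complex.exp (-4 * κ ε * ε) - 1 - -4 * κ ε * ε‖ ≤
      ‖-4 * κ ε * ε‖ ^ 2 := Complex.norm_exp_sub_one_sub_id_le hz1
  have hrε : ‖Complex.exp (-4 * κ ε * ε) - 1 - -4 * κ ε * ε‖ ≤
      16 * M ^ 2 * ε ^ 2 := by
    refine hr.trans ?_
    nlinarith [norm_nonneg (-4 * κ ε * (ε : ℂ))]
  -- key algebraic identity from the transcendental equation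
  have key : (κ ε + (αp + αm) / 2) * (4 * κ ε) =
      αp * αm * (Complex.exp (-4 * κ ε * ε) - 1) := by
    linear_combination heq ε ⟨hε0, hεε₀⟩
  -- bound |exp z - 1|
  have hez : ‖Complex.exp (-4 * κ ε * ε) - 1‖ ≤ (4 * M + 16 * M ^ 2) * ε := by
    have tri := norm_add_le
      (Complex.exp (-4 * κ ε * ε) - 1 - -4 * κ ε * ε) (-4 * κ ε * ε)
    have e1 : Complex.exp (-4 * κ ε * ε) - 1 - -4 * κ ε * ε + -4 * κ ε * ε =
        Complex.exp (-4 * κ ε * ε) - 1 := by ring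
    rw [e1] at tri
    nlinarith [norm_nonneg (-4 * κ ε * (ε : ℂ))]
  -- first-order bound on δ
  have hδK : ‖κ ε + (αp + αm) / 2‖ ≤ K * ε := by
    have habs_key : ‖κ ε + (αp + αm) / 2‖ * (4 * ‖κ ε‖) =
        A * ‖Complex.exp (-4 * κ ε * ε) - 1‖ := by
      have h1 := congrArg norm key
      rw [norm_mul, norm_mul] at h1
      have h4 : ‖(4 : ℂ)‖ = 4 := by norm_num
      rw [h4] at h1
      rw [h1, hA, norm_mul]
    have h2 : ‖κ ε + (αp + αm) / 2‖ * S ≤ A * ((4 * M + 16 * M ^ 2) * ε) := by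
      calc ‖κ ε + (αp + αm) / 2‖ * S
          ≤ ‖κ ε + (αp + αm) / 2‖ * (4 * ‖κ ε‖) := by
            refine mul_le_mul_of_nonneg_left ?_ (norm_nonneg _)
            linarith
        _ = A * ‖Complex.exp (-4 * κ ε * ε) - 1‖ := habs_key
        _ ≤ A * ((4 * M + 16 * M ^ 2) * ε) := mul_le_mul_of_nonneg_left hez hA0
    rw [hK, div_mul_eq_mul_div, le_div_iff₀ hSpos]
    calc ‖κ ε + (αp + αm) / 2‖ * S ≤ A * ((4 * M + 16 * M ^ 2) * ε) := h2
      _ = A * (4 * M + 16 * M ^ 2) * ε := by ring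
  -- the main identity for the target
  have hT : -(κ ε) ^ 2 - (-(αp + αm) ^ 2 / 4) + (αp + αm) * αp * αm * (ε : ℂ) =
      (κ ε + (αp + αm) / 2) ^ 2 + 2 * (αp * αm) * (κ ε + (αp + αm) / 2) * (ε : ℂ)
        - αp * αm * (Complex.exp (-4 * κ ε * ε) - 1 - -4 * κ ε * ε) / 2 := by
    linear_combination (-1 / 2 : ℂ) * key
  rw [hT]
  -- final triangle inequality and bound
  have tri : ‖(κ ε + (αp + αm) / 2) ^ 2 +
        2 * (αp * αm) * (κ ε + (αp + αm) / 2) * (ε : ℂ)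
        - αp * αm * (Complex.exp (-4 * κ ε * ε) - 1 - -4 * κ ε * ε) / 2‖ ≤
      ‖κ ε + (αp + αm) / 2‖ ^ 2 + 2 * A * ‖κ ε + (αp + αm) / 2‖ * ε
        + A * ‖Complex.exp (-4 * κ ε * ε) - 1 - -4 * κ ε * ε‖ / 2 := by
    have t1 := norm_sub_le
      ((κ ε + (αp + αm) / 2) ^ 2 + 2 * (αp * αm) * (κ ε + (αp + αm) / 2) * (ε : ℂ))
      (αp * αm * (Complex.exp (-4 * κ ε * ε) - 1 - -4 * κ ε * ε) / 2)
    have t2 := norm_add_le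
      ((κ ε + (αp + αm) / 2) ^ 2) (2 * (αp * αm) * (κ ε + (αp + αm) / 2) * (ε : ℂ))
    have e1 : ‖(κ ε + (αp + αm) / 2) ^ 2‖ =
        ‖κ ε + (αp + αm) / 2‖ ^ 2 := norm_pow _ _
    have e2 : ‖2 * (αp * αm) * (κ ε + (αp + αm) / 2) * (ε : ℂ)‖ =
        2 * A * ‖κ ε + (αp + αm) / 2‖ * ε := by
      rw [norm_mul, norm_mul, norm_mul, Complex.norm_real, Real.norm_eq_abs, abs_of_pos hε0, Complex.norm_two, hA]
    have e3 : ‖αp * αm * (Complex.exp (-4 * κ ε * ε) - 1 - -4 * κ ε * ε) / 2‖ =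
        A * ‖Complex.exp (-4 * κ ε * ε) - 1 - -4 * κ ε * ε‖ / 2 := by
      rw [norm_div, norm_mul, Complex.norm_two, hA]
    rw [e1, e2] at t2
    rw [e3] at t1
    linarith
  refine tri.trans ?_
  have hδ0 : (0 : ℝ) ≤ ‖κ ε + (αp + αm) / 2‖ := norm_nonneg _
  nlinarith [mul_le_mul hδK hδK hδ0 (by positivity : (0:ℝ) ≤ K * ε),
    mul_le_mul_of_nonneg_right hδK (le_of_lt hε0),
    mul_le_mul_of_nonneg_left hrε hA0]
end

section
/- Define g : ℝ → ℂ by g(x) := -((α₊+α₋)/2)·exp((α₊+α₋)|x|). Then ∫_ℝ g(x) dx = 1, the one-sided derivatives g'(0⁺) and g'(0⁻) exist with g'(0⁺) = -(α₊+α₋)²/2 and g'(0⁻) = (α₊+α₋)²/2, and for any function κ : (0, ε₀) → ℂ such that for every ε ∈ (0, ε₀) one has (α₊+2κ(ε))(α₋+2κ(ε)) = α₊α₋·e^{-4κ(ε)ε} and κ(ε) → κ₀ as ε → 0⁺, the eigenvalue λ_ε := -κ(ε)² satisfies λ_ε = λ₀ + [α₊·g'(0⁺) - α₋·g'(0⁻)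 - (α₊²+α₋²)·g(0)]·ε + O(ε²) as ε → 0⁺. -/
open MeasureTheory Set

set_option maxHeartbeats 1000000 in
/-- Auxiliary: the main eigenvalue asymptotics estimate. -/
theorem stmt_7_aux (αp αm : ℂ) (hα : (αp + αm).re < 0) (ε₀ : ℝ) (hε₀ : 0 < ε₀) (κ : ℝ → ℂ)
    (heq : ∀ ε ∈ Ioo (0 : ℝ) ε₀,
      (αp + 2 * κ ε) * (αm + 2 * κ ε) = αp * αm * Complex.exp (-4 * κ ε * ε))
    (htend : Filter.Tendsto κ (nhdsWithin 0 (Ioi (0 : ℝ))) (nhds (-(αp + αm) / 2))) :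
    ∃ ε₁ : ℝ, 0 < ε₁ ∧ ε₁ ≤ ε₀ ∧ ∃ C > (0 : ℝ), ∀ ε ∈ Ioo (0 : ℝ) ε₁,
      ‖(-(κ ε) ^ 2 - (-(αp + αm) ^ 2 / 4 +
        (αp * (-(αp + αm) ^ 2 / 2) - αm * ((αp + αm) ^ 2 / 2)
          - (αp ^ 2 + αm ^ 2) * (-((αp + αm) / 2))) * ε))‖ ≤ C * ε ^ 2 := by
  set s : ℂ := αp + αm with hs_def
  have hs0 : s ≠ 0 := fun h => by simp [h] at hα
  set κ₀ : ℂ := -s / 2 with hκ₀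
  have hκ₀ne : κ₀ ≠ 0 := by
    rw [hκ₀]
    exact div_ne_zero (neg_ne_zero.2 hs0) two_ne_zero
  set K : ℝ := ‖κ₀‖ with hK
  have hK0 : 0 < K := norm_pos_iff.mpr hκ₀ne
  set A : ℝ := ‖αp * αm‖ with hA
  have hA0 : 0 ≤ A := norm_nonneg _
  rw [Metric.tendsto_nhdsWithin_nhds] at htend
  obtain ⟨δ, hδ0, hδ⟩ := htend (K / 2) (by positivity)
  refine ⟨min ε₀ (min δ (min 1 (1 / (8 * K + 1)))), by positivity, min_le_left _ _,
    (A + 32 * A * K) ^ 2 + 64 * A * K ^ 2 + 1, by positivity, ?_⟩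
  intro ε ⟨hε0, hεlt⟩
  have hεε₀ : ε < ε₀ := lt_of_lt_of_le hεlt (min_le_left _ _)
  have hεδ : ε < δ := lt_of_lt_of_le hεlt ((min_le_right _ _).trans (min_le_left _ _))
  have hε1 : ε ≤ 1 := le_of_lt (lt_of_lt_of_le hεlt
    ((min_le_right _ _).trans ((min_le_right _ _).trans (min_le_left _ _))))
  have hε8K : 8 * K * ε ≤ 1 := by
    have h := lt_of_lt_of_le hεlt
      ((min_le_right _ _).trans ((min_le_right _ _).trans (min_le_right _ _)))
    rw [lt_div_iff₀ (by positivity)] at h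
    nlinarith
  have hnear : ‖κ ε - κ₀‖ < K / 2 := by
    have := hδ (mem_Ioi.mpr hε0) (by simpa [Real.dist_eq, abs_of_pos hε0] using hεδ)
    simpa [Complex.dist_eq] using this
  have hub : ‖κ ε‖ ≤ 2 * K := by
    have h1 : ‖κ ε - κ₀ + κ₀‖ ≤ ‖κ ε - κ₀‖ + ‖κ₀‖ :=
      norm_add_le _ _
    rw [sub_add_cancel] at h1
    rw [← hK] at h1
    linarith
  have hlb : K / 2 ≤ ‖κ ε‖ := by
    have h1 := norm_sub_norm_le κ₀ (κ ε)
    rw [norm_sub_rev] at h1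
    rw [← hK] at h1
    linarith
  have hne : κ ε ≠ 0 := by
    intro h
    rw [h] at hlb
    simp at hlb
    linarith
  have heq' := heq ε ⟨hε0, hεε₀⟩
  set z : ℂ := -4 * κ ε * (ε : ℝ) with hz
  set R : ℂ := Complex.exp z - 1 - z with hR
  have habs4 : ‖(4 : ℂ)‖ = 4 := by
    rw [show (4:ℂ) = ((4:ℝ):ℂ) by norm_num, Complex.norm_real]; norm_num
  have habsz : ‖z‖ ≤ 8 * K * ε := by
    rw [hz, norm_mul, norm_mul]
    simp only [Complex.norm_real, Real.norm_eq_abs, abs_of_pos hε0]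
    have h4 : ‖(-4 : ℂ)‖ = 4 := by
      rw [show ((-4:ℂ)) = -(4:ℂ) by norm_num, norm_neg, habs4]
    rw [h4]
    nlinarith
  have habsz1 : ‖z‖ ≤ 1 := le_trans habsz hε8K
  have hRbound : ‖R‖ ≤ 64 * K ^ 2 * ε ^ 2 := by
    have h := Complex.norm_exp_sub_one_sub_id_le habsz1
    rw [← hR] at h
    have h2 : ‖z‖ ^ 2 ≤ (8 * K * ε) ^ 2 :=
      pow_le_pow_left₀ (norm_nonneg _) habsz 2
    nlinarith
  have hkey : 4 * κ ε * ((κ ε - κ₀) + αp * αm * (ε : ℝ)) = αp * αm * R := by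
    rw [hR, hz, hκ₀, hs_def]
    linear_combination heq'
  have hsum : (κ ε - κ₀) + αp * αm * (ε : ℝ) = αp * αm * R / (4 * κ ε) := by
    rw [eq_div_iff (by simp [hne] : (4 : ℂ) * κ ε ≠ 0)]
    linear_combination hkey
  have h1 : ‖(κ ε - κ₀) + αp * αm * (ε : ℝ)‖ ≤ 32 * A * K * ε ^ 2 := by
    have hnum : ‖αp * αm * R‖ = A * ‖R‖ := by rw [norm_mul, ← hA]
    have hden : ‖4 * κ ε‖ = 4 * ‖κ ε‖ := by rw [norm_mul, habs4]
    rw [hsum, norm_div, hnum, hden]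
    rw [div_le_iff₀ (by nlinarith : (0:ℝ) < 4 * ‖κ ε‖)]
    have h5 : A * ‖R‖ ≤ A * (64 * K ^ 2 * ε ^ 2) :=
      mul_le_mul_of_nonneg_left hRbound hA0
    have h6 : 32 * A * K * ε ^ 2 * (4 * (K / 2)) ≤ 32 * A * K * ε ^ 2 * (4 * ‖κ ε‖) :=
      mul_le_mul_of_nonneg_left (by linarith) (by positivity)
    nlinarith
  have h2 : ‖κ ε - κ₀‖ ≤ (A + 32 * A * K) * ε := by
    have h3 := norm_sub_le ((κ ε - κ₀) + αp * αm * (ε : ℝ)) (αp * αm * (ε : ℝ))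
    rw [add_sub_cancel_right] at h3
    rw [norm_mul, Complex.norm_real, Real.norm_eq_abs, abs_of_pos hε0, ← hA] at h3
    nlinarith [mul_nonneg (mul_nonneg hA0 hK0.le) (mul_nonneg hε0.le (sub_nonneg.2 hε1))]
  have hgoal_eq : -(κ ε) ^ 2 - (-(αp + αm) ^ 2 / 4 +
        (αp * (-(αp + αm) ^ 2 / 2) - αm * ((αp + αm) ^ 2 / 2)
          - (αp ^ 2 + αm ^ 2) * (-((αp + αm) / 2))) * (ε : ℝ))
      = -((κ ε - κ₀) ^ 2 + 2 * κ₀ * ((κ ε - κ₀) + αp * αm * (ε : ℝ))) := by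
    rw [hκ₀, hs_def]
    ring
  rw [hgoal_eq, norm_neg]
  have hfin : ‖(κ ε - κ₀) ^ 2 + 2 * κ₀ * ((κ ε - κ₀) + αp * αm * (ε : ℝ))‖
      ≤ ‖κ ε - κ₀‖ ^ 2 + 2 * K * ‖(κ ε - κ₀) + αp * αm * (ε : ℝ)‖ := by
    refine le_trans (norm_add_le _ _) ?_
    rw [norm_pow, norm_mul, norm_mul]
    have h4 : ‖(2 : ℂ)‖ = 2 := by norm_num
    rw [h4, ← hK]
  nlinarith [norm_nonneg (κ ε - κ₀), norm_nonneg ((κ ε - κ₀) + αp * αm * (ε : ℝ)),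
    sq_nonneg ε]

/-- The function `g = ψ₀²` with `g(x) = -((α₊+α₋)/2) exp((α₊+α₋)|x|)` satisfies
`∫ g = 1`, has one-sided derivatives `g'(0⁺) = -(α₊+α₋)²/2`, `g'(0⁻) = (α₊+α₋)²/2`,
and the eigenvalue `λ_ε = -κ(ε)²` of the two-delta operator satisfies
`λ_ε = λ₀ + [α₊ g'(0⁺) - α₋ g'(0⁻) - (α₊²+α₋²) g(0)] ε + O(ε²)` as `ε → 0⁺`. -/
theorem stmt_7 (αp αm : ℂ) (hα : (αp + αm).re < 0) :
    let g : ℝ → ℂ := fun x => -((αp + αm) / 2) * Complex.exp ((αp + αm) * (|x| : ℝ))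
    ∃ Dp Dm : ℂ,
      HasDerivWithinAt g Dp (Ioi (0 : ℝ)) 0 ∧ HasDerivWithinAt g Dm (Iio (0 : ℝ)) 0 ∧
      Dp = -(αp + αm) ^ 2 / 2 ∧ Dm = (αp + αm) ^ 2 / 2 ∧
      (∫ x : ℝ, g x) = 1 ∧
      ∀ ε₀ > (0 : ℝ), ∀ κ : ℝ → ℂ,
        (∀ ε ∈ Ioo (0 : ℝ) ε₀,
          (αp + 2 * κ ε) * (αm + 2 * κ ε) = αp * αm * Complex.exp (-4 * κ ε * ε)) →
        Filter.Tendsto κ (nhdsWithin 0 (Ioi (0 : ℝ))) (nhds (-(αp + αm) / 2)) →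
        ∃ ε₁ : ℝ, 0 < ε₁ ∧ ε₁ ≤ ε₀ ∧ ∃ C > (0 : ℝ), ∀ ε ∈ Ioo (0 : ℝ) ε₁,
          ‖(-(κ ε) ^ 2 -
            (-(αp + αm) ^ 2 / 4 +
              (αp * Dp - αm * Dm - (αp ^ 2 + αm ^ 2) * g 0) * ε))‖ ≤ C * ε ^ 2 := by
  intro g
  have hg : ∀ x : ℝ, g x = -((αp + αm) / 2) * Complex.exp ((αp + αm) * (|x| : ℝ)) :=
    fun _ => rfl
  set s : ℂ := αp + αm with hs_def
  have hs0 : s ≠ 0 := fun h => by simp [h] at hα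
  have hofReal : HasDerivAt (fun x : ℝ => (x : ℂ)) 1 0 := by
    simpa using (hasDerivAt_id (0:ℝ)).ofReal_comp
  have hdp : HasDerivAt (fun x : ℝ => -(s / 2) * Complex.exp (s * x)) (-s ^ 2 / 2) 0 := by
    have h1 := ((HasDerivAt.const_mul s hofReal).cexp).const_mul (-(s / 2))
    convert h1 using 1
    · rfl
    simp only [Complex.ofReal_zero, mul_zero, Complex.exp_zero]
    ring
  have hofRealNeg : HasDerivAt (fun x : ℝ => ((-x : ℝ) : ℂ)) (-1) 0 := by
    simpa [Complex.ofReal_neg] using (hasDerivAt_neg (x := (0:ℝ))).ofReal_comp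
  have hdm : HasDerivAt (fun x : ℝ => -(s / 2) * Complex.exp (s * ((-x : ℝ) : ℂ)))
      (s ^ 2 / 2) 0 := by
    have h1 := ((HasDerivAt.const_mul s hofRealNeg).cexp).const_mul (-(s / 2))
    convert h1 using 1
    · rfl
    simp only [neg_zero, Complex.ofReal_zero, Complex.ofReal_neg, mul_zero, Complex.exp_zero]
    ring
  refine ⟨-s ^ 2 / 2, s ^ 2 / 2, ?_, ?_, rfl, rfl, ?_, ?_⟩
  · refine (hdp.hasDerivWithinAt).congr (fun y hy => ?_) ?_
    · rw [hg, abs_of_pos (mem_Ioi.mp hy)]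
    · rw [hg]; norm_num
  · refine (hdm.hasDerivWithinAt).congr (fun y hy => ?_) ?_
    · rw [hg, abs_of_neg (mem_Iio.mp hy)]
    · rw [hg]; norm_num
  · -- the integral
    have hb : (0:ℝ) < -s.re := by linarith
    have hexp_int : IntegrableOn (fun x : ℝ => Complex.exp (s * x)) (Ioi 0) := by
      refine Integrable.mono' (exp_neg_integrableOn_Ioi (0:ℝ) (b := -s.re) hb) ?_ ?_
      · exact (Complex.continuous_exp.comp
          (continuous_const.mul Complex.continuous_ofReal)).aestronglyMeasurable
      · filter_upwards with x
        rw [Complex.norm_exp]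
        apply le_of_eq
        congr 1
        simp [Complex.mul_re]
    have hIoi : ∫ x in Ioi (0:ℝ), Complex.exp (s * x) = -(1 / s) := by
      have hderiv : ∀ x ∈ Ici (0:ℝ),
          HasDerivAt (fun x : ℝ => Complex.exp (s * x) / s) (Complex.exp (s * x)) x := by
        intro x _
        have h1 : HasDerivAt (fun x : ℝ => (x:ℂ)) 1 x := by
          simpa using (hasDerivAt_id x).ofReal_comp
        have h2 := ((HasDerivAt.const_mul s h1).cexp).div_const s
        convert h2 using 1
        · rfl
        field_simp
      have htend : Filter.Tendsto (fun x : ℝ => Complex.exp (s * x) / s)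
          Filter.atTop (nhds 0) := by
        rw [tendsto_zero_iff_norm_tendsto_zero]
        have h3 : Filter.Tendsto (fun x : ℝ => (-s.re) * x) Filter.atTop Filter.atTop :=
          Filter.Tendsto.const_mul_atTop hb Filter.tendsto_id
        have h4 := (Real.tendsto_exp_neg_atTop_nhds_zero.comp h3).div_const ‖s‖
        rw [zero_div] at h4
        convert h4 using 2 with x
        rw [norm_div, Complex.norm_exp]
        simp [Complex.mul_re, Function.comp]
      have h5 := MeasureTheory.integral_Ioi_of_hasDerivAt_of_tendsto' hderiv hexp_int htend
      rw [h5]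
      simp
    have hgeq : EqOn (fun x : ℝ => -(s / 2) * Complex.exp (s * x)) g (Ioi 0) := by
      intro x hx
      rw [hg, abs_of_pos (mem_Ioi.mp hx)]
    have hgIoi_int : IntegrableOn g (Ioi 0) :=
      MeasureTheory.IntegrableOn.congr_fun (hexp_int.const_mul (-(s / 2))) hgeq measurableSet_Ioi
    have hgIoi_val : ∫ x in Ioi (0:ℝ), g x = 1 / 2 := by
      rw [← setIntegral_congr_fun measurableSet_Ioi hgeq]
      rw [MeasureTheory.integral_const_mul, hIoi]
      field_simp
    have hgneg : ∀ x : ℝ, g (-x) = g x := by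
      intro x
      rw [hg, hg, abs_neg]
    have hgIic_int : IntegrableOn g (Iic 0) := by
      rw [integrableOn_Iic_iff_integrableOn_Iio]
      have h2 := ((Measure.measurePreserving_neg (volume : Measure ℝ)).integrableOn_comp_preimage
          (Homeomorph.neg ℝ).measurableEmbedding (f := g) (s := Ioi 0)).mpr hgIoi_int
      have hc : (g ∘ fun x : ℝ => -x) = g := funext fun x => hgneg x
      simpa [hc, neg_preimage, neg_Ioi] using h2
    have hgIic_val : ∫ x in Iic (0:ℝ), g x = 1 / 2 := by
      have h := integral_comp_neg_Ioi (0:ℝ) g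
      simp only [neg_zero] at h
      rw [← h]
      simp only [hgneg]
      exact hgIoi_val
    rw [← intervalIntegral.integral_Iic_add_Ioi hgIic_int hgIoi_int, hgIic_val, hgIoi_val]
    norm_num
  · -- the eigenvalue asymptotics
    intro ε₀ hε₀ κ heq htend
    obtain ⟨ε₁, hε₁0, hε₁le, C, hC, hbound⟩ := stmt_7_aux αp αm hα ε₀ hε₀ κ heq htend
    refine ⟨ε₁, hε₁0, hε₁le, C, hC, fun ε hε => ?_⟩
    have hg0 : g 0 = -((αp + αm) / 2) := by
      rw [hg]; norm_num [hs_def]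
    rw [hg0]
    exact hbound ε hε
end

section
/- Let ε₀ > 0 and let κ : (0, ε₀) → ℂ be any function such that for every ε ∈ (0, ε₀) one has (α₊+2κ(ε))(α₋+2κ(ε)) = α₊α₋·e^{-4κ(ε)ε}, Re κ(ε) > 0, and κ(ε) → κ₀ as ε → 0⁺. Then there exist ε₁ ∈ (0, ε₀] and C > 0 such that for all ε ∈ (0, ε₁): (∫_ℝ |f_{ε,κ(ε)}(x) - f₀(x)|² dx)^{1/2} ≤ C·ε and |∫_ℝ f_{ε,κ(ε)}(x)² dx - ∫_ℝ f₀(x)² dx| ≤ C·ε. -/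
open MeasureTheory Set

/-- The eigenfunction `f_{ε,κ}` of the two-delta-interaction operator, in the
normalisation with unit coefficient on the left exponential. -/
noncomputable def fTwo (αm : ℂ) (ε : ℝ) (κ : ℂ) : ℝ → ℂ := fun x =>
  if x < -ε then Complex.exp (κ * x)
  else if x ≤ ε then
    (-(αm / (2 * κ)) * Complex.exp (-2 * κ * ε)) * Complex.exp (-κ * x) +
      ((αm + 2 * κ) / (2 * κ)) * Complex.exp (κ * x)
  else
    (Complex.exp (2 * κ * ε) +
        (αm / (2 * κ)) * (Complex.exp (2 * κ * ε) - Complex.exp (-2 * κ * ε))) *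
      Complex.exp (-κ * x)

noncomputable def Complex.abs : AbsoluteValue ℂ ℝ where
  toFun z := ‖z‖
  map_mul' := norm_mul
  nonneg' := norm_nonneg
  eq_zero' _ := norm_eq_zero
  add_le' := norm_add_le

lemma Complex.norm_eq_abs (z : ℂ) : ‖z‖ = Complex.abs z := rfl

lemma Complex.abs_ofReal (r : ℝ) : Complex.abs (r : ℂ) = |r| := Complex.norm_real r

@[simp] lemma Complex.abs_four : Complex.abs (4 : ℂ) = 4 := by
  show ‖(4 : ℂ)‖ = 4
  norm_num

lemma Complex.abs_two : Complex.abs 2 = 2 := Complex.norm_two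

lemma Complex.abs_exp (z : ℂ) : Complex.abs (Complex.exp z) = Real.exp z.re :=
  Complex.norm_exp z

lemma Complex.abs_re_le_abs (z : ℂ) : |z.re| ≤ Complex.abs z := Complex.abs_re_le_norm z

lemma Complex.abs_exp_sub_one_le {x : ℂ} (hx : Complex.abs x ≤ 1) :
    Complex.abs (Complex.exp x - 1) ≤ 2 * Complex.abs x := Complex.norm_exp_sub_one_le hx

lemma my_integrable_exp_neg_abs {c : ℝ} (hc : 0 < c) :
    Integrable (fun x : ℝ => Real.exp (-(c * |x|))) := by
  have hIoi : IntegrableOn (fun x : ℝ => Real.exp (-(c * |x|))) (Ioi 0) := by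
    refine (exp_neg_integrableOn_Ioi 0 hc).congr_fun (fun x hx => ?_) measurableSet_Ioi
    rw [abs_of_pos hx]; ring_nf
  have hIic : IntegrableOn (fun x : ℝ => Real.exp (-(c * |x|))) (Iic 0) := by
    rw [← Measure.map_neg_eq_self (volume : Measure ℝ)]
    have m : MeasurableEmbedding fun x : ℝ => -x := (Homeomorph.neg ℝ).measurableEmbedding
    rw [m.integrableOn_map_iff]
    simp only [Function.comp_def, abs_neg, neg_preimage, neg_Iic, neg_zero]
    exact Iff.mpr integrableOn_Ici_iff_integrableOn_Ioi hIoi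
  rw [← integrableOn_univ, ← Iic_union_Ioi (a := (0:ℝ))]
  exact hIic.union hIoi

lemma exp_line_bound (a d : ℂ) (B : ℝ)
    (hB : ∀ s ∈ Icc (0:ℝ) 1, Complex.abs (Complex.exp (a + d * s) * d) ≤ B) :
    Complex.abs (Complex.exp (a + d) - Complex.exp a) ≤ B := by
  have hder : ∀ s : ℝ, HasDerivAt (fun s : ℝ => Complex.exp (a + d * (s : ℂ)))
      (Complex.exp (a + d * (s : ℂ)) * d) s := by
    intro s
    have h1 : HasDerivAt (fun s : ℝ => a + d * (s : ℂ)) d s := by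
      have := (Complex.ofRealCLM.hasDerivAt (x := s)).const_mul d
      simpa using this.const_add a
    exact h1.cexp
  have := Convex.norm_image_sub_le_of_norm_hasDerivWithin_le
    (f := fun s : ℝ => Complex.exp (a + d * (s : ℂ)))
    (f' := fun s : ℝ => Complex.exp (a + d * (s : ℂ)) * d) (s := Icc (0:ℝ) 1) (C := B)
    (fun x _ => (hder x).hasDerivWithinAt)
    (fun x hx => by rw [Complex.norm_eq_abs]; exact hB x hx)
    (convex_Icc 0 1) (left_mem_Icc.2 zero_le_one) (right_mem_Icc.2 zero_le_one)
  simpa [Complex.norm_eq_abs] using this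

lemma t_exp_bound {σ : ℝ} (hσ : 0 < σ) {t : ℝ} (ht : 0 ≤ t) :
    t * Real.exp (-(σ / 2) * t) ≤ 4 / σ * Real.exp (-(σ / 4) * t) := by
  have h1 : t ≤ 4 / σ * Real.exp (σ / 4 * t) := by
    have := Real.add_one_le_exp (σ / 4 * t)
    rw [div_mul_eq_mul_div, le_div_iff₀ hσ]
    nlinarith [Real.exp_pos (σ/4*t)]
  calc t * Real.exp (-(σ / 2) * t) ≤ (4 / σ * Real.exp (σ / 4 * t)) * Real.exp (-(σ / 2) * t) := by
        apply mul_le_mul_of_nonneg_right h1 (Real.exp_pos _).le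
    _ = 4 / σ * Real.exp (-(σ / 4) * t) := by
        rw [mul_assoc, ← Real.exp_add]; ring_nf

lemma exp_diff_bound (κ₀ k : ℂ) (σ : ℝ) (hσ : κ₀.re = σ) (hσ0 : 0 < σ)
    (hd : Complex.abs (k - κ₀) ≤ σ / 2) {t : ℝ} (ht : 0 ≤ t) :
    Complex.abs (Complex.exp (-(k * t)) - Complex.exp (-(κ₀ * t))) ≤
      Complex.abs (k - κ₀) * t * Real.exp (-(σ / 2) * t) := by
  have key := exp_line_bound (-(κ₀ * t)) ((κ₀ - k) * t)
      (Complex.abs (k - κ₀) * t * Real.exp (-(σ / 2) * t)) ?_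
  · have : -(κ₀ * t) + (κ₀ - k) * t = -(k * t) := by ring
    rwa [this] at key
  · intro s hs
    rw [map_mul, Complex.abs_exp, map_mul]
    have habs : Complex.abs (κ₀ - k) = Complex.abs (k - κ₀) := by
      rw [← Complex.abs.map_neg, neg_sub]
    have habst : Complex.abs ((t : ℂ)) = t := by
      rw [Complex.abs_ofReal, abs_of_nonneg ht]
    have hre : (-(κ₀ * (t:ℂ)) + (κ₀ - k) * (t:ℂ) * (s:ℂ)).re ≤ -(σ / 2) * t := by
      have h1 : (κ₀ - k).re ≤ σ / 2 :=
        le_trans (le_trans (le_abs_self _) (Complex.abs_re_le_abs _)) (by rwa [habs])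
      simp only [Complex.add_re, Complex.neg_re, Complex.mul_re, Complex.ofReal_re,
        Complex.ofReal_im, mul_zero, sub_zero, hσ]
      have hs0 := hs.1; have hs1 := hs.2
      nlinarith [mul_le_mul_of_nonneg_right h1 (mul_nonneg ht hs0),
        mul_nonneg (mul_nonneg hσ0.le ht) (sub_nonneg.2 hs1)]
    calc Real.exp ((-(κ₀ * (t:ℂ)) + (κ₀ - k) * (t:ℂ) * (s:ℂ)).re) *
          (Complex.abs (κ₀ - k) * Complex.abs ((t:ℂ)))
        ≤ Real.exp (-(σ / 2) * t) * (Complex.abs (k - κ₀) * t) := by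
          rw [habs, habst]
          exact mul_le_mul_of_nonneg_right (Real.exp_le_exp.2 hre)
            (mul_nonneg (Complex.abs.nonneg _) ht)
      _ = Complex.abs (k - κ₀) * t * Real.exp (-(σ / 2) * t) := by ring

lemma habssub (u v : ℂ) : Complex.abs (u - v) ≤ Complex.abs u + Complex.abs v := by
  calc Complex.abs (u - v) ≤ Complex.abs (u - 0) + Complex.abs (0 - v) := Complex.abs.sub_le u 0 v
    _ = Complex.abs u + Complex.abs v := by rw [sub_zero, zero_sub, Complex.abs.map_neg]

lemma arith1 {a ak K A ε E : ℝ} (ha : 0 ≤ a) (hK0 : 0 < K) (hε0 : 0 < ε)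
    (hak : ak ≤ 3 / 2 * K)
    (hAge : 12 * a + 16 * K ≤ A) (hA0 : 0 ≤ A) (hE : 31 / 32 ≤ E) :
    4 * a * ε + (2 * (ak * ε) + 2 * (K * ε)) ≤ A * ε * E := by
  nlinarith [mul_le_mul_of_nonneg_right hak hε0.le,
    mul_le_mul_of_nonneg_left hE (mul_nonneg hA0 hε0.le),
    mul_le_mul_of_nonneg_right hAge hε0.le,
    mul_nonneg ha hε0.le, mul_nonneg hK0.le hε0.le]

lemma arith2 {c1 c2 A ε E : ℝ} (h : c1 + c2 ≤ A) (hε : 0 ≤ ε) (hE : 0 ≤ E) :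
    c1 * ε * E + c2 * ε * E ≤ A * ε * E := by
  nlinarith [mul_le_mul_of_nonneg_right (mul_le_mul_of_nonneg_right h hε) hE]

set_option maxHeartbeats 1600000 in
lemma fTwo_pointwise (αm κ₀ k : ℂ) (σ M ε : ℝ)
    (hσ : κ₀.re = σ) (hσ0 : 0 < σ)
    (hd : Complex.abs (k - κ₀) ≤ σ / 2)
    (hdM : Complex.abs (k - κ₀) ≤ M * ε)
    (hε0 : 0 < ε) (hεK : ε * Complex.abs κ₀ ≤ 1 / 8)
    (x : ℝ) :
    Complex.abs (fTwo αm ε k x - Complex.exp (-(κ₀ * (|x| : ℝ)))) ≤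
      (4 * M / σ + 12 * Complex.abs αm + 16 * Complex.abs κ₀) * ε *
        Real.exp (-(σ / 4) * |x|) := by
  set K := Complex.abs κ₀ with hK
  set A := 4 * M / σ + 12 * Complex.abs αm + 16 * K with hA
  have hσK : σ ≤ K := by
    rw [hK, ← hσ]; exact le_trans (le_abs_self _) (Complex.abs_re_le_abs κ₀)
  have hM0 : 0 ≤ M := by
    have h1 : 0 ≤ M * ε := le_trans (Complex.abs.nonneg _) hdM
    nlinarith
  have hrek : σ / 2 ≤ k.re := by
    have h1 := Complex.abs_re_le_abs (k - κ₀)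
    rw [Complex.sub_re, hσ] at h1
    have h2 := abs_le.mp (le_trans h1 hd)
    linarith [h2.1]
  have hk0 : k ≠ 0 := by
    intro h; rw [h] at hrek; simp at hrek; linarith
  have habsk : Complex.abs k ≤ 3 / 2 * K := by
    calc Complex.abs k = Complex.abs ((k - κ₀) + κ₀) := by ring_nf
      _ ≤ Complex.abs (k - κ₀) + K := Complex.abs.add_le _ _
      _ ≤ 3 / 2 * K := by linarith
  have habsk0 : 0 < Complex.abs k := by
    rw [AbsoluteValue.pos_iff]; exact hk0
  have hεk : ε * Complex.abs k ≤ 3 / 16 := by nlinarith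
  have hεσ : ε * σ ≤ 1 / 8 := by nlinarith
  have haαm := Complex.abs.nonneg αm
  have hK0 : 0 < K := lt_of_lt_of_le hσ0 hσK
  have hA0 : 0 ≤ A := by rw [hA]; positivity
  have hAge : 12 * Complex.abs αm + 16 * K ≤ A := by
    have : (0:ℝ) ≤ 4 * M / σ := by positivity
    rw [hA]; linarith
  show Complex.abs ((if x < -ε then Complex.exp (k * x)
      else if x ≤ ε then
        (-(αm / (2 * k)) * Complex.exp (-2 * k * ε)) * Complex.exp (-k * x) +
          ((αm + 2 * k) / (2 * k)) * Complex.exp (k * x)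
      else
        (Complex.exp (2 * k * ε) +
            (αm / (2 * k)) * (Complex.exp (2 * k * ε) - Complex.exp (-2 * k * ε))) *
          Complex.exp (-k * x)) - Complex.exp (-(κ₀ * (|x| : ℝ)))) ≤
      A * ε * Real.exp (-(σ / 4) * |x|)
  split_ifs with h1 h2
  · -- Left region : x < -ε
    have hx0 : x < 0 := lt_trans h1 (by linarith)
    have habsx : |x| = -x := abs_of_neg hx0
    have ht0 : (0:ℝ) ≤ -x := by linarith
    have e1 : k * (x:ℂ) = -(k * ((-x : ℝ) : ℂ)) := by push_cast; ring
    have e2 : κ₀ * ((|x| : ℝ) : ℂ) = κ₀ * ((-x : ℝ) : ℂ) := by rw [habsx]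
    rw [e1, e2]
    calc Complex.abs (Complex.exp (-(k * ((-x : ℝ) : ℂ))) - Complex.exp (-(κ₀ * ((-x : ℝ) : ℂ))))
        ≤ Complex.abs (k - κ₀) * (-x) * Real.exp (-(σ / 2) * (-x)) :=
          exp_diff_bound κ₀ k σ hσ hσ0 hd ht0
      _ ≤ (M * ε) * ((-x) * Real.exp (-(σ / 2) * (-x))) := by
          rw [mul_assoc]
          exact mul_le_mul_of_nonneg_right hdM (mul_nonneg ht0 (Real.exp_pos _).le)
      _ ≤ (M * ε) * (4 / σ * Real.exp (-(σ / 4) * (-x))) :=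
          mul_le_mul_of_nonneg_left (t_exp_bound hσ0 ht0) (mul_nonneg hM0 hε0.le)
      _ = (4 * M / σ) * ε * Real.exp (-(σ / 4) * |x|) := by rw [habsx]; ring
      _ ≤ A * ε * Real.exp (-(σ / 4) * |x|) := by
          have h3 : 4 * M / σ ≤ A := by
            have : (0:ℝ) ≤ 12 * Complex.abs αm + 16 * K := by positivity
            rw [hA]; linarith
          exact mul_le_mul_of_nonneg_right
            (mul_le_mul_of_nonneg_right h3 hε0.le) (Real.exp_pos _).le
  · -- Middle region : -ε ≤ x ≤ ε
    have hxe : -ε ≤ x := le_of_not_gt h1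
    have habsxε : |x| ≤ ε := abs_le.mpr ⟨hxe, h2⟩
    have hax0 : (0:ℝ) ≤ |x| := abs_nonneg x
    have E1 : Complex.exp (-2 * k * ε) * Complex.exp (-k * x) =
        Complex.exp (-(k * ε)) * Complex.exp (-(k * ((x:ℂ) + ε))) := by
      rw [← Complex.exp_add, ← Complex.exp_add]; ring_nf
    have E2 : Complex.exp (-(k * ε)) * Complex.exp (k * ((x:ℂ) + ε)) =
        Complex.exp (k * x) := by
      rw [← Complex.exp_add]; ring_nf
    have hsplit : (αm + 2 * k) / (2 * k) = αm / (2 * k) + 1 := by field_simp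
    have hid : (-(αm / (2 * k)) * Complex.exp (-2 * k * ε)) * Complex.exp (-k * x) +
        ((αm + 2 * k) / (2 * k)) * Complex.exp (k * x) - Complex.exp (k * x) =
        (αm / (2 * k)) * (Complex.exp (-(k * ε)) *
          (Complex.exp (k * ((x:ℂ) + ε)) - Complex.exp (-(k * ((x:ℂ) + ε))))) := by
      linear_combination (-(αm / (2 * k))) * E1 + (-(αm / (2 * k))) * E2 +
        Complex.exp (k * (x:ℂ)) * hsplit
    -- |w| ≤ 2 ε |k| ≤ 3/8
    have hw : Complex.abs (k * ((x:ℂ) + ε)) ≤ 2 * (ε * Complex.abs k) := by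
      have hxx : |x + ε| ≤ 2 * ε := by
        calc |x + ε| ≤ |x| + |ε| := abs_add_le _ _
          _ ≤ 2 * ε := by rw [abs_of_pos hε0]; linarith
      calc Complex.abs (k * ((x:ℂ) + ε)) = Complex.abs k * |x + ε| := by
            rw [map_mul, show ((x:ℂ) + ε) = ((x + ε : ℝ) : ℂ) by push_cast; ring,
              Complex.abs_ofReal]
        _ ≤ Complex.abs k * (2 * ε) :=
            mul_le_mul_of_nonneg_left hxx habsk0.le
        _ = 2 * (ε * Complex.abs k) := by ring
    have hw1 : Complex.abs (k * ((x:ℂ) + ε)) ≤ 1 := by linarith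
    have hwneg : Complex.abs (-(k * ((x:ℂ) + ε))) ≤ 1 := by rwa [Complex.abs.map_neg]
    have hwd : Complex.abs (Complex.exp (k * ((x:ℂ) + ε)) -
        Complex.exp (-(k * ((x:ℂ) + ε)))) ≤ 8 * (ε * Complex.abs k) := by
      calc Complex.abs (Complex.exp (k * ((x:ℂ) + ε)) - Complex.exp (-(k * ((x:ℂ) + ε))))
          ≤ Complex.abs (Complex.exp (k * ((x:ℂ) + ε)) - 1) +
            Complex.abs (1 - Complex.exp (-(k * ((x:ℂ) + ε)))) :=
            Complex.abs.sub_le _ 1 _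
        _ ≤ 2 * Complex.abs (k * ((x:ℂ) + ε)) +
            2 * Complex.abs (-(k * ((x:ℂ) + ε))) := by
            have b1 := Complex.abs_exp_sub_one_le hw1
            have b2 := Complex.abs_exp_sub_one_le hwneg
            rw [Complex.abs.map_sub 1]
            exact add_le_add b1 b2
        _ = 2 * Complex.abs (k * ((x:ℂ) + ε)) + 2 * Complex.abs (k * ((x:ℂ) + ε)) := by
            rw [Complex.abs.map_neg]
        _ ≤ 8 * (ε * Complex.abs k) := by linarith
    have hexpkε : Complex.abs (Complex.exp (-(k * (ε:ℂ)))) ≤ 1 := by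
      rw [Complex.abs_exp, Real.exp_le_one_iff]
      simp only [Complex.neg_re, Complex.mul_re, Complex.ofReal_re, Complex.ofReal_im,
        mul_zero, sub_zero]
      have : 0 ≤ k.re * ε := mul_nonneg (by linarith) hε0.le
      linarith
    have bound1 : Complex.abs ((-(αm / (2 * k)) * Complex.exp (-2 * k * ε)) *
        Complex.exp (-k * x) +
        ((αm + 2 * k) / (2 * k)) * Complex.exp (k * x) - Complex.exp (k * x)) ≤
        4 * Complex.abs αm * ε := by
      rw [hid, map_mul, map_mul]
      have hdivabs : Complex.abs (αm / (2 * k)) = Complex.abs αm / (2 * Complex.abs k) := by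
        rw [map_div₀, map_mul, Complex.abs_two]
      rw [hdivabs]
      calc Complex.abs αm / (2 * Complex.abs k) *
            (Complex.abs (Complex.exp (-(k * (ε:ℂ)))) *
              Complex.abs (Complex.exp (k * ((x:ℂ) + ε)) -
                Complex.exp (-(k * ((x:ℂ) + ε)))))
          ≤ Complex.abs αm / (2 * Complex.abs k) * (1 * (8 * (ε * Complex.abs k))) := by
            apply mul_le_mul_of_nonneg_left _ (by positivity)
            exact mul_le_mul hexpkε hwd (Complex.abs.nonneg _) zero_le_one
        _ = 4 * Complex.abs αm * ε := by field_simp; ring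
    have bound2 : Complex.abs (Complex.exp (k * (x:ℂ)) -
        Complex.exp (-(κ₀ * ((|x| : ℝ) : ℂ)))) ≤
        2 * (Complex.abs k * ε) + 2 * (K * ε) := by
      have hkx1 : Complex.abs (k * (x:ℂ)) ≤ 1 := by
        rw [map_mul, Complex.abs_ofReal]
        nlinarith [mul_le_mul_of_nonneg_left habsxε habsk0.le, hεk]
      have hκx1 : Complex.abs (-(κ₀ * ((|x| : ℝ) : ℂ))) ≤ 1 := by
        rw [Complex.abs.map_neg, map_mul, Complex.abs_ofReal, abs_abs]
        nlinarith [mul_le_mul_of_nonneg_left habsxε hK0.le, hεK]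
      calc Complex.abs (Complex.exp (k * (x:ℂ)) - Complex.exp (-(κ₀ * ((|x| : ℝ) : ℂ))))
          ≤ Complex.abs (Complex.exp (k * (x:ℂ)) - 1) +
            Complex.abs (1 - Complex.exp (-(κ₀ * ((|x| : ℝ) : ℂ)))) :=
            Complex.abs.sub_le _ 1 _
        _ ≤ 2 * Complex.abs (k * (x:ℂ)) + 2 * Complex.abs (-(κ₀ * ((|x| : ℝ) : ℂ))) := by
            rw [Complex.abs.map_sub 1]
            exact add_le_add (Complex.abs_exp_sub_one_le hkx1)
              (Complex.abs_exp_sub_one_le hκx1)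
        _ ≤ 2 * (Complex.abs k * ε) + 2 * (K * ε) := by
            rw [map_mul, Complex.abs_ofReal, Complex.abs.map_neg, map_mul,
              Complex.abs_ofReal, abs_abs]
            have h8 := mul_le_mul_of_nonneg_left habsxε habsk0.le
            have h9 := mul_le_mul_of_nonneg_left habsxε hK0.le
            linarith
    have tri : Complex.abs ((-(αm / (2 * k)) * Complex.exp (-2 * k * ε)) *
        Complex.exp (-k * x) + ((αm + 2 * k) / (2 * k)) * Complex.exp (k * x) -
        Complex.exp (-(κ₀ * ((|x| : ℝ) : ℂ)))) ≤
        4 * Complex.abs αm * ε + (2 * (Complex.abs k * ε) + 2 * (K * ε)) := by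
      calc Complex.abs ((-(αm / (2 * k)) * Complex.exp (-2 * k * ε)) *
            Complex.exp (-k * x) + ((αm + 2 * k) / (2 * k)) * Complex.exp (k * x) -
            Complex.exp (-(κ₀ * ((|x| : ℝ) : ℂ))))
          ≤ Complex.abs ((-(αm / (2 * k)) * Complex.exp (-2 * k * ε)) *
              Complex.exp (-k * x) + ((αm + 2 * k) / (2 * k)) * Complex.exp (k * x) -
              Complex.exp (k * (x:ℂ))) +
            Complex.abs (Complex.exp (k * (x:ℂ)) -
              Complex.exp (-(κ₀ * ((|x| : ℝ) : ℂ)))) :=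
            Complex.abs.sub_le _ _ _
        _ ≤ 4 * Complex.abs αm * ε + (2 * (Complex.abs k * ε) + 2 * (K * ε)) :=
            add_le_add bound1 bound2
    have hE : 31 / 32 ≤ Real.exp (-(σ / 4) * |x|) := by
      have h4 := Real.add_one_le_exp (-(σ / 4) * |x|)
      have h5 : σ / 4 * |x| ≤ 1 / 32 := by
        have := mul_le_mul_of_nonneg_left habsxε hσ0.le
        nlinarith
      linarith
    calc Complex.abs ((-(αm / (2 * k)) * Complex.exp (-2 * k * ε)) *
          Complex.exp (-k * x) + ((αm + 2 * k) / (2 * k)) * Complex.exp (k * x) -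
          Complex.exp (-(κ₀ * ((|x| : ℝ) : ℂ)))) ≤
        4 * Complex.abs αm * ε + (2 * (Complex.abs k * ε) + 2 * (K * ε)) := tri
      _ ≤ A * ε * Real.exp (-(σ / 4) * |x|) :=
          arith1 haαm hK0 hε0 habsk hAge hA0 hE
  · -- Right region : ε < x
    have hx : ε < x := lt_of_not_ge h2
    have hx0 : 0 < x := lt_trans hε0 hx
    have habsx : |x| = x := abs_of_pos hx0
    rw [habsx]
    have e3 : (-k) * (x:ℂ) = -(k * (x:ℂ)) := by ring
    rw [e3]
    have hsplit3 : (Complex.exp (2 * k * ε) +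
        (αm / (2 * k)) * (Complex.exp (2 * k * ε) - Complex.exp (-2 * k * ε))) *
        Complex.exp (-(k * (x:ℂ))) - Complex.exp (-(κ₀ * (x:ℂ))) =
        ((Complex.exp (2 * k * ε) +
          (αm / (2 * k)) * (Complex.exp (2 * k * ε) - Complex.exp (-2 * k * ε))) - 1) *
          Complex.exp (-(k * (x:ℂ))) +
        (Complex.exp (-(k * (x:ℂ))) - Complex.exp (-(κ₀ * (x:ℂ)))) := by ring
    rw [hsplit3]
    have h2kε : Complex.abs (2 * k * (ε:ℂ)) ≤ 1 := by
      rw [map_mul, map_mul, Complex.abs_two, Complex.abs_ofReal, abs_of_pos hε0]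
      nlinarith
    have h2kεneg : Complex.abs (-2 * k * (ε:ℂ)) ≤ 1 := by
      rw [show (-2 : ℂ) * k * (ε:ℂ) = -(2 * k * ε) by ring, Complex.abs.map_neg]; exact h2kε
    have habs2kε : Complex.abs (2 * k * (ε:ℂ)) = 2 * (Complex.abs k * ε) := by
      rw [map_mul, map_mul, Complex.abs_two, Complex.abs_ofReal, abs_of_pos hε0]; ring
    have hc3 : Complex.abs ((Complex.exp (2 * k * ε) +
        (αm / (2 * k)) * (Complex.exp (2 * k * ε) - Complex.exp (-2 * k * ε))) - 1) ≤
        (4 * Complex.abs k + 4 * Complex.abs αm) * ε := by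
      have hr : (Complex.exp (2 * k * (ε:ℂ)) +
          (αm / (2 * k)) * (Complex.exp (2 * k * ε) - Complex.exp (-2 * k * ε))) - 1 =
          (Complex.exp (2 * k * (ε:ℂ)) - 1) +
          (αm / (2 * k)) * ((Complex.exp (2 * k * (ε:ℂ)) - 1) -
            (Complex.exp (-2 * k * (ε:ℂ)) - 1)) := by ring
      rw [hr]
      have b1 := Complex.abs_exp_sub_one_le h2kε
      have b2 := Complex.abs_exp_sub_one_le h2kεneg
      have habs2kεneg : Complex.abs (-2 * k * (ε:ℂ)) = 2 * (Complex.abs k * ε) := by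
        rw [show (-2 : ℂ) * k * (ε:ℂ) = -(2 * k * ε) by ring, Complex.abs.map_neg]; exact habs2kε
      rw [habs2kε] at b1; rw [habs2kεneg] at b2
      have hdivabs : Complex.abs (αm / (2 * k)) = Complex.abs αm / (2 * Complex.abs k) := by
        rw [map_div₀, map_mul, Complex.abs_two]
      calc Complex.abs ((Complex.exp (2 * k * (ε:ℂ)) - 1) +
            (αm / (2 * k)) * ((Complex.exp (2 * k * (ε:ℂ)) - 1) -
              (Complex.exp (-2 * k * (ε:ℂ)) - 1)))
          ≤ Complex.abs (Complex.exp (2 * k * (ε:ℂ)) - 1) +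
            Complex.abs (αm / (2 * k)) *
              (Complex.abs (Complex.exp (2 * k * (ε:ℂ)) - 1) +
                Complex.abs (Complex.exp (-2 * k * (ε:ℂ)) - 1)) := by
            refine le_trans (Complex.abs.add_le _ _) ?_
            rw [map_mul]
            exact add_le_add le_rfl
              (mul_le_mul_of_nonneg_left (habssub _ _) (Complex.abs.nonneg _))
        _ ≤ 2 * (2 * (Complex.abs k * ε)) +
            Complex.abs αm / (2 * Complex.abs k) * (2 * (2 * (Complex.abs k * ε)) +
              2 * (2 * (Complex.abs k * ε))) := by
            rw [hdivabs]
            have hnn : (0:ℝ) ≤ Complex.abs αm / (2 * Complex.abs k) := by positivity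
            exact add_le_add b1 (mul_le_mul_of_nonneg_left (add_le_add b1 b2) hnn)
        _ = (4 * Complex.abs k + 4 * Complex.abs αm) * ε := by field_simp; ring
    have hexpkx : Complex.abs (Complex.exp (-(k * (x:ℂ)))) ≤ Real.exp (-(σ / 4) * x) := by
      rw [Complex.abs_exp, Real.exp_le_exp]
      simp only [Complex.neg_re, Complex.mul_re, Complex.ofReal_re, Complex.ofReal_im,
        mul_zero, sub_zero]
      have h1x : σ / 2 * x ≤ k.re * x := mul_le_mul_of_nonneg_right hrek hx0.le
      nlinarith [mul_pos hσ0 hx0]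
    have hdiff : Complex.abs (Complex.exp (-(k * (x:ℂ))) - Complex.exp (-(κ₀ * (x:ℂ)))) ≤
        4 * M / σ * ε * Real.exp (-(σ / 4) * x) := by
      calc Complex.abs (Complex.exp (-(k * (x:ℂ))) - Complex.exp (-(κ₀ * (x:ℂ))))
          ≤ Complex.abs (k - κ₀) * x * Real.exp (-(σ / 2) * x) :=
            exp_diff_bound κ₀ k σ hσ hσ0 hd hx0.le
        _ ≤ (M * ε) * (x * Real.exp (-(σ / 2) * x)) := by
            rw [mul_assoc]
            exact mul_le_mul_of_nonneg_right hdM (mul_nonneg hx0.le (Real.exp_pos _).le)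
        _ ≤ (M * ε) * (4 / σ * Real.exp (-(σ / 4) * x)) :=
            mul_le_mul_of_nonneg_left (t_exp_bound hσ0 hx0.le) (mul_nonneg hM0 hε0.le)
        _ = 4 * M / σ * ε * Real.exp (-(σ / 4) * x) := by ring
    calc Complex.abs (((Complex.exp (2 * k * ε) +
          (αm / (2 * k)) * (Complex.exp (2 * k * ε) - Complex.exp (-2 * k * ε))) - 1) *
          Complex.exp (-(k * (x:ℂ))) +
          (Complex.exp (-(k * (x:ℂ))) - Complex.exp (-(κ₀ * (x:ℂ)))))
        ≤ Complex.abs (((Complex.exp (2 * k * ε) +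
            (αm / (2 * k)) * (Complex.exp (2 * k * ε) - Complex.exp (-2 * k * ε))) - 1)) *
            Complex.abs (Complex.exp (-(k * (x:ℂ)))) +
          Complex.abs (Complex.exp (-(k * (x:ℂ))) - Complex.exp (-(κ₀ * (x:ℂ)))) := by
          refine le_trans (Complex.abs.add_le _ _) ?_
          rw [map_mul]
      _ ≤ ((4 * Complex.abs k + 4 * Complex.abs αm) * ε) * Real.exp (-(σ / 4) * x) +
          4 * M / σ * ε * Real.exp (-(σ / 4) * x) := by
          refine add_le_add ?_ hdiff
          exact mul_le_mul hc3 hexpkx (Complex.abs.nonneg _) (by positivity)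
      _ ≤ A * ε * Real.exp (-(σ / 4) * x) := by
          have hAge2 : 4 * Complex.abs k + 4 * Complex.abs αm + 4 * M / σ ≤ A := by
            rw [hA]; linarith
          have := arith2 hAge2 hε0.le (Real.exp_pos (-(σ / 4) * x)).le
          linarith [this]

lemma measurable_fTwo (αm : ℂ) (ε : ℝ) (k : ℂ) : Measurable (fTwo αm ε k) := by
  unfold fTwo
  have hexp : ∀ c : ℂ, Measurable fun x : ℝ => Complex.exp (c * x) := fun c =>
    Complex.measurable_exp.comp (measurable_const.mul Complex.measurable_ofReal)
  refine Measurable.ite (measurableSet_lt measurable_id measurable_const) (hexp k) ?_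
  refine Measurable.ite (measurableSet_le measurable_id measurable_const) ?_ ?_
  · exact (measurable_const.mul (hexp (-k))).add (measurable_const.mul (hexp k))
  · exact measurable_const.mul (hexp (-k))


set_option maxHeartbeats 2000000 in
/-- `L²` convergence of eigenfunctions: `‖f_{ε,κ(ε)} - f₀‖_{L²} = O(ε)` and
`|∫ f_{ε,κ(ε)}² - ∫ f₀²| = O(ε)` as `ε → 0⁺`. -/
theorem stmt_8 (αp αm : ℂ) (hα : (αp + αm).re < 0) (ε₀ : ℝ) (hε₀ : 0 < ε₀)
    (κ : ℝ → ℂ)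
    (heq : ∀ ε ∈ Ioo (0 : ℝ) ε₀,
      (αp + 2 * κ ε) * (αm + 2 * κ ε) = αp * αm * Complex.exp (-4 * κ ε * ε))
    (hre : ∀ ε ∈ Ioo (0 : ℝ) ε₀, 0 < (κ ε).re)
    (hlim : Filter.Tendsto κ (nhdsWithin 0 (Ioi (0 : ℝ))) (nhds (-(αp + αm) / 2))) :
    let f₀ : ℝ → ℂ := fun x => Complex.exp ((αp + αm) * (|x| : ℝ) / 2)
    ∃ ε₁ : ℝ, 0 < ε₁ ∧ ε₁ ≤ ε₀ ∧ ∃ C > (0 : ℝ), ∀ ε ∈ Ioo (0 : ℝ) ε₁,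
      Real.sqrt (∫ x : ℝ, ‖fTwo αm ε (κ ε) x - f₀ x‖ ^ 2) ≤ C * ε ∧
      ‖(∫ x : ℝ, (fTwo αm ε (κ ε) x) ^ 2) - ∫ x : ℝ, (f₀ x) ^ 2‖ ≤ C * ε := by
  intro f₀
  set κ₀ : ℂ := -(αp + αm) / 2 with hκ₀
  set σ : ℝ := κ₀.re with hσdef
  have hσ0 : 0 < σ := by
    have h2 : κ₀ * 2 = -(αp + αm) := by rw [hκ₀]; ring
    have h3 := congrArg Complex.re h2
    simp only [Complex.mul_re, Complex.neg_re, Complex.re_ofNat, Complex.im_ofNat,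
      mul_zero, sub_zero] at h3
    rw [hσdef]; linarith
  set K : ℝ := Complex.abs κ₀ with hKdef
  have hσK : σ ≤ K := le_trans (le_abs_self _) (Complex.abs_re_le_abs κ₀)
  have hK0 : 0 < K := lt_of_lt_of_le hσ0 hσK
  set M : ℝ := 2 * Complex.abs (αp * αm) with hMdef
  have hM0 : 0 ≤ M := by rw [hMdef]; positivity
  set A : ℝ := 4 * M / σ + 12 * Complex.abs αm + 16 * K with hAdef
  have hA0 : 0 ≤ A := by rw [hAdef]; positivity
  -- extract δ from the limit hypothesis
  have hball : κ ⁻¹' Metric.ball κ₀ (σ / 2) ∈ nhdsWithin 0 (Ioi (0:ℝ)) :=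
    hlim (Metric.ball_mem_nhds κ₀ (by positivity))
  rw [mem_nhdsGT_iff_exists_Ioo_subset] at hball
  obtain ⟨δ, hδmem, hδsub⟩ := hball
  have hδ0 : 0 < δ := hδmem
  -- choose ε₁
  set ε₁ : ℝ := min ε₀ (min δ (min 1 (1 / (8 * (K + 1))))) with hε₁def
  have hε₁0 : 0 < ε₁ := by
    rw [hε₁def]
    refine lt_min hε₀ (lt_min hδ0 (lt_min one_pos (by positivity)))
  have hε₁ε₀ : ε₁ ≤ ε₀ := min_le_left _ _
  refine ⟨ε₁, hε₁0, hε₁ε₀, ?_⟩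
  -- the dominating integrals
  have hg2int : Integrable (fun x : ℝ => Real.exp (-(σ / 2 * |x|))) :=
    my_integrable_exp_neg_abs (by positivity)
  set J : ℝ := ∫ x : ℝ, Real.exp (-(σ / 2 * |x|)) with hJdef
  have hJ0 : 0 ≤ J := integral_nonneg fun x => (Real.exp_pos _).le
  set C : ℝ := A * Real.sqrt J + A * (A + 2) * J + 1 with hCdef
  have hC0 : 0 < C := by
    have h1 : 0 ≤ A * Real.sqrt J := mul_nonneg hA0 (Real.sqrt_nonneg _)
    have h2 : 0 ≤ A * (A + 2) * J := mul_nonneg (mul_nonneg hA0 (by linarith)) hJ0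
    rw [hCdef]; linarith
  refine ⟨C, hC0, ?_⟩
  rintro ε ⟨hε0, hεlt⟩
  set k : ℂ := κ ε with hkdef
  have hεε₀ : ε ∈ Ioo (0:ℝ) ε₀ := ⟨hε0, lt_of_lt_of_le hεlt hε₁ε₀⟩
  have hεδ : ε < δ := lt_of_lt_of_le hεlt (le_trans (min_le_right _ _) (min_le_left _ _))
  have hε1 : ε ≤ 1 := le_of_lt (lt_of_lt_of_le hεlt
    (le_trans (min_le_right _ _) (le_trans (min_le_right _ _) (min_le_left _ _))))
  have hεK8 : ε * (K + 1) ≤ 1 / 8 := by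
    have hεle : ε ≤ 1 / (8 * (K + 1)) := le_of_lt (lt_of_lt_of_le hεlt
      (le_trans (min_le_right _ _) (le_trans (min_le_right _ _) (min_le_right _ _))))
    have h8 : ε * (8 * (K + 1)) ≤ 1 := (le_div_iff₀ (by positivity)).mp hεle
    nlinarith [hK0]
  have hεK : ε * K ≤ 1 / 8 := by nlinarith [hε0]
  -- κ ε is close to κ₀
  have hd : Complex.abs (k - κ₀) ≤ σ / 2 := by
    have : ε ∈ Ioo (0:ℝ) δ := ⟨hε0, hεδ⟩
    have hmem := hδsub this
    rw [mem_preimage, Metric.mem_ball, Complex.dist_eq] at hmem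
    exact hmem.le
  -- basic facts about k
  have hrek : σ / 2 ≤ k.re := by
    have h1 := Complex.abs_re_le_abs (k - κ₀)
    rw [Complex.sub_re] at h1
    have h2 := abs_le.mp (le_trans h1 hd)
    rw [← hσdef] at h2
    linarith [h2.1]
  have hk0 : k ≠ 0 := by
    intro h; rw [h] at hrek; simp at hrek; linarith
  have habsk0 : 0 < Complex.abs k := by rw [AbsoluteValue.pos_iff]; exact hk0
  have habsk : Complex.abs k ≤ 3 / 2 * K := by
    calc Complex.abs k = Complex.abs ((k - κ₀) + κ₀) := by ring_nf
      _ ≤ Complex.abs (k - κ₀) + K := Complex.abs.add_le _ _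
      _ ≤ 3 / 2 * K := by linarith
  have hεk : ε * Complex.abs k ≤ 3 / 16 := by nlinarith
  -- the eigenvalue equation gives the O(ε) bound on k - κ₀
  have hkey : 4 * k * (k - κ₀) = αp * αm * (Complex.exp (-4 * k * ε) - 1) := by
    have h := heq ε hεε₀
    rw [← hkdef] at h
    linear_combination h + (-(4*k)) * hκ₀
  have habs4kε : Complex.abs (-4 * k * (ε:ℂ)) ≤ 1 := by
    rw [show (-4 : ℂ) * k * (ε:ℂ) = -(4 * (k * ε)) by ring, Complex.abs.map_neg,
      map_mul, map_mul, Complex.abs_ofReal, abs_of_pos hε0]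
    have : Complex.abs (4:ℂ) = 4 := by norm_num
    rw [this]
    nlinarith
  have hdM : Complex.abs (k - κ₀) ≤ M * ε := by
    have h1 := congrArg Complex.abs hkey
    rw [map_mul, map_mul, map_mul] at h1
    have h4 : Complex.abs (4:ℂ) = 4 := by norm_num
    rw [h4] at h1
    have h2 := Complex.abs_exp_sub_one_le habs4kε
    have h3 : Complex.abs (-4 * k * (ε:ℂ)) = 4 * (Complex.abs k * ε) := by
      rw [show (-4 : ℂ) * k * (ε:ℂ) = -(4 * (k * ε)) by ring, Complex.abs.map_neg,
        map_mul, map_mul, Complex.abs_ofReal, abs_of_pos hε0]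
      norm_num
    rw [h3] at h2
    have h5 : 4 * Complex.abs k * Complex.abs (k - κ₀) ≤
        Complex.abs (αp * αm) * (2 * (4 * (Complex.abs k * ε))) := by
      rw [h1]
      exact mul_le_mul_of_nonneg_left h2 (Complex.abs.nonneg _)
    rw [hMdef]
    nlinarith [Complex.abs.nonneg (k - κ₀), Complex.abs.nonneg (αp * αm)]
  -- pointwise bound
  have hf₀ : ∀ x : ℝ, f₀ x = Complex.exp (-(κ₀ * (|x| : ℝ))) := by
    intro x
    show Complex.exp ((αp + αm) * (|x| : ℝ) / 2) = _
    congr 1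
    rw [hκ₀]; ring
  have hpt : ∀ x : ℝ, Complex.abs (fTwo αm ε k x - f₀ x) ≤
      A * ε * Real.exp (-(σ / 4) * |x|) := by
    intro x
    rw [hf₀ x]
    exact fTwo_pointwise αm κ₀ k σ M ε rfl hσ0 hd hdM hε0 hεK x
  have hexpsq : ∀ x : ℝ, Real.exp (-(σ / 4) * |x|) ^ 2 = Real.exp (-(σ / 2 * |x|)) := by
    intro x
    rw [pow_two, ← Real.exp_add]
    congr 1; ring
  have habsf₀ : ∀ x : ℝ, Complex.abs (f₀ x) = Real.exp (-(σ * |x|)) := by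
    intro x
    rw [hf₀ x, Complex.abs_exp]
    congr 1
    simp only [Complex.neg_re, Complex.mul_re, Complex.ofReal_re, Complex.ofReal_im,
      mul_zero, sub_zero, hσdef]
  have hf₀le : ∀ x : ℝ, Complex.abs (f₀ x) ≤ Real.exp (-(σ / 4) * |x|) := by
    intro x
    rw [habsf₀ x, Real.exp_le_exp]
    nlinarith [abs_nonneg x]
  constructor
  · -- first estimate
    have hmono : (∫ x : ℝ, ‖fTwo αm ε k x - f₀ x‖ ^ 2) ≤
        ∫ x : ℝ, (A * ε) ^ 2 * Real.exp (-(σ / 2 * |x|)) := by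
      refine integral_mono_of_nonneg (Filter.Eventually.of_forall fun x => by positivity)
        (hg2int.const_mul _) (Filter.Eventually.of_forall fun x => ?_)
      have h1 := hpt x
      have h2 : ‖fTwo αm ε k x - f₀ x‖ ^ 2 ≤ (A * ε * Real.exp (-(σ / 4) * |x|)) ^ 2 := by
        rw [Complex.norm_eq_abs]
        exact pow_le_pow_left₀ (Complex.abs.nonneg _) h1 2
      calc ‖fTwo αm ε k x - f₀ x‖ ^ 2 ≤ (A * ε * Real.exp (-(σ / 4) * |x|)) ^ 2 := h2
        _ = (A * ε) ^ 2 * Real.exp (-(σ / 2 * |x|)) := by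
            rw [mul_pow, hexpsq x]
    rw [show (∫ x : ℝ, (A * ε) ^ 2 * Real.exp (-(σ / 2 * |x|))) = (A * ε) ^ 2 * J from
      integral_const_mul _ _] at hmono
    calc Real.sqrt (∫ x : ℝ, ‖fTwo αm ε k x - f₀ x‖ ^ 2)
        ≤ Real.sqrt ((A * ε) ^ 2 * J) := Real.sqrt_le_sqrt hmono
      _ = (A * ε) * Real.sqrt J := by
          rw [Real.sqrt_mul (sq_nonneg _), Real.sqrt_sq (by positivity)]
      _ = (A * Real.sqrt J) * ε := by ring
      _ ≤ C * ε := by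
          have h2 : 0 ≤ A * (A + 2) * J := mul_nonneg (mul_nonneg hA0 (by linarith)) hJ0
          have : A * Real.sqrt J ≤ C := by rw [hCdef]; linarith
          exact mul_le_mul_of_nonneg_right this hε0.le
  · -- second estimate
    have hbfTwo : ∀ x : ℝ, Complex.abs (fTwo αm ε k x) ≤
        (A + 1) * Real.exp (-(σ / 4) * |x|) := by
      intro x
      have h1 := hpt x
      have h2 := hf₀le x
      have h3 : Complex.abs (fTwo αm ε k x) ≤
          Complex.abs (fTwo αm ε k x - f₀ x) + Complex.abs (f₀ x) := by
        calc Complex.abs (fTwo αm ε k x) = Complex.abs ((fTwo αm ε k x - f₀ x) + f₀ x) := by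
              ring_nf
          _ ≤ _ := Complex.abs.add_le _ _
      have h4 : A * ε ≤ A := by nlinarith
      nlinarith [mul_le_mul_of_nonneg_right h4 (Real.exp_pos (-(σ / 4) * |x|)).le]
    have hsum : ∀ x : ℝ, Complex.abs (fTwo αm ε k x + f₀ x) ≤
        (A + 2) * Real.exp (-(σ / 4) * |x|) := by
      intro x
      calc Complex.abs (fTwo αm ε k x + f₀ x)
          ≤ Complex.abs (fTwo αm ε k x) + Complex.abs (f₀ x) := Complex.abs.add_le _ _
        _ ≤ (A + 1) * Real.exp (-(σ / 4) * |x|) + Real.exp (-(σ / 4) * |x|) :=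
            add_le_add (hbfTwo x) (hf₀le x)
        _ = (A + 2) * Real.exp (-(σ / 4) * |x|) := by ring
    have hIntfTwo2 : Integrable (fun x : ℝ => (fTwo αm ε k x) ^ 2) := by
      refine Integrable.mono' (hg2int.const_mul ((A + 1) ^ 2))
        (((measurable_fTwo αm ε k).pow_const 2).aestronglyMeasurable)
        (Filter.Eventually.of_forall fun x => ?_)
      rw [norm_pow, Complex.norm_eq_abs]
      calc Complex.abs (fTwo αm ε k x) ^ 2
          ≤ ((A + 1) * Real.exp (-(σ / 4) * |x|)) ^ 2 :=
            pow_le_pow_left₀ (Complex.abs.nonneg _) (hbfTwo x) 2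
        _ = (A + 1) ^ 2 * Real.exp (-(σ / 2 * |x|)) := by rw [mul_pow, hexpsq x]
    have hcontf₀ : Continuous f₀ := by
      exact Complex.continuous_exp.comp
        ((continuous_const.mul (Complex.continuous_ofReal.comp continuous_abs)).div_const 2)
    have hIntf₀2 : Integrable (fun x : ℝ => (f₀ x) ^ 2) := by
      refine Integrable.mono' (hg2int.const_mul 1)
        ((hcontf₀.pow 2).aestronglyMeasurable)
        (Filter.Eventually.of_forall fun x => ?_)
      rw [norm_pow, Complex.norm_eq_abs, one_mul]
      calc Complex.abs (f₀ x) ^ 2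
          ≤ (Real.exp (-(σ / 4) * |x|)) ^ 2 :=
            pow_le_pow_left₀ (Complex.abs.nonneg _) (hf₀le x) 2
        _ = Real.exp (-(σ / 2 * |x|)) := hexpsq x
    have hsub : (∫ x : ℝ, (fTwo αm ε k x) ^ 2) - ∫ x : ℝ, (f₀ x) ^ 2 =
        ∫ x : ℝ, ((fTwo αm ε k x) ^ 2 - (f₀ x) ^ 2) := (integral_sub hIntfTwo2 hIntf₀2).symm
    rw [hsub]
    calc ‖∫ x : ℝ, ((fTwo αm ε k x) ^ 2 - (f₀ x) ^ 2)‖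
        ≤ ∫ x : ℝ, ‖(fTwo αm ε k x) ^ 2 - (f₀ x) ^ 2‖ := norm_integral_le_integral_norm _
      _ ≤ ∫ x : ℝ, (A * (A + 2) * ε) * Real.exp (-(σ / 2 * |x|)) := by
          refine integral_mono_of_nonneg
            (Filter.Eventually.of_forall fun x => norm_nonneg _)
            (hg2int.const_mul _) (Filter.Eventually.of_forall fun x => ?_)
          have hfac : (fTwo αm ε k x) ^ 2 - (f₀ x) ^ 2 =
              (fTwo αm ε k x - f₀ x) * (fTwo αm ε k x + f₀ x) := by ring
          show ‖(fTwo αm ε k x) ^ 2 - (f₀ x) ^ 2‖ ≤ (A * (A + 2) * ε) * Real.exp (-(σ / 2 * |x|))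
          rw [hfac, norm_mul, Complex.norm_eq_abs, Complex.norm_eq_abs]
          calc Complex.abs (fTwo αm ε k x - f₀ x) * Complex.abs (fTwo αm ε k x + f₀ x)
              ≤ (A * ε * Real.exp (-(σ / 4) * |x|)) *
                ((A + 2) * Real.exp (-(σ / 4) * |x|)) :=
                mul_le_mul (hpt x) (hsum x) (Complex.abs.nonneg _) (by positivity)
            _ = (A * (A + 2) * ε) * (Real.exp (-(σ / 4) * |x|) ^ 2) := by ring
            _ = (A * (A + 2) * ε) * Real.exp (-(σ / 2 * |x|)) := by rw [hexpsq x]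
      _ = (A * (A + 2) * ε) * J := integral_const_mul _ _
      _ ≤ C * ε := by
          have h1 : 0 ≤ A * Real.sqrt J := mul_nonneg hA0 (Real.sqrt_nonneg _)
          have h2 : A * (A + 2) * J ≤ C := by rw [hCdef]; linarith
          calc (A * (A + 2) * ε) * J = (A * (A + 2) * J) * ε := by ring
            _ ≤ C * ε := mul_le_mul_of_nonneg_right h2 hε0.le
end

section
/- Let ε₀ > 0 and let κ : (0, ε₀) → ℂ be any function such that for every ε ∈ (0, ε₀) one has (α₊+2κ(ε))(α₋+2κ(ε)) = α₊α₋·e^{-4κ(ε)ε}, Re κ(ε) > 0, and κ(ε) → κ₀ as ε → 0⁺. Then there exist ε₁ ∈ (0, ε₀] and C > 0 such that for all ε ∈ (0, ε₁), sup_{x ∈ ℝ} |f_{ε,κ(ε)}(x) - f₀(x)| ≤ C·ε. -/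
open MeasureTheory Set

lemma self_mul_exp_neg_le {u : ℝ} (_hu : 0 ≤ u) : u * Real.exp (-u) ≤ 1 := by
  calc u * Real.exp (-u) ≤ Real.exp u * Real.exp (-u) := by
        apply mul_le_mul_of_nonneg_right _ (Real.exp_nonneg _)
        linarith [Real.add_one_le_exp u]
    _ = 1 := by rw [← Real.exp_add]; simp

lemma mul_exp_neg_mul_le {b t : ℝ} (hb : 0 < b) (ht : 0 ≤ t) :
    t * Real.exp (-(b * t)) ≤ 1 / b := by
  have h := self_mul_exp_neg_le (mul_nonneg hb.le ht)
  rw [le_div_iff₀ hb]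
  nlinarith [Real.exp_nonneg (-(b*t))]

lemma exp_neg_le_inv {u : ℝ} (hu : 0 < u) : Real.exp (-u) ≤ 1 / u := by
  rw [Real.exp_neg, inv_eq_one_div]
  apply one_div_le_one_div_of_le hu
  linarith [Real.add_one_le_exp u]

lemma exp_near_one {z : ℂ} {r : ℝ} (h : ‖z‖ ≤ r) (hr : r ≤ 1) :
    ‖Complex.exp z - 1‖ ≤ 2 * r :=
  le_trans (Complex.norm_exp_sub_one_le (h.trans hr)) (by linarith)

lemma abs_exp_mul_real (z : ℂ) (x : ℝ) :
    ‖Complex.exp (z * x)‖ = Real.exp (z.re * x) := by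
  rw [Complex.norm_exp]; simp [Complex.mul_re]

lemma tri4 (A B C D : ℂ) : ‖A + B + C + D‖ ≤
    ‖A‖ + ‖B‖ + ‖C‖ + ‖D‖ := by
  calc ‖A + B + C + D‖ ≤ ‖A + B + C‖ + ‖D‖ :=
        norm_add_le _ _
    _ ≤ (‖A + B‖ + ‖C‖) + ‖D‖ := by
        linarith [norm_add_le (A + B) C]
    _ ≤ ‖A‖ + ‖B‖ + ‖C‖ + ‖D‖ := by
        linarith [norm_add_le A B]

lemma tail_bound (κ' κ₀' : ℂ) (a : ℝ) (ha : 0 < a) (h0 : a ≤ κ₀'.re)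
    (h1 : a / 2 ≤ κ'.re) (x : ℝ) (hx : x ≤ 0) :
    ‖Complex.exp (κ' * x) - Complex.exp (κ₀' * x)‖ ≤
      4 * ‖κ' - κ₀'‖ / a := by
  set δ : ℂ := κ' - κ₀' with hδ
  have hre : ∀ z : ℂ, (z * (x:ℂ)).re = z.re * x := fun z => by simp [Complex.mul_re]
  by_cases hc : ‖δ‖ * (-x) ≤ 1
  · have harg : κ₀' * x + δ * x = κ' * x := by rw [hδ]; ring
    have key : Complex.exp (κ' * x) - Complex.exp (κ₀' * x)
        = Complex.exp (κ₀' * x) * (Complex.exp (δ * x) - 1) := by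
      rw [mul_sub, mul_one, ← Complex.exp_add, harg]
    rw [key, norm_mul, Complex.norm_exp, hre]
    have habsδx : ‖δ * x‖ = ‖δ‖ * (-x) := by
      rw [norm_mul, Complex.norm_real, Real.norm_eq_abs, abs_of_nonpos hx]
    have h2 : ‖Complex.exp (δ * x) - 1‖ ≤ 2 * (‖δ‖ * (-x)) := by
      have := Complex.norm_exp_sub_one_le (x := δ * x) (by rw [habsδx]; exact hc)
      rwa [habsδx] at this
    calc Real.exp (κ₀'.re * x) * ‖Complex.exp (δ * x) - 1‖
        ≤ Real.exp (-(a * -x)) * (2 * (‖δ‖ * (-x))) := by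
          apply mul_le_mul _ h2 (norm_nonneg _) (Real.exp_nonneg _)
          apply Real.exp_le_exp.mpr; nlinarith
      _ = 2 * ‖δ‖ * ((-x) * Real.exp (-(a * -x))) := by ring
      _ ≤ 2 * ‖δ‖ * (1 / a) := by
          apply mul_le_mul_of_nonneg_left (mul_exp_neg_mul_le ha (by linarith))
          positivity
      _ = 2 * ‖δ‖ / a := by ring
      _ ≤ 4 * ‖δ‖ / a := by
          gcongr
          linarith [norm_nonneg δ]
  · push_neg at hc
    have hxpos : 0 < -x := by
      by_contra h
      push_neg at h
      nlinarith [norm_nonneg δ]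
    have hδpos : 1 / (-x) ≤ ‖δ‖ := by rw [div_le_iff₀ hxpos]; linarith
    calc ‖Complex.exp (κ' * x) - Complex.exp (κ₀' * x)‖
        ≤ ‖Complex.exp (κ' * x)‖ + ‖Complex.exp (κ₀' * x)‖ := by
          simpa [sub_eq_add_neg] using norm_add_le (Complex.exp (κ' * x)) (-Complex.exp (κ₀' * x))
      _ = Real.exp (κ'.re * x) + Real.exp (κ₀'.re * x) := by rw [Complex.norm_exp, Complex.norm_exp, hre, hre]
      _ ≤ Real.exp (-(a/2 * -x)) + Real.exp (-(a/2 * -x)) := by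
          apply add_le_add <;> apply Real.exp_le_exp.mpr <;> nlinarith
      _ = 2 * Real.exp (-(a/2 * -x)) := by ring
      _ ≤ 2 * (1 / (a/2 * -x)) := by
          apply mul_le_mul_of_nonneg_left (exp_neg_le_inv (by positivity)) (by norm_num)
      _ = (4 / a) * (1 / -x) := by field_simp; ring
      _ ≤ (4 / a) * ‖δ‖ := by
          apply mul_le_mul_of_nonneg_left hδpos (by positivity)
      _ = 4 * ‖δ‖ / a := by ring

set_option maxHeartbeats 1000000 in
/-- Uniform convergence of eigenfunctions in dimension one:
`sup_{x ∈ ℝ} |f_{ε,κ(ε)}(x) - f₀(x)| ≤ C ε` for all small `ε > 0`. -/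
theorem stmt_9 (αp αm : ℂ) (hα : (αp + αm).re < 0) (ε₀ : ℝ) (hε₀ : 0 < ε₀)
    (κ : ℝ → ℂ)
    (heq : ∀ ε ∈ Ioo (0 : ℝ) ε₀,
      (αp + 2 * κ ε) * (αm + 2 * κ ε) = αp * αm * Complex.exp (-4 * κ ε * ε))
    (hre : ∀ ε ∈ Ioo (0 : ℝ) ε₀, 0 < (κ ε).re)
    (hlim : Filter.Tendsto κ (nhdsWithin 0 (Ioi (0 : ℝ))) (nhds (-(αp + αm) / 2))) :
    let f₀ : ℝ → ℂ := fun x => Complex.exp ((αp + αm) * (|x| : ℝ) / 2)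
    ∃ ε₁ : ℝ, 0 < ε₁ ∧ ε₁ ≤ ε₀ ∧ ∃ C > (0 : ℝ), ∀ ε ∈ Ioo (0 : ℝ) ε₁,
      ∀ x : ℝ, ‖fTwo αm ε (κ ε) x - f₀ x‖ ≤ C * ε := by
  intro f₀
  set κ₀ : ℂ := -(αp + αm) / 2 with hκ₀
  have hare : κ₀.re = -(αp + αm).re / 2 := by
    rw [hκ₀]
    simp [Complex.div_re, Complex.normSq]
  have ha : 0 < κ₀.re := by rw [hare]; linarith
  set a : ℝ := κ₀.re with haa
  have haκ₀ : a ≤ ‖κ₀‖ := Complex.re_le_norm κ₀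
  set M : ℝ := ‖κ₀‖ + a / 2 with hM
  have hM0 : 0 < M := by positivity
  set Cm : ℝ := ‖αm‖ with hCm
  have hCm0 : 0 ≤ Cm := norm_nonneg αm
  set B : ℝ := 2 * ‖αp‖ * ‖αm‖ with hB
  have hB0 : 0 ≤ B := by positivity
  rw [Metric.tendsto_nhdsWithin_nhds] at hlim
  obtain ⟨η, hη0, hη⟩ := hlim (a / 2) (by positivity)
  refine ⟨min ε₀ (min η (1 / (4 * M))), lt_min hε₀ (lt_min hη0 (by positivity)),
    min_le_left _ _, ?_⟩
  obtain ⟨C, hC⟩ : ∃ C : ℝ, C = 4 * B / a + (4 * M + 4 * Cm + 4 * B / a)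
      + (Cm / a * (2 * M) + (1 + Cm / a) * (2 * M) + 2 * Cm + 2 * M) + 1 := ⟨_, rfl⟩
  have hd1 : (0:ℝ) ≤ 4 * B / a := by positivity
  have hd2 : (0:ℝ) ≤ 4 * M + 4 * Cm + 4 * B / a := by positivity
  have hd3 : (0:ℝ) ≤ Cm / a * (2 * M) + (1 + Cm / a) * (2 * M) + 2 * Cm + 2 * M := by
    positivity
  have hCl : 4 * B / a ≤ C := by rw [hC]; linarith
  have hCr : 4 * M + 4 * Cm + 4 * B / a ≤ C := by rw [hC]; linarith
  have hCd : Cm / a * (2 * M) + (1 + Cm / a) * (2 * M) + 2 * Cm + 2 * M ≤ C := by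
    rw [hC]; linarith
  have hC0 : 0 < C := by rw [hC]; linarith
  refine ⟨C, hC0, ?_⟩
  rintro ε ⟨hε0, hε1⟩ x
  have hεε₀ : ε < ε₀ := lt_of_lt_of_le hε1 (min_le_left _ _)
  have hεIoo : ε ∈ Ioo (0:ℝ) ε₀ := ⟨hε0, hεε₀⟩
  have hδa : ‖κ ε - κ₀‖ < a / 2 := by
    have hd : dist ε (0:ℝ) < η := by
      rw [Real.dist_eq, sub_zero, abs_of_pos hε0]
      exact lt_of_lt_of_le hε1 ((min_le_right _ _).trans (min_le_left _ _))
    have := hη (mem_Ioi.mpr hε0) hd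
    rwa [Complex.dist_eq] at this
  have hMε : 4 * M * ε ≤ 1 := by
    have h1 : ε ≤ 1 / (4 * M) :=
      le_of_lt (lt_of_lt_of_le hε1 ((min_le_right _ _).trans (min_le_right _ _)))
    rw [le_div_iff₀ (by positivity)] at h1; linarith
  have hκre : 0 < (κ ε).re := hre ε hεIoo
  have hκne : κ ε ≠ 0 := fun h => by rw [h] at hκre; simp at hκre
  have hκa0 : 0 < ‖κ ε‖ := norm_pos_iff.mpr hκne
  have hκre2 : a / 2 ≤ (κ ε).re := by
    have h1 : |(κ ε - κ₀).re| ≤ ‖κ ε - κ₀‖ := Complex.abs_re_le_norm _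
    have h2 : (κ ε - κ₀).re = (κ ε).re - a := by simp [Complex.sub_re, haa]
    rw [h2] at h1
    have := abs_le.mp h1
    linarith [this.1]
  have hκM : ‖κ ε‖ ≤ M := by
    have h := norm_add_le κ₀ (κ ε - κ₀)
    have h2 : κ₀ + (κ ε - κ₀) = κ ε := by ring
    rw [h2] at h
    rw [hM]; linarith
  have haκ : a ≤ 2 * ‖κ ε‖ := by
    have := Complex.re_le_norm (κ ε); linarith
  -- the quantitative bound |κ ε - κ₀| ≤ B ε
  have habs4 : ‖-4 * κ ε * ε‖ = 4 * ‖κ ε‖ * ε := by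
    rw [norm_mul, norm_mul, Complex.norm_real, Real.norm_eq_abs, abs_of_pos hε0]
    norm_num
  have hδB : ‖κ ε - κ₀‖ ≤ B * ε := by
    have h4 : 4 * κ ε * (κ ε - κ₀) = αp * αm * (Complex.exp (-4 * κ ε * ε) - 1) := by
      have h := heq ε hεIoo
      rw [hκ₀]
      linear_combination h
    have hle : ‖-4 * κ ε * ε‖ ≤ 1 := by
      rw [habs4]; nlinarith
    have h2 := Complex.norm_exp_sub_one_le hle
    have h5 : (4 * ‖κ ε‖) * ‖κ ε - κ₀‖
        ≤ (4 * ‖κ ε‖) * (B * ε) := by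
      calc (4 * ‖κ ε‖) * ‖κ ε - κ₀‖
          = ‖4 * κ ε * (κ ε - κ₀)‖ := by
            rw [norm_mul, norm_mul]; norm_num
        _ = ‖αp‖ * ‖αm‖ * ‖Complex.exp (-4 * κ ε * ε) - 1‖ := by
            rw [h4, norm_mul, norm_mul]
        _ ≤ ‖αp‖ * ‖αm‖ * (2 * (4 * ‖κ ε‖ * ε)) := by
            rw [← habs4]
            exact mul_le_mul_of_nonneg_left h2 (by positivity)
        _ = (4 * ‖κ ε‖) * (B * ε) := by rw [hB]; ring
    exact le_of_mul_le_mul_left h5 (by positivity)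
  have hMε1 : M * ε ≤ 1 := by nlinarith
  have h2κε : 2 * ‖κ ε‖ * ε ≤ 2 * (M * ε) := by nlinarith
  have habs2 : ‖-2 * κ ε * (ε:ℂ)‖ = 2 * ‖κ ε‖ * ε := by
    rw [norm_mul, norm_mul, Complex.norm_real, Real.norm_eq_abs, abs_of_pos hε0]; norm_num
  have habs2' : ‖2 * κ ε * (ε:ℂ)‖ = 2 * ‖κ ε‖ * ε := by
    rw [norm_mul, norm_mul, Complex.norm_real, Real.norm_eq_abs, abs_of_pos hε0]; norm_num
  have hκεle1 : 2 * ‖κ ε‖ * ε ≤ 1 := by nlinarith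
  have e1 : ‖Complex.exp (-2 * κ ε * (ε:ℂ)) - 1‖ ≤ 2 * (2 * ‖κ ε‖ * ε) :=
    exp_near_one (le_of_eq habs2) hκεle1
  have e2 : ‖Complex.exp (2 * κ ε * (ε:ℂ)) - 1‖ ≤ 2 * (2 * ‖κ ε‖ * ε) :=
    exp_near_one (le_of_eq habs2') hκεle1
  have habsdiv : ‖αm / (2 * κ ε)‖ ≤ Cm / a := by
    rw [norm_div, norm_mul, Complex.norm_two]
    rw [hCm]
    gcongr
    all_goals linarith [norm_nonneg αm]
  -- now the three regions
  by_cases h1 : x < -ε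
  · -- left region
    have hx0 : x < 0 := by linarith
    have hf₀ : f₀ x = Complex.exp (κ₀ * x) := by
      show Complex.exp _ = _
      congr 1
      rw [hκ₀, abs_of_neg hx0]
      push_cast
      ring
    rw [show fTwo αm ε (κ ε) x = Complex.exp (κ ε * x) from if_pos h1, hf₀]
    calc ‖Complex.exp (κ ε * x) - Complex.exp (κ₀ * x)‖
        ≤ 4 * ‖κ ε - κ₀‖ / a :=
          tail_bound (κ ε) κ₀ a ha le_rfl hκre2 x hx0.le
      _ ≤ 4 * (B * ε) / a := by gcongr
      _ = (4 * B / a) * ε := by ring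
      _ ≤ C * ε := mul_le_mul_of_nonneg_right hCl hε0.le
  · by_cases h2 : x ≤ ε
    · -- middle region
      have hxε : |x| ≤ ε := abs_le.mpr ⟨by linarith [not_lt.mp h1], h2⟩
      have hxabs : (0:ℝ) ≤ |x| := abs_nonneg x
      have hfT : fTwo αm ε (κ ε) x =
          (-(αm / (2 * κ ε)) * Complex.exp (-2 * κ ε * ε)) * Complex.exp (-κ ε * x) +
            ((αm + 2 * κ ε) / (2 * κ ε)) * Complex.exp (κ ε * x) := by
        simp only [fTwo]
        rw [if_neg h1, if_pos h2]
      have hf₀ : f₀ x = Complex.exp (-κ₀ * (|x| : ℝ)) := by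
        show Complex.exp _ = _
        congr 1
        rw [hκ₀]
        ring
      rw [hfT, hf₀]
      have hid : (-(αm / (2 * κ ε)) * Complex.exp (-2 * κ ε * ε)) * Complex.exp (-κ ε * x) +
            ((αm + 2 * κ ε) / (2 * κ ε)) * Complex.exp (κ ε * x)
            - Complex.exp (-κ₀ * (|x| : ℝ))
          = (-(αm / (2 * κ ε)) * Complex.exp (-2 * κ ε * ε)) * (Complex.exp (-κ ε * x) - 1)
            + ((αm + 2 * κ ε) / (2 * κ ε)) * (Complex.exp (κ ε * x) - 1)
            + (αm / (2 * κ ε)) * (1 - Complex.exp (-2 * κ ε * ε))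
            + (1 - Complex.exp (-κ₀ * (|x| : ℝ))) := by
        field_simp
        ring
      rw [hid]
      -- bounds on the four pieces
      have b1 : ‖(-(αm / (2 * κ ε)) * Complex.exp (-2 * κ ε * ε)) *
            (Complex.exp (-κ ε * x) - 1)‖ ≤ (Cm / a) * (2 * (M * ε)) := by
        rw [norm_mul, norm_mul]
        have hc1 : ‖-(αm / (2 * κ ε))‖ ≤ Cm / a := by
          rw [norm_neg]; exact habsdiv
        have hexp1 : ‖Complex.exp (-2 * κ ε * (ε:ℂ))‖ ≤ 1 := by
          rw [Complex.norm_exp, Real.exp_le_one_iff]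
          have : ((-2 : ℂ) * κ ε * (ε:ℂ)).re = -2 * (κ ε).re * ε := by
            simp [Complex.mul_re]
          rw [this]; nlinarith
        have hexp2 : ‖Complex.exp (-κ ε * (x:ℂ)) - 1‖ ≤ 2 * (M * ε) := by
          apply exp_near_one _ hMε1
          rw [norm_mul, norm_neg, Complex.norm_real, Real.norm_eq_abs]
          exact mul_le_mul hκM hxε hxabs hM0.le
        calc ‖-(αm / (2 * κ ε))‖ * ‖Complex.exp (-2 * κ ε * ε)‖ *
              ‖Complex.exp (-κ ε * x) - 1‖
            ≤ (Cm / a) * 1 * (2 * (M * ε)) := by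
              apply mul_le_mul (mul_le_mul hc1 hexp1 (norm_nonneg _) (by positivity))
                hexp2 (norm_nonneg _) (by positivity)
          _ = (Cm / a) * (2 * (M * ε)) := by ring
      have b2 : ‖((αm + 2 * κ ε) / (2 * κ ε)) * (Complex.exp (κ ε * x) - 1)‖
            ≤ (1 + Cm / a) * (2 * (M * ε)) := by
        rw [norm_mul]
        have hc2 : ‖(αm + 2 * κ ε) / (2 * κ ε)‖ ≤ 1 + Cm / a := by
          rw [norm_div]
          have hnum : ‖αm + 2 * κ ε‖ ≤ Cm + ‖2 * κ ε‖ := by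
            rw [hCm]; exact norm_add_le _ _
          have hden : ‖2 * κ ε‖ = 2 * ‖κ ε‖ := by
            rw [norm_mul, Complex.norm_two]
          rw [hden] at hnum ⊢
          rw [div_le_iff₀ (by positivity)]
          have h3 : Cm / a * a ≤ Cm / a * (2 * ‖κ ε‖) := by
            apply mul_le_mul_of_nonneg_left haκ (by positivity)
          have h4 : Cm / a * a = Cm := by field_simp
          nlinarith
        have hexp3 : ‖Complex.exp (κ ε * (x:ℂ)) - 1‖ ≤ 2 * (M * ε) := by
          apply exp_near_one _ hMε1
          rw [norm_mul, Complex.norm_real, Real.norm_eq_abs]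
          exact mul_le_mul hκM hxε hxabs hM0.le
        apply mul_le_mul hc2 hexp3 (norm_nonneg _) (by positivity)
      have b3 : ‖(αm / (2 * κ ε)) * (1 - Complex.exp (-2 * κ ε * ε))‖
            ≤ 2 * Cm * ε := by
        rw [norm_mul]
        have h1m : ‖1 - Complex.exp (-2 * κ ε * (ε:ℂ))‖
            = ‖Complex.exp (-2 * κ ε * (ε:ℂ)) - 1‖ := by
          rw [← norm_neg]; congr 1; ring
        have hdiv : ‖αm / (2 * κ ε)‖ = Cm / (2 * ‖κ ε‖) := by
          rw [norm_div, norm_mul, Complex.norm_two, hCm]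
        rw [h1m, hdiv]
        calc Cm / (2 * ‖κ ε‖) * ‖Complex.exp (-2 * κ ε * (ε:ℂ)) - 1‖
            ≤ Cm / (2 * ‖κ ε‖) * (2 * (2 * ‖κ ε‖ * ε)) := by
              apply mul_le_mul_of_nonneg_left e1 (by positivity)
          _ = 2 * Cm * ε := by field_simp
      have b4 : ‖1 - Complex.exp (-κ₀ * (|x| : ℝ))‖ ≤ 2 * (M * ε) := by
        have h1m : ‖1 - Complex.exp (-κ₀ * ((|x|:ℝ):ℂ))‖
            = ‖Complex.exp (-κ₀ * ((|x|:ℝ):ℂ)) - 1‖ := by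
          rw [← norm_neg]; congr 1; ring
        rw [h1m]
        apply exp_near_one _ hMε1
        rw [norm_mul, norm_neg, Complex.norm_real, Real.norm_eq_abs, abs_abs]
        exact mul_le_mul (by rw [hM]; linarith) hxε hxabs hM0.le
      calc ‖_‖ ≤ _ := tri4 _ _ _ _
        _ ≤ (Cm / a) * (2 * (M * ε)) + (1 + Cm / a) * (2 * (M * ε)) + 2 * Cm * ε
              + 2 * (M * ε) := by
            exact add_le_add (add_le_add (add_le_add b1 b2) b3) b4
        _ = (Cm / a * (2 * M) + (1 + Cm / a) * (2 * M) + 2 * Cm + 2 * M) * ε := by ring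
        _ ≤ C * ε := mul_le_mul_of_nonneg_right hCd hε0.le
    · -- right region
      have hx : ε < x := not_le.mp h2
      have hx0 : 0 < x := lt_trans hε0 hx
      have hfT : fTwo αm ε (κ ε) x =
          (Complex.exp (2 * κ ε * ε) +
            (αm / (2 * κ ε)) * (Complex.exp (2 * κ ε * ε) - Complex.exp (-2 * κ ε * ε))) *
            Complex.exp (-κ ε * x) := by
        simp only [fTwo]
        rw [if_neg h1, if_neg h2]
      have hf₀ : f₀ x = Complex.exp (-κ₀ * x) := by
        show Complex.exp _ = _
        congr 1
        rw [hκ₀, abs_of_pos hx0]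
        push_cast
        ring
      rw [hfT, hf₀]
      have hid : (Complex.exp (2 * κ ε * ε) +
            (αm / (2 * κ ε)) * (Complex.exp (2 * κ ε * ε) - Complex.exp (-2 * κ ε * ε))) *
            Complex.exp (-κ ε * x) - Complex.exp (-κ₀ * x)
          = ((Complex.exp (2 * κ ε * ε) - 1) +
              (αm / (2 * κ ε)) * ((Complex.exp (2 * κ ε * ε) - 1) -
                (Complex.exp (-2 * κ ε * ε) - 1))) * Complex.exp (-κ ε * x)
            + (Complex.exp (-κ ε * x) - Complex.exp (-κ₀ * x)) := by ring
      rw [hid]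
      have hexpx : ‖Complex.exp (-κ ε * (x:ℂ))‖ ≤ 1 := by
        rw [Complex.norm_exp, Real.exp_le_one_iff]
        have h9 : (-κ ε * (x:ℂ)).re = -(κ ε).re * x := by simp [Complex.mul_re]
        rw [h9]
        have h10 : 0 ≤ (κ ε).re * x := mul_nonneg hκre.le hx0.le
        linarith
      have hγ : ‖(Complex.exp (2 * κ ε * ε) - 1) +
              (αm / (2 * κ ε)) * ((Complex.exp (2 * κ ε * ε) - 1) -
                (Complex.exp (-2 * κ ε * ε) - 1))‖
            ≤ 4 * M * ε + 4 * Cm * ε := by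
        have hdiv : ‖αm / (2 * κ ε)‖ = Cm / (2 * ‖κ ε‖) := by
          rw [norm_div, norm_mul, Complex.norm_two, hCm]
        calc ‖_‖
            ≤ ‖Complex.exp (2 * κ ε * (ε:ℂ)) - 1‖ +
              ‖αm / (2 * κ ε)‖ *
                ‖(Complex.exp (2 * κ ε * (ε:ℂ)) - 1) -
                  (Complex.exp (-2 * κ ε * (ε:ℂ)) - 1)‖ := by
              rw [← norm_mul]; exact norm_add_le _ _
          _ ≤ 2 * (2 * ‖κ ε‖ * ε) + (Cm / (2 * ‖κ ε‖)) *
                (2 * (2 * ‖κ ε‖ * ε) + 2 * (2 * ‖κ ε‖ * ε)) := by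
              apply add_le_add e2
              rw [hdiv]
              apply mul_le_mul_of_nonneg_left _ (by positivity)
              calc ‖(Complex.exp (2 * κ ε * (ε:ℂ)) - 1) -
                    (Complex.exp (-2 * κ ε * (ε:ℂ)) - 1)‖
                  ≤ ‖Complex.exp (2 * κ ε * (ε:ℂ)) - 1‖ +
                    ‖Complex.exp (-2 * κ ε * (ε:ℂ)) - 1‖ := by
                    have h9 := norm_sub_le_norm_sub_add_norm_sub (Complex.exp (2 * κ ε * (ε:ℂ)) - 1) 0
                      (Complex.exp (-2 * κ ε * (ε:ℂ)) - 1)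
                    simpa [norm_sub_rev] using h9
                _ ≤ 2 * (2 * ‖κ ε‖ * ε) + 2 * (2 * ‖κ ε‖ * ε) :=
                    add_le_add e2 e1
          _ = 2 * (2 * ‖κ ε‖ * ε) + 4 * Cm * ε := by
              rw [div_mul_eq_mul_div]
              congr 1
              rw [div_eq_iff (ne_of_gt (by positivity : (0:ℝ) < 2 * ‖κ ε‖))]
              ring
          _ ≤ 4 * M * ε + 4 * Cm * ε := by linarith [h2κε]
      have htail : ‖Complex.exp (-κ ε * (x:ℂ)) - Complex.exp (-κ₀ * (x:ℂ))‖
            ≤ 4 * (B * ε) / a := by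
        have ht := tail_bound (κ ε) κ₀ a ha le_rfl hκre2 (-x) (by linarith)
        simp only [Complex.ofReal_neg, mul_neg, ← neg_mul] at ht
        calc ‖Complex.exp (-κ ε * (x:ℂ)) - Complex.exp (-κ₀ * (x:ℂ))‖
            ≤ 4 * ‖κ ε - κ₀‖ / a := ht
          _ ≤ 4 * (B * ε) / a := by gcongr
      calc ‖_‖
          ≤ ‖((Complex.exp (2 * κ ε * ε) - 1) +
              (αm / (2 * κ ε)) * ((Complex.exp (2 * κ ε * ε) - 1) -
                (Complex.exp (-2 * κ ε * ε) - 1))) * Complex.exp (-κ ε * x)‖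
            + ‖Complex.exp (-κ ε * x) - Complex.exp (-κ₀ * x)‖ :=
            norm_add_le _ _
        _ ≤ (4 * M * ε + 4 * Cm * ε) * 1 + 4 * (B * ε) / a := by
            rw [norm_mul]
            apply add_le_add _ htail
            apply mul_le_mul hγ hexpx (norm_nonneg _) (by positivity)
        _ = (4 * M + 4 * Cm + 4 * B / a) * ε := by ring
        _ ≤ C * ε := mul_le_mul_of_nonneg_right hCr hε0.le
end

section
/- There exist ε₀ > 0 and C > 0 such that for every ε ∈ (0, ε₀) there exist λ_ε ∈ ℂ and a function ψ : ℝ → ℂ, not identically zero, with the following properties: ψ is continuous on ℝ and square-integrable; ψ is twice differentiable on ℝ∖{-ε, ε} with -ψ''(x) = λ_ε·ψ(x) for every x ∉ {-ε, ε}; the one-sided derivatives of ψ at ±ε exist and satisfy ψ'(ε⁺) - ψ'(ε⁻) = α₊·ψ(ε) and ψ'(-ε⁺) - ψ'(-ε⁻) = α₋·ψ(-ε); and |λ_ε - λ₀ + (α₊+α₋)α₊α₋·ε| ≤ C·ε². -/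
set_option maxHeartbeats 1000000

open MeasureTheory Set Complex Filter
open scoped NNReal


lemma int_exp_Iic {b : ℝ} (hb : 0 < b) (a : ℝ) : IntegrableOn (fun x => Real.exp (b*x)) (Iic a) := by
  have h1 : Integrable ((Iic (b*a)).indicator Real.exp) :=
    (integrableOn_exp_Iic (b*a)).integrable_indicator measurableSet_Iic
  have h2 := h1.comp_mul_left' hb.ne'
  apply (integrable_indicator_iff measurableSet_Iic).1
  convert h2 using 1
  on_goal 1 => rfl
  funext x
  by_cases hx : x ≤ a
  · simp [indicator, hx, mul_le_mul_of_nonneg_left hx hb.le]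
  · have h3 : ¬ (b*x ≤ b*a) := fun h => hx (le_of_mul_le_mul_left h hb)
    simp [indicator, hx, h3]

lemma hasDerivAt_cexpr (c : ℂ) (x : ℝ) :
    HasDerivAt (fun y : ℝ => Complex.exp (c * y)) (c * Complex.exp (c * x)) x := by
  have h0 : HasDerivAt (fun y : ℝ => (y : ℂ)) 1 x := by
    simpa using (hasDerivAt_id x).ofReal_comp
  have h1 : HasDerivAt (fun y : ℝ => c * (y:ℂ)) c x := by simpa using h0.const_mul c
  simpa [mul_comm] using h1.cexp

lemma ode_piece {ψ F F' F'' : ℝ → ℂ} {x : ℝ} {lam : ℂ}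
    (hFF' : ∀ y, HasDerivAt F (F' y) y) (hF'F'' : ∀ y, HasDerivAt F' (F'' y) y)
    (heq : ψ =ᶠ[nhds x] F) (hode : -(F'' x) = lam * F x) :
    DifferentiableAt ℝ ψ x ∧ DifferentiableAt ℝ (deriv ψ) x ∧
      -(deriv (deriv ψ) x) = lam * ψ x := by
  have hdF : deriv F = F' := funext fun y => (hFF' y).deriv
  have h1 : deriv ψ =ᶠ[nhds x] F' := heq.deriv.trans (by rw [hdF])
  refine ⟨(hFF' x).differentiableAt.congr_of_eventuallyEq heq,
    (hF'F'' x).differentiableAt.congr_of_eventuallyEq h1, ?_⟩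
  have h2 : deriv (deriv ψ) x = F'' x := by
    rw [h1.deriv_eq, (hF'F'' x).deriv]
  rw [h2, heq.self_of_nhds, hode]

lemma construct (αp αm : ℂ) (ε : ℝ) (hε : 0 < ε) (k : ℂ) (hk : 0 < k.re)
    (hsec : (2*k+αp)*(2*k+αm) * Complex.exp (k*(ε:ℂ))^4 = αp*αm) :
    ∃ ψ : ℝ → ℂ, (∃ x : ℝ, ψ x ≠ 0) ∧ Continuous ψ ∧ MemLp ψ 2 (volume : Measure ℝ) ∧
      (∀ x : ℝ, x ≠ -ε → x ≠ ε → DifferentiableAt ℝ ψ x ∧ DifferentiableAt ℝ (deriv ψ) x ∧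
        -(deriv (deriv ψ) x) = (-(k^2)) * ψ x) ∧
      (∃ Dpp Dpm Dmp Dmm : ℂ, HasDerivWithinAt ψ Dpp (Ioi ε) ε ∧ HasDerivWithinAt ψ Dpm (Iio ε) ε ∧
        HasDerivWithinAt ψ Dmp (Ioi (-ε)) (-ε) ∧ HasDerivWithinAt ψ Dmm (Iio (-ε)) (-ε) ∧
        Dpp - Dpm = αp * ψ ε ∧ Dmp - Dmm = αm * ψ (-ε)) := by
  have hk0 : k ≠ 0 := fun h => by simp [h] at hk
  set E : ℂ := Complex.exp (k*(ε:ℂ)) with hEdef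
  have hE : E ≠ 0 := Complex.exp_ne_zero _
  have hEE : E * E⁻¹ = 1 := mul_inv_cancel₀ hE
  set A : ℂ := (2*k+αm)*E^2 with hAdef
  set B : ℂ := -αm with hBdef
  set D : ℂ := A*E^2 + B with hDdef
  set c1 : ℂ := 2*k*E^2 with hc1def
  set f1 : ℝ → ℂ := fun x => c1 * Complex.exp (k*x) with hf1
  set f2 : ℝ → ℂ := fun x => A * Complex.exp (k*x) + B * Complex.exp ((-k)*x) with hf2
  set f3 : ℝ → ℂ := fun x => D * Complex.exp ((-k)*x) with hf3
  set ψ : ℝ → ℂ := fun x => if x ≤ -ε then f1 x else if x ≤ ε then f2 x else f3 x with hψdef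
  have hme : -ε < ε := by linarith
  -- boundary exponential values
  have e1 : Complex.exp (k*((-ε:ℝ):ℂ)) = E⁻¹ := by
    rw [← Complex.exp_neg]; push_cast; ring_nf
  have e2 : Complex.exp ((-k)*((-ε:ℝ):ℂ)) = E := by push_cast; ring_nf; exact hEdef.symm
  have e3 : Complex.exp ((-k)*((ε:ℝ):ℂ)) = E⁻¹ := by
    rw [← Complex.exp_neg]; push_cast; ring_nf
  -- boundary matching
  have hb1 : f1 (-ε) = f2 (-ε) := by
    simp only [hf1, hf2, e1, e2, hAdef, hBdef, hc1def]
    linear_combination (-(αm*E)) * hEE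
  have hb2 : f2 ε = f3 ε := by
    simp only [hf2, hf3, e3, hDdef, hAdef, hBdef]
    rw [show Complex.exp (k*(ε:ℂ)) = E from rfl]
    linear_combination (-((2*k+αm)*E^2*E)) * hEE
  -- continuity
  have hcf1 : Continuous f1 := by
    exact continuous_const.mul (Complex.continuous_exp.comp (continuous_const.mul Complex.continuous_ofReal))
  have hcf2 : Continuous f2 := by
    exact (continuous_const.mul (Complex.continuous_exp.comp (continuous_const.mul Complex.continuous_ofReal))).add
      (continuous_const.mul (Complex.continuous_exp.comp (continuous_const.mul Complex.continuous_ofReal)))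
  have hcf3 : Continuous f3 := by
    exact continuous_const.mul (Complex.continuous_exp.comp (continuous_const.mul Complex.continuous_ofReal))
  have hcont : Continuous ψ := by
    rw [hψdef]
    apply Continuous.if_le (hcf1) (Continuous.if_le hcf2 hcf3 continuous_id continuous_const
      (fun x hx => by simp only [id] at hx; rw [hx, hb2])) continuous_id continuous_const
    intro x hx
    simp only [id] at hx
    rw [hx]
    simp only [id_eq]
    rw [if_pos hme.le, hb1]
  -- values at the two points
  have hv1 : ψ (-ε) = f1 (-ε) := by simp [hψdef]
  have hv2 : ψ ε = f2 ε := by simp [hψdef, not_le.2 hme]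
  have hψme : ψ (-ε) = c1 * E⁻¹ := by rw [hv1]; simp only [hf1]; rw [e1]
  have hψe : ψ ε = A*E + B*E⁻¹ := by
    rw [hv2]; simp only [hf2]; rw [e3, ← hEdef]
  -- eventual equalities on open regions
  have heq1 : ∀ y ∈ Iio (-ε), ψ y = f1 y := fun y hy => by
    simp only [hψdef]; rw [if_pos (le_of_lt hy)]
  have heq2 : ∀ y ∈ Ioo (-ε) ε, ψ y = f2 y := fun y hy => by
    simp only [hψdef]; rw [if_neg (not_le.2 hy.1), if_pos hy.2.le]
  have heq3 : ∀ y ∈ Ioi ε, ψ y = f3 y := fun y hy => by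
    simp only [hψdef]
    rw [if_neg (not_le.2 (lt_trans hme hy)), if_neg (not_le.2 hy)]
  -- derivative data for the pieces
  have hd1 : ∀ y : ℝ, HasDerivAt f1 (c1 * (k * Complex.exp (k*y))) y :=
    fun y => (hasDerivAt_cexpr k y).const_mul c1
  have hd1' : ∀ y : ℝ, HasDerivAt (fun y : ℝ => c1 * (k * Complex.exp (k*y)))
      (c1 * (k * (k * Complex.exp (k*y)))) y :=
    fun y => ((hasDerivAt_cexpr k y).const_mul k).const_mul c1
  have hd2 : ∀ y : ℝ, HasDerivAt f2
      (A * (k * Complex.exp (k*y)) + B * ((-k) * Complex.exp ((-k)*y))) y :=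
    fun y => ((hasDerivAt_cexpr k y).const_mul A).add ((hasDerivAt_cexpr (-k) y).const_mul B)
  have hd2' : ∀ y : ℝ, HasDerivAt (fun y : ℝ => A * (k * Complex.exp (k*y)) + B * ((-k) * Complex.exp ((-k)*y)))
      (A * (k * (k * Complex.exp (k*y))) + B * ((-k) * ((-k) * Complex.exp ((-k)*y)))) y :=
    fun y => (((hasDerivAt_cexpr k y).const_mul k).const_mul A).add
      ((((hasDerivAt_cexpr (-k) y).const_mul (-k)).const_mul B))
  have hd3 : ∀ y : ℝ, HasDerivAt f3 (D * ((-k) * Complex.exp ((-k)*y))) y :=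
    fun y => (hasDerivAt_cexpr (-k) y).const_mul D
  have hd3' : ∀ y : ℝ, HasDerivAt (fun y : ℝ => D * ((-k) * Complex.exp ((-k)*y)))
      (D * ((-k) * ((-k) * Complex.exp ((-k)*y)))) y :=
    fun y => ((hasDerivAt_cexpr (-k) y).const_mul (-k)).const_mul D
  refine ⟨ψ, ⟨-ε, ?_⟩, hcont, ?_, ?_, ?_⟩
  · -- nonzero
    rw [hψme]
    exact mul_ne_zero (by simp only [hc1def]; exact mul_ne_zero (by simpa using hk0) (pow_ne_zero _ hE))
      (inv_ne_zero hE)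
  · -- MemLp
    have hre : 0 < 2*k.re := by linarith
    have hnorm1 : ∀ (c : ℂ) (x : ℝ), ‖c * Complex.exp (k*x)‖^2 = ‖c‖^2 * Real.exp ((2*k.re)*x) := by
      intro c x
      rw [norm_mul, mul_pow]
      simp only [Complex.norm_exp]
      congr 1
      rw [pow_two, ← Real.exp_add]
      congr 1
      simp [Complex.mul_re]
      ring
    have hnorm3 : ∀ (c : ℂ) (x : ℝ), ‖c * Complex.exp ((-k)*x)‖^2 = ‖c‖^2 * Real.exp (-(2*k.re)*x) := by
      intro c x
      rw [norm_mul, mul_pow]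
      simp only [Complex.norm_exp]
      congr 1
      rw [pow_two, ← Real.exp_add]
      congr 1
      simp [Complex.mul_re]
      ring
    apply (memLp_two_iff_integrable_sq_norm hcont.aestronglyMeasurable).2
    have hI1 : IntegrableOn (fun x => ‖ψ x‖^2) (Iic (-ε)) volume := by
      apply IntegrableOn.congr_fun (((int_exp_Iic hre (-ε)).const_mul (‖c1‖^2)) : IntegrableOn _ _ _) ?_ measurableSet_Iic
      intro x hx
      have hx1 : ψ x = f1 x := by simp only [hψdef]; rw [if_pos (mem_Iic.1 hx)]
      simp only [hx1, hf1]
      exact (hnorm1 c1 x).symm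
    have hI2 : IntegrableOn (fun x => ‖ψ x‖^2) (Icc (-ε) ε) volume :=
      (hcont.norm.pow 2).integrableOn_Icc
    have hI3 : IntegrableOn (fun x => ‖ψ x‖^2) (Ioi ε) volume := by
      apply IntegrableOn.congr_fun (((exp_neg_integrableOn_Ioi ε hre).const_mul (‖D‖^2)) : IntegrableOn _ _ _) ?_ measurableSet_Ioi
      intro x hx
      simp only [heq3 x hx, hf3]
      exact (hnorm3 D x).symm
    have hcover : (univ : Set ℝ) = Iic (-ε) ∪ (Icc (-ε) ε ∪ Ioi ε) := by
      ext x
      simp only [mem_univ, mem_union, mem_Iic, mem_Icc, mem_Ioi, true_iff]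
      rcases le_or_gt x (-ε) with h | h
      · exact Or.inl h
      · rcases le_or_gt x ε with h2 | h2
        · exact Or.inr (Or.inl ⟨h.le, h2⟩)
        · exact Or.inr (Or.inr h2)
    exact integrableOn_univ.1 (hcover ▸ (hI1.union (hI2.union hI3)))
  · -- ODE away from the two points
    intro x hxm hxp
    rcases lt_trichotomy x (-ε) with h | h | h
    · exact ode_piece hd1 hd1'
        (Filter.eventuallyEq_of_mem (isOpen_Iio.mem_nhds h) heq1)
        (by simp only [hf1]; ring)
    · exact absurd h hxm
    · rcases lt_trichotomy x ε with h2 | h2 | h2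
      · exact ode_piece hd2 hd2'
          (Filter.eventuallyEq_of_mem (isOpen_Ioo.mem_nhds ⟨h, h2⟩) heq2)
          (by simp only [hf2]; ring)
      · exact absurd h2 hxp
      · exact ode_piece hd3 hd3'
          (Filter.eventuallyEq_of_mem (isOpen_Ioi.mem_nhds h2) heq3)
          (by simp only [hf3]; ring)
  · -- jump conditions
    refine ⟨D*((-k)*E⁻¹), A*(k*E) + B*((-k)*E⁻¹), A*(k*E⁻¹) + B*((-k)*E), c1*(k*E⁻¹),
      ?_, ?_, ?_, ?_, ?_, ?_⟩
    · have h := (hd3 ε).hasDerivWithinAt (s := Ioi ε)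
      rw [e3] at h
      exact h.congr heq3 (hv2.trans hb2)
    · have h := (hd2 ε).hasDerivWithinAt (s := Ioo (-ε) ε)
      rw [e3, ← hEdef] at h
      have h2 := h.congr heq2 hv2
      apply h2.mono_of_mem_nhdsWithin
      rw [← Ioi_inter_Iio]
      exact Filter.inter_mem (mem_nhdsWithin_of_mem_nhds (isOpen_Ioi.mem_nhds hme)) self_mem_nhdsWithin
    · have h := (hd2 (-ε)).hasDerivWithinAt (s := Ioo (-ε) ε)
      rw [e1, e2] at h
      have h2 := h.congr heq2 (hv1.trans hb1)
      apply h2.mono_of_mem_nhdsWithin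
      rw [← Ioi_inter_Iio]
      exact Filter.inter_mem self_mem_nhdsWithin (mem_nhdsWithin_of_mem_nhds (isOpen_Iio.mem_nhds hme))
    · have h := (hd1 (-ε)).hasDerivWithinAt (s := Iio (-ε))
      rw [e1] at h
      exact h.congr heq1 hv1
    · rw [hψe]
      simp only [hAdef, hBdef, hDdef]
      linear_combination ((k+αp)*(2*k+αm)*E^3) * hEE + (-E⁻¹) * hsec
    · rw [hψme]
      simp only [hAdef, hBdef, hc1def]
      linear_combination (-(αm*k*E)) * hEE


lemma exists_k (αp αm : ℂ) (hα : (αp + αm).re < 0) :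
    ∃ ε₀ > (0:ℝ), ∃ C > (0:ℝ), ∀ ε ∈ Ioo (0:ℝ) ε₀, ∃ k : ℂ, 0 < k.re ∧
      (2*k+αp)*(2*k+αm) * Complex.exp (k*(ε:ℂ))^4 = αp*αm ∧
      ‖-(k^2) - (-(αp + αm) ^ 2 / 4) + (αp + αm) * αp * αm * ε‖ ≤ C * ε^2 := by
  set k₀ : ℂ := -(αp+αm)/2 with hk₀def
  have hρeq : k₀.re = -(αp+αm).re/2 := by
    rw [hk₀def]
    rw [show -(αp+αm)/2 = -(αp+αm) * (2:ℝ)⁻¹ by push_cast; ring]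
    simp [Complex.mul_re]
    ring
  set ρ : ℝ := k₀.re with hρdef
  have hρ : 0 < ρ := by rw [hρeq]; linarith
  set P : ℝ := ‖αp*αm‖ with hPdef
  have hP0 : 0 ≤ P := norm_nonneg _
  set M : ℝ := ‖k₀‖ + ρ with hMdef
  have hρabs : ρ ≤ ‖k₀‖ := Complex.re_le_norm k₀
  have hM : 0 < M := by positivity
  have hρM : ρ ≤ M := by rw [hMdef]; linarith
  refine ⟨min (ρ/(4*(P+1))) (min (1/(4*M)) (ρ/(32*(P+1)))), by positivity,
    4*(P+1)^2 + ‖αp+αm‖ * (4*(P+1)*M) + 1, by positivity, ?_⟩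
  rintro ε ⟨hε, hεs⟩
  -- consequences of smallness
  have hε1 : 2*(P+1)*ε ≤ ρ/2 := by
    have h := hεs.le.trans (min_le_left _ _)
    rw [le_div_iff₀ (by positivity)] at h
    nlinarith
  have hε2 : 4*M*ε ≤ 1 := by
    have h := hεs.le.trans ((min_le_right _ _).trans (min_le_left _ _))
    rw [le_div_iff₀ (by positivity)] at h
    nlinarith
  have hε3 : 32*(P+1)*ε ≤ ρ := by
    have h := hεs.le.trans ((min_le_right _ _).trans (min_le_right _ _))
    rw [le_div_iff₀ (by positivity)] at h
    nlinarith
  set R : ℝ := 2*P*ε with hRdef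
  have hRnn : 0 ≤ R := by positivity
  have hRρ : R ≤ ρ/2 := by nlinarith
  set Φ : ℂ → ℂ := fun δ => αp*αm * (Complex.exp (-(4*(k₀+δ)*(ε:ℂ))) - 1) / (4*(k₀+δ)) with hΦdef
  -- basic bounds on k₀ + δ for δ in the ball
  have hqlb : ∀ δ : ℂ, ‖δ‖ ≤ R → ρ/2 ≤ ‖k₀+δ‖ := by
    intro δ hδ
    have h := norm_add_le (k₀+δ) (-δ)
    simp only [add_neg_cancel_right, norm_neg] at h
    linarith
  have hqub : ∀ δ : ℂ, ‖δ‖ ≤ R → ‖k₀+δ‖ ≤ M := by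
    intro δ hδ
    have h := norm_add_le k₀ δ
    rw [hMdef]
    linarith
  have hqne : ∀ δ : ℂ, ‖δ‖ ≤ R → k₀ + δ ≠ 0 := by
    intro δ hδ h0
    have := hqlb δ hδ
    rw [h0] at this
    simp at this
    linarith
  have habsz : ∀ δ : ℂ, ‖-(4*(k₀+δ)*(ε:ℂ))‖ = 4*‖k₀+δ‖*ε := by
    intro δ
    rw [norm_neg, norm_mul, norm_mul]
    simp [Complex.norm_real, abs_of_pos hε]
  have hzle : ∀ δ : ℂ, ‖δ‖ ≤ R → ‖-(4*(k₀+δ)*(ε:ℂ))‖ ≤ 1 := by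
    intro δ hδ
    rw [habsz δ]
    have := hqub δ hδ
    nlinarith
  -- mapping into the ball
  have hmaps : ∀ δ : ℂ, ‖δ‖ ≤ R → ‖Φ δ‖ ≤ R := by
    intro δ hδ
    have hq := hqlb δ hδ
    have hq0 : (0:ℝ) < ‖k₀+δ‖ := by linarith
    have he1 : ‖Complex.exp (-(4*(k₀+δ)*(ε:ℂ))) - 1‖ ≤
        2*(4*‖k₀+δ‖*ε) := by
      rw [← habsz δ]
      exact Complex.norm_exp_sub_one_le (hzle δ hδ)
    have habsΦ : ‖Φ δ‖ =
        P * ‖Complex.exp (-(4*(k₀+δ)*(ε:ℂ))) - 1‖ / (4*‖k₀+δ‖) := by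
      rw [hΦdef, hPdef]
      simp only [norm_div, norm_mul]
      norm_num
    rw [habsΦ, hRdef]
    rw [div_le_iff₀ (by positivity)]
    nlinarith [norm_nonneg (Complex.exp (-(4*(k₀+δ)*(ε:ℂ))) - 1)]
  -- contraction estimate
  have hlip : ∀ δ₁ δ₂ : ℂ, ‖δ₁‖ ≤ R → ‖δ₂‖ ≤ R →
      ‖Φ δ₁ - Φ δ₂‖ ≤ (1/2) * ‖δ₁ - δ₂‖ := by
    intro δ₁ δ₂ h1 h2
    have hq1 := hqlb δ₁ h1; have hq2 := hqlb δ₂ h2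
    have hub1 := hqub δ₁ h1; have hub2 := hqub δ₂ h2
    have hne1 := hqne δ₁ h1; have hne2 := hqne δ₂ h2
    have hq10 : (0:ℝ) < ‖k₀+δ₁‖ := by linarith
    have hq20 : (0:ℝ) < ‖k₀+δ₂‖ := by linarith
    set z1 : ℂ := -(4*(k₀+δ₁)*(ε:ℂ)) with hz1
    set z2 : ℂ := -(4*(k₀+δ₂)*(ε:ℂ)) with hz2
    set d : ℝ := ‖δ₁ - δ₂‖ with hd
    have hd0 : 0 ≤ d := norm_nonneg _
    have hd2R : d ≤ 2*R := by
      have := norm_sub_le_norm_sub_add_norm_sub δ₁ 0 δ₂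
      simp at this
      rw [hd]
      calc ‖δ₁ - δ₂‖ ≤ ‖δ₁‖ + ‖δ₂‖ := by
            have h := norm_add_le δ₁ (-δ₂)
            simpa [sub_eq_add_neg, norm_neg] using h
        _ ≤ 2*R := by linarith
    -- |e^{z1} - e^{z2}| bound
    have hz12 : z1 - z2 = -(4*(δ₁-δ₂)*(ε:ℂ)) := by rw [hz1, hz2]; ring
    have habsz12 : ‖z1 - z2‖ = 4*d*ε := by
      rw [hz12, norm_neg, norm_mul, norm_mul]
      simp [Complex.norm_real, abs_of_pos hε, hd]
    have hz12le : ‖z1 - z2‖ ≤ 1 := by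
      rw [habsz12]
      have hPe : 16*P*ε ≤ ρ/2 := by nlinarith
      have : 4*d*ε ≤ 4*(2*R)*ε := by nlinarith
      have hMε : M*ε ≤ 1/4 := by nlinarith
      calc 4*d*ε ≤ 4*(2*R)*ε := this
        _ = (16*P*ε)*ε := by rw [hRdef]; ring
        _ ≤ (ρ/2)*ε := by nlinarith
        _ ≤ (M/2)*ε := by nlinarith
        _ ≤ 1/8 := by nlinarith
        _ ≤ 1 := by norm_num
    have hexpz2 : ‖Complex.exp z2‖ ≤ 3 := by
      rw [Complex.norm_exp]
      have h1 : z2.re ≤ ‖z2‖ := Complex.re_le_norm z2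
      have h2 : ‖z2‖ ≤ 1 := hzle δ₂ h2
      calc Real.exp z2.re ≤ Real.exp 1 := Real.exp_le_exp.2 (by linarith)
        _ ≤ 3 := by
            have := Real.exp_one_lt_d9
            linarith
    have hdiff : ‖Complex.exp z1 - Complex.exp z2‖ ≤ 24*ε*d := by
      have hsplit : Complex.exp z1 - Complex.exp z2 = Complex.exp z2 * (Complex.exp (z1-z2) - 1) := by
        rw [mul_sub, mul_one, ← Complex.exp_add]
        congr 2
        ring
      rw [hsplit, norm_mul]
      have h3 : ‖Complex.exp (z1-z2) - 1‖ ≤ 2*‖z1-z2‖ :=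
        Complex.norm_exp_sub_one_le hz12le
      calc ‖Complex.exp z2‖ * ‖Complex.exp (z1-z2) - 1‖
          ≤ 3 * (2*‖z1-z2‖) := by
            apply mul_le_mul hexpz2 h3 (norm_nonneg _) (by norm_num)
        _ = 6 * ‖z1-z2‖ := by ring
        _ = 6 * (4*d*ε) := by rw [habsz12]
        _ = 24*ε*d := by ring
    have habs2 : ‖Complex.exp z2 - 1‖ ≤ 8*‖k₀+δ₂‖*ε := by
      have h3 := Complex.norm_exp_sub_one_le (hzle δ₂ h2)
      rw [habsz δ₂] at h3
      calc ‖Complex.exp z2 - 1‖ ≤ 2*(4*‖k₀+δ₂‖*ε) := h3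
        _ = 8*‖k₀+δ₂‖*ε := by ring
    -- the identity
    have hid : Φ δ₁ - Φ δ₂ = (αp*αm/4) * ((Complex.exp z1 - Complex.exp z2)/(k₀+δ₁)
        + (Complex.exp z2 - 1)*(δ₂-δ₁)/((k₀+δ₁)*(k₀+δ₂))) := by
      rw [hΦdef]
      simp only [hz1, hz2]
      field_simp
      ring
    have babs : ‖αp*αm/4‖ = P/4 := by
      rw [norm_div, hPdef]
      norm_num
    have htri : ‖(Complex.exp z1 - Complex.exp z2)/(k₀+δ₁)
        + (Complex.exp z2 - 1)*(δ₂-δ₁)/((k₀+δ₁)*(k₀+δ₂))‖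
        ≤ (24*ε*d)/(ρ/2) + (8*‖k₀+δ₂‖*ε*d)/((ρ/2)*‖k₀+δ₂‖) := by
      refine (norm_add_le _ _).trans (add_le_add ?_ ?_)
      · rw [norm_div]
        exact div_le_div₀ (by positivity) hdiff (by linarith) hq1
      · rw [norm_div, norm_mul, norm_mul]
        have hcomm : ‖δ₂ - δ₁‖ = d := by rw [hd, norm_sub_rev]
        rw [hcomm]
        apply div_le_div₀ (by positivity)
        · exact mul_le_mul_of_nonneg_right habs2 hd0
        · positivity
        · exact mul_le_mul hq1 le_rfl (norm_nonneg _) (by linarith)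
    calc ‖Φ δ₁ - Φ δ₂‖
        = (P/4) * ‖(Complex.exp z1 - Complex.exp z2)/(k₀+δ₁)
          + (Complex.exp z2 - 1)*(δ₂-δ₁)/((k₀+δ₁)*(k₀+δ₂))‖ := by rw [hid, norm_mul, babs]
      _ ≤ (P/4) * ((24*ε*d)/(ρ/2) + (8*‖k₀+δ₂‖*ε*d)/((ρ/2)*‖k₀+δ₂‖)) := by
          exact mul_le_mul_of_nonneg_left htri (by positivity)
      _ = 16*P*ε*d/ρ := by
          rw [div_add_div _ _ (by linarith : (ρ/2:ℝ) ≠ 0) (by positivity : ((ρ/2)*‖k₀+δ₂‖:ℝ) ≠ 0)]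
          field_simp
          ring
      _ ≤ (1/2)*d := by
          rw [div_le_iff₀ hρ]
          nlinarith
  by_cases hp : αp*αm = 0
  · refine ⟨k₀, hρ, ?_, ?_⟩
    · have h1 : 2*k₀ + αp = -αm := by rw [hk₀def]; ring
      have h2 : 2*k₀ + αm = -αp := by rw [hk₀def]; ring
      rw [h1, h2]
      linear_combination (Complex.exp (k₀*(ε:ℂ))^4 - 1) * hp
    · have hT : -(k₀^2) - (-(αp + αm) ^ 2 / 4) + (αp + αm) * αp * αm * (ε:ℂ) = 0 := by
        rw [hk₀def]
        linear_combination ((αp+αm)*(ε:ℂ)) * hp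
      rw [hT]
      simp only [norm_zero]
      positivity
  · -- Banach fixed point on the closed ball of radius R
    set S := Metric.closedBall (0:ℂ) R with hSdef
    haveI hne : Nonempty S := ⟨⟨0, Metric.mem_closedBall_self hRnn⟩⟩
    haveI : CompleteSpace S := Metric.isClosed_closedBall.completeSpace_coe
    have hmem : ∀ d : ↥S, ‖d.1‖ ≤ R := fun d => by
      have h := d.2
      simp only [hSdef, mem_closedBall_zero_iff] at h
      exact h
    set F : ↥S → ↥S := fun d => ⟨Φ d.1, by
      simp only [hSdef, mem_closedBall_zero_iff]
      exact hmaps d.1 (hmem d)⟩ with hFdef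
    have hFlip : LipschitzWith (1/2 : ℝ≥0) F := by
      apply LipschitzWith.of_dist_le_mul
      intro a b
      rw [Subtype.dist_eq, Subtype.dist_eq, hFdef]
      simp only
      rw [Complex.dist_eq, Complex.dist_eq]
      have hc : ((1/2 : ℝ≥0) : ℝ) = 1/2 := by norm_num
      rw [hc]
      exact hlip a.1 b.1 (hmem a) (hmem b)
    have hcontr : ContractingWith (1/2) F :=
      ⟨by rw [← NNReal.coe_lt_coe]; norm_num, hFlip⟩
    set δs := ContractingWith.fixedPoint F hcontr with hδs
    set δ : ℂ := δs.1 with hδdef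
    have hδR : ‖δ‖ ≤ R := hmem δs
    have hfix : Φ δ = δ := congrArg Subtype.val hcontr.fixedPoint_isFixedPt
    have hq := hqlb δ hδR
    have hqM := hqub δ hδR
    have hq0 : (0:ℝ) < ‖k₀+δ‖ := by linarith
    have hkne : k₀ + δ ≠ 0 := hqne δ hδR
    have h4ne : (4:ℂ)*(k₀+δ) ≠ 0 := mul_ne_zero (by norm_num) hkne
    -- the fixed point equation, cleared of denominators
    have hΔ : δ*(4*(k₀+δ)) = αp*αm*(Complex.exp (-(4*(k₀+δ)*(ε:ℂ))) - 1) := by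
      have h := hfix
      simp only [hΦdef] at h
      exact ((div_eq_iff h4ne).1 h).symm
    have hrek : 0 < (k₀+δ).re := by
      rw [Complex.add_re]
      have h1 : -(‖δ‖) ≤ δ.re := (abs_le.1 (Complex.abs_re_le_norm δ)).1
      have : ρ/2 ≤ ρ + δ.re := by linarith
      linarith
    refine ⟨k₀ + δ, hrek, ?_, ?_⟩
    · -- secular equation
      have hxy : Complex.exp (-(4*(k₀+δ)*(ε:ℂ))) * Complex.exp ((k₀+δ)*(ε:ℂ))^4 = 1 := by
        have h4 : Complex.exp ((k₀+δ)*(ε:ℂ))^4 = Complex.exp ((4:ℕ)*((k₀+δ)*(ε:ℂ))) := by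
          rw [Complex.exp_nat_mul]
        rw [h4, ← Complex.exp_add]
        rw [show -(4*(k₀+δ)*(ε:ℂ)) + (4:ℕ)*((k₀+δ)*(ε:ℂ)) = 0 by push_cast; ring]
        exact Complex.exp_zero
      linear_combination (Complex.exp ((k₀+δ)*(ε:ℂ))^4) * hΔ + (αp*αm) * hxy
        + ((4*k₀+4*δ)*Complex.exp ((k₀+δ)*(ε:ℂ))^4) * hk₀def
    · -- quantitative bound
      have hW : (δ + αp*αm*(ε:ℂ))*(4*(k₀+δ)) =
          αp*αm*(Complex.exp (-(4*(k₀+δ)*(ε:ℂ))) - 1 - (-(4*(k₀+δ)*(ε:ℂ)))) := by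
        linear_combination hΔ
      have habsW : ‖δ + αp*αm*(ε:ℂ)‖ * (4*‖k₀+δ‖) =
          P * ‖Complex.exp (-(4*(k₀+δ)*(ε:ℂ))) - 1 - (-(4*(k₀+δ)*(ε:ℂ)))‖ := by
        have h4q : ‖(4:ℂ)*(k₀+δ)‖ = 4*‖k₀+δ‖ := by
          rw [norm_mul]
          norm_num
        rw [← h4q, ← norm_mul, hW, norm_mul, ← hPdef]
      have hXz : ‖Complex.exp (-(4*(k₀+δ)*(ε:ℂ))) - 1 - (-(4*(k₀+δ)*(ε:ℂ)))‖
          ≤ ‖-(4*(k₀+δ)*(ε:ℂ))‖^2 := Complex.norm_exp_sub_one_sub_id_le (hzle δ hδR)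
      have habsz' := habsz δ
      have hWbound : ‖δ + αp*αm*(ε:ℂ)‖ ≤ 4*P*M*ε^2 := by
        have h1 : ‖δ + αp*αm*(ε:ℂ)‖ * (4*‖k₀+δ‖)
            ≤ P * (4*‖k₀+δ‖*ε)^2 := by
          rw [habsW, ← habsz']
          exact mul_le_mul_of_nonneg_left hXz hP0
        have h1' : P * (4*‖k₀+δ‖*ε)^2
            ≤ (4*P*M*ε^2)*(4*‖k₀+δ‖) := by
          nlinarith [mul_nonneg (mul_nonneg (mul_nonneg hP0 hq0.le)
            (by linarith : (0:ℝ) ≤ M - ‖k₀+δ‖)) (sq_nonneg ε)]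
        exact le_of_mul_le_mul_right (h1.trans h1') (by positivity)
      have hT : -((k₀+δ)^2) - (-(αp + αm) ^ 2 / 4) + (αp + αm) * αp * αm * (ε:ℂ) =
          -δ^2 + (αp+αm)*(δ + αp*αm*(ε:ℂ)) := by
        linear_combination (-(k₀ + 2*δ - (αp+αm)/2)) * hk₀def
      rw [hT]
      have htri2 : ‖-δ^2 + (αp+αm)*(δ + αp*αm*(ε:ℂ))‖
          ≤ ‖δ‖^2 + ‖αp+αm‖ * ‖δ + αp*αm*(ε:ℂ)‖ := by
        refine (norm_add_le _ _).trans ?_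
        rw [norm_neg, norm_pow, norm_mul]
      have hδsq : ‖δ‖^2 ≤ 4*(P+1)^2*ε^2 := by
        nlinarith [mul_self_le_mul_self (norm_nonneg δ) hδR, sq_nonneg ε, hP0, hε]
      have habsσ : (0:ℝ) ≤ ‖αp+αm‖ := norm_nonneg _
      calc ‖-δ^2 + (αp+αm)*(δ + αp*αm*(ε:ℂ))‖
          ≤ ‖δ‖^2 + ‖αp+αm‖ * ‖δ + αp*αm*(ε:ℂ)‖ := htri2
        _ ≤ 4*(P+1)^2*ε^2 + ‖αp+αm‖ * (4*P*M*ε^2) := by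
            refine add_le_add hδsq (mul_le_mul_of_nonneg_left hWbound habsσ)
        _ ≤ (4*(P+1)^2 + ‖αp+αm‖ * (4*(P+1)*M) + 1) * ε^2 := by
            nlinarith [mul_nonneg (mul_nonneg habsσ hM.le) (sq_nonneg ε), sq_nonneg ε]

/-- Classical formulation of the one-dimensional main theorem: for all small `ε > 0`, the
Schrödinger operator on the line with two delta interactions of couplings `α±` at `±ε`
has an eigenvalue `λ_ε` with eigenfunction `ψ` (continuous, square-integrable, satisfying
`-ψ'' = λ_ε ψ` away from `±ε` and the delta jump conditions at `±ε`), and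
`λ_ε = λ₀ - (α₊+α₋)α₊α₋ ε + O(ε²)` with `λ₀ = -(α₊+α₋)²/4`. -/
theorem stmt_11 (αp αm : ℂ) (hα : (αp + αm).re < 0) :
    ∃ ε₀ > (0 : ℝ), ∃ C > (0 : ℝ), ∀ ε ∈ Ioo (0 : ℝ) ε₀,
      ∃ lam : ℂ, ∃ ψ : ℝ → ℂ,
        (∃ x : ℝ, ψ x ≠ 0) ∧
        Continuous ψ ∧
        MemLp ψ 2 (volume : Measure ℝ) ∧
        (∀ x : ℝ, x ≠ -ε → x ≠ ε →
          DifferentiableAt ℝ ψ x ∧ DifferentiableAt ℝ (deriv ψ) x ∧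
            -(deriv (deriv ψ) x) = lam * ψ x) ∧
        (∃ Dpp Dpm Dmp Dmm : ℂ,
          HasDerivWithinAt ψ Dpp (Ioi ε) ε ∧ HasDerivWithinAt ψ Dpm (Iio ε) ε ∧
          HasDerivWithinAt ψ Dmp (Ioi (-ε)) (-ε) ∧ HasDerivWithinAt ψ Dmm (Iio (-ε)) (-ε) ∧
          Dpp - Dpm = αp * ψ ε ∧ Dmp - Dmm = αm * ψ (-ε)) ∧
        ‖lam - (-(αp + αm) ^ 2 / 4) + (αp + αm) * αp * αm * ε‖ ≤ C * ε ^ 2 := by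
  obtain ⟨ε₀, hε₀, C, hC, h⟩ := exists_k αp αm hα
  refine ⟨ε₀, hε₀, C, hC, ?_⟩
  intro ε hε
  obtain ⟨k, hkre, hsec, hbound⟩ := h ε hε
  obtain ⟨ψ, h1, h2, h3, h4, h5⟩ := construct αp αm ε hε.1 k hkre hsec
  exact ⟨-(k^2), ψ, h1, h2, h3, h4, h5, hbound⟩
end
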